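/- arXiv:1305.7024 — 6 statements merged into one kernel-verified Lean document; each statement's English description precedes it below -/
import Mathlib

section
/- For fixed foci O and P ≠ O, the eccentricity ε(d) = √(1 + d²/OP²) − d/OP is a strictly decreasing function of d on (0,∞), and for each fixed x ∈ S² the polar radius ρ_d(x) = d/(1 − ε(d) x·m) is a strictly increasing function of d on (0,∞). -/
noncomputable section

open MeasureTheory Metric Set Filter Topology
attribute [local instance] Classical.propDecidable

/-- Real inner product on `ℝ³`. -/
noncomputable def rinner (x y : EuclideanSpace ℝ (Fin 3)) : ℝ := inner ℝ x y

/-- Euclidean 3-space. -/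
abbrev E3 : Type := EuclideanSpace ℝ (Fin 3)

/-- The unit sphere `S²` in `ℝ³`. -/
def sphere2 : Set E3 := Metric.sphere (0 : E3) 1

/-- Unit vector `m = P/OP` in the direction of `P`. -/
noncomputable def axisDir (P : E3) : E3 := ‖P‖⁻¹ • P

/-- Eccentricity `ε = √(1 + d²/OP²) − d/OP` of the ellipsoid `E_d(P)`. -/
noncomputable def ecc (P : E3) (d : ℝ) : ℝ :=
  Real.sqrt (1 + d ^ 2 / ‖P‖ ^ 2) - d / ‖P‖

/-- Polar radius `ρ_d(x) = d/(1 − ε x·m)` of the ellipsoid `E_d(P)`. -/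
noncomputable def polarRadius (P : E3) (d : ℝ) (x : E3) : ℝ :=
  d / (1 - ecc P d * rinner x (axisDir P))

/-- The constant `c_δ = √(1 + δ²) − δ`. -/
noncomputable def cconst (δ : ℝ) : ℝ := Real.sqrt (1 + δ ^ 2) - δ

/-- Outer unit normal `(x − εm)/|x − εm|` of the ellipsoid `E_d(P)` at the point `ρ_d(x)x`. -/
noncomputable def normalVec (P : E3) (d : ℝ) (x : E3) : E3 :=
  ‖x - ecc P d • axisDir P‖⁻¹ • (x - ecc P d • axisDir P)

/-- The ellipsoid `E_d(P)` supports the surface `{ρ(x)x : x ∈ closure Ω}` at `ρ(x₀)x₀`. -/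
def IsSupportingAt (Ω : Set E3) (ρ : E3 → ℝ) (P : E3) (d : ℝ) (x₀ : E3) : Prop :=
  P ≠ 0 ∧ 0 < d ∧ (∀ x ∈ closure Ω, ρ x ≤ polarRadius P d x) ∧
    ρ x₀ = polarRadius P d x₀

/-- `{ρ(x)x : x ∈ closure Ω}` is a reflector from `closure Ω` to the target `D`. -/
def IsReflector (Ω D : Set E3) (ρ : E3 → ℝ) : Prop :=
  (∀ x ∈ closure Ω, 0 < ρ x) ∧
  ∀ x₀ ∈ closure Ω, ∃ P ∈ D, ∃ d : ℝ, IsSupportingAt Ω ρ P d x₀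

/-- Tracing set `τ_σ(E)`: directions reflected into `E`. -/
def tracing (Ω : Set E3) (ρ : E3 → ℝ) (E : Set E3) : Set E3 :=
  {x | x ∈ closure Ω ∧ ∃ P ∈ E, ∃ d : ℝ, IsSupportingAt Ω ρ P d x}

/-- The class `A(δ)`: reflectors all of whose points admit a supporting ellipsoid with
`d ≥ δ M`. -/
def InClassA (Ω D : Set E3) (ρ : E3 → ℝ) (δ M : ℝ) : Prop :=
  IsReflector Ω D ρ ∧
  ∀ x₀ ∈ closure Ω, ∃ P ∈ D, ∃ d : ℝ, δ * M ≤ d ∧ IsSupportingAt Ω ρ P d x₀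

/-- The boundary `∂Ω` of `Ω` relative to the sphere `S²`. -/
def sphFrontier (Ω : Set E3) : Set E3 := closure Ω ∩ closure (sphere2 \ Ω)

/-- `D` is contained in a plane of `ℝ³`. -/
def InPlane (D : Set E3) : Prop :=
  ∃ v : E3, v ≠ 0 ∧ ∃ c : ℝ, ∀ P ∈ D, rinner P v = c

/-- The set `S` of directions traced to two distinct target points. -/
def ambigSet (Ω D : Set E3) (ρ : E3 → ℝ) : Set E3 :=
  {x | x ∈ closure Ω ∧ ∃ P₁ ∈ D, ∃ P₂ ∈ D, P₁ ≠ P₂ ∧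
    x ∈ tracing Ω ρ {P₁} ∧ x ∈ tracing Ω ρ {P₂}}

/-- A canonical selection of the outer unit normal `ν(x)` of the reflector; at every point
where the supporting ellipsoid is unique (a.e. point) this is the normal of the
supporting ellipsoid. -/
noncomputable def nuSel (Ω D : Set E3) (ρ : E3 → ℝ) (x : E3) : E3 :=
  if h : ∃ p : E3 × ℝ, p.1 ∈ D ∧ IsSupportingAt Ω ρ p.1 p.2 x then
    normalVec h.choose.1 h.choose.2 x
  else 0

/-- A canonical selection of the reflector map `𝒩_σ(x)`; at every point with a unique
supporting ellipsoid (a.e. point) this is the target point the ray `x` is reflected to. -/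
noncomputable def reflMapSel (Ω D : Set E3) (ρ : E3 → ℝ) (x : E3) : E3 :=
  if h : ∃ p : E3 × ℝ, p.1 ∈ D ∧ IsSupportingAt Ω ρ p.1 p.2 x then h.choose.1 else 0

/-- The reflector measure `μ(E) = ∫_{τ_σ(E)} f(x) (x·ν(x))/ρ(x)² dx`,
the irradiance received on `E ⊆ D`. -/
noncomputable def reflMeasure (Ω D : Set E3) (ρ f : E3 → ℝ) (E : Set E3) : ℝ :=
  ∫ x in tracing Ω ρ E, f x * rinner x (nuSel Ω D ρ x) / ρ x ^ 2 ∂μH[2]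

set_option maxHeartbeats 1000000 in
/-- For fixed foci `O` and `P ≠ O`, the eccentricity `ε(d)` is strictly
decreasing in `d` on `(0,∞)`, and for each fixed `x ∈ S²` the polar radius `ρ_d(x)` is
strictly increasing in `d` on `(0,∞)`. -/
theorem ecc_strictAnti_and_polarRadius_strictMono (P : E3) (hP : P ≠ 0) :
    StrictAntiOn (fun d : ℝ => ecc P d) (Set.Ioi (0 : ℝ)) ∧
    ∀ x ∈ sphere2, StrictMonoOn (fun d : ℝ => polarRadius P d x) (Set.Ioi (0 : ℝ)) := by
  have hr : (0:ℝ) < ‖P‖ := norm_pos_iff.mpr hP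
  set r := ‖P‖ with hrdef
  -- rewrite eccentricity
  have hS : ∀ d : ℝ, ecc P d = (Real.sqrt (r^2 + d^2) - d) / r := by
    intro d
    unfold ecc
    rw [show (1 : ℝ) + d^2 / r^2 = (r^2 + d^2)/r^2 by field_simp]
    rw [Real.sqrt_div (by positivity), Real.sqrt_sq hr.le, sub_div]
  have hsq : ∀ d : ℝ, (Real.sqrt (r^2 + d^2))^2 = r^2 + d^2 := fun d =>
    Real.sq_sqrt (by positivity)
  have hspos : ∀ d : ℝ, 0 < Real.sqrt (r^2 + d^2) := fun d =>
    Real.sqrt_pos.mpr (by positivity)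
  have hdlt : ∀ d : ℝ, 0 < d → d < Real.sqrt (r^2 + d^2) := by
    intro d hd
    rw [Real.lt_sqrt hd.le]; nlinarith
  have hlt : ∀ d : ℝ, 0 < d → Real.sqrt (r^2 + d^2) < r + d := by
    intro d hd
    rw [Real.sqrt_lt' (by positivity)]; nlinarith
  -- strict antitonicity of ecc
  have hanti : StrictAntiOn (fun d : ℝ => ecc P d) (Set.Ioi (0 : ℝ)) := by
    intro d1 h1 d2 h2 h12
    simp only [Set.mem_Ioi] at h1 h2
    simp only [hS]
    rw [div_lt_div_iff_of_pos_right hr]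
    set s1 := Real.sqrt (r^2 + d1^2) with hs1def
    set s2 := Real.sqrt (r^2 + d2^2) with hs2def
    have e1 : s1^2 = r^2 + d1^2 := hsq d1
    have e2 : s2^2 = r^2 + d2^2 := hsq d2
    have p1 : 0 < s1 := hspos d1
    have p2 : 0 < s2 := hspos d2
    have hd1 : d1 < s1 := hdlt d1 h1
    have hd2 : d2 < s2 := hdlt d2 h2
    have hs12 : s1 < s2 := by nlinarith
    have key1 : (s1 - d1) * (s1 + d1) = r^2 := by nlinarith
    have key2 : (s2 - d2) * (s2 + d2) = r^2 := by nlinarith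
    have hsum : s1 + d1 < s2 + d2 := by linarith
    have hmul : (s2 - d2) * (s1 + d1) < (s1 - d1) * (s1 + d1) := by
      nlinarith
    exact lt_of_mul_lt_mul_right hmul (by positivity)
  refine ⟨hanti, ?_⟩
  intro x hx d1 h1 d2 h2 h12
  simp only [Set.mem_Ioi] at h1 h2
  have hxn : ‖x‖ = 1 := by simpa using mem_sphere_zero_iff_norm.mp hx
  have hmn : ‖axisDir P‖ = 1 := by
    unfold axisDir
    rw [norm_smul, norm_inv, norm_norm]
    field_simp
  set t := rinner x (axisDir P) with htdef
  have ht : |t| ≤ 1 := by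
    have := abs_real_inner_le_norm x (axisDir P)
    rw [hxn, hmn] at this
    simpa [htdef, rinner] using this
  have hecc_pos : ∀ d : ℝ, 0 < d → 0 < ecc P d := by
    intro d hd
    rw [hS]
    have := hdlt d hd
    exact div_pos (by linarith) hr
  have hecc_lt1 : ∀ d : ℝ, 0 < d → ecc P d < 1 := by
    intro d hd
    rw [hS, div_lt_one hr]
    have := hlt d hd
    linarith
  have hden : ∀ d : ℝ, 0 < d → 0 < 1 - ecc P d * t := by
    intro d hd
    have h1' : ecc P d * t ≤ |ecc P d * t| := le_abs_self _
    have h2' : |ecc P d * t| = ecc P d * |t| := by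
      rw [abs_mul, abs_of_pos (hecc_pos d hd)]
    have h3' : ecc P d * |t| ≤ ecc P d * 1 := by
      exact mul_le_mul_of_nonneg_left ht (hecc_pos d hd).le
    have := hecc_lt1 d hd
    nlinarith
  simp only [polarRadius]
  rw [div_lt_div_iff₀ (hden d1 h1) (hden d2 h2)]
  rw [hS d1, hS d2]
  set s1 := Real.sqrt (r^2 + d1^2) with hs1def
  set s2 := Real.sqrt (r^2 + d2^2) with hs2def
  have e1 : s1^2 = r^2 + d1^2 := hsq d1
  have e2 : s2^2 = r^2 + d2^2 := hsq d2
  have p1 : 0 < s1 := hspos d1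
  have p2 : 0 < s2 := hspos d2
  have hd1 : d1 < s1 := hdlt d1 h1
  have hd2 : d2 < s2 := hdlt d2 h2
  -- key inequality: d1 * s2 < d2 * s1
  have hA : d1 * s2 < d2 * s1 := by
    have hdiff : (d2*s1)^2 - (d1*s2)^2 = r^2*(d2^2 - d1^2) := by
      linear_combination d2^2 * e1 - d1^2 * e2
    have hpos : 0 < r^2*(d2^2 - d1^2) := by
      have := mul_pos (sub_pos.mpr h12) (add_pos h1 h2)
      nlinarith [mul_pos hr hr]
    exact lt_of_pow_lt_pow_left₀ 2 (by positivity) (by linarith)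
  -- key inequality: d2*(s1 - r) < d1*(s2 - r)
  have hB : d2 * (s1 - r) < d1 * (s2 - r) := by
    have hpos : (0:ℝ) < (s1 + r) * (s2 + r) := by positivity
    have hk : d2 * (s1 - r) * ((s1 + r) * (s2 + r)) <
        d1 * (s2 - r) * ((s1 + r) * (s2 + r)) := by
      have i1 : d2 * (s1 - r) * ((s1 + r) * (s2 + r)) = d2 * d1^2 * (s2 + r) := by
        linear_combination (d2 * (s2 + r)) * e1
      have i2 : d1 * (s2 - r) * ((s1 + r) * (s2 + r)) = d1 * d2^2 * (s1 + r) := by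
        linear_combination (d1 * (s1 + r)) * e2
      rw [i1, i2]
      nlinarith [mul_pos h1 h2, mul_pos (mul_pos h1 h2) hr]
    exact lt_of_mul_lt_mul_right hk hpos.le
  have htA : t * (d2 * s1 - d1 * s2) < r * (d2 - d1) := by
    have hAB : d2 * s1 - d1 * s2 < r * (d2 - d1) := by nlinarith [hB]
    have hle : t * (d2 * s1 - d1 * s2) ≤ d2 * s1 - d1 * s2 := by
      calc t * (d2 * s1 - d1 * s2) ≤ |t| * (d2 * s1 - d1 * s2) := by
            exact mul_le_mul_of_nonneg_right (le_abs_self t) (by linarith)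
        _ ≤ 1 * (d2 * s1 - d1 * s2) := by
            exact mul_le_mul_of_nonneg_right ht (by linarith)
        _ = d2 * s1 - d1 * s2 := one_mul _
    linarith
  -- conclude
  have hrne : r ≠ 0 := hr.ne'
  rw [show d1 * (1 - (s2 - d2) / r * t) = (d1 * r - d1 * (s2 - d2) * t) / r by
    field_simp]
  rw [show d2 * (1 - (s1 - d1) / r * t) = (d2 * r - d2 * (s1 - d1) * t) / r by
    field_simp]
  rw [div_lt_div_iff_of_pos_right hr]
  nlinarith [htA]
end
end

section
/- Suppose D = {P_i}_{i=1}^∞ is a countable (or finite) set with O ∉ D and O ∉ closure(D), and let σ = {ρ(x)x : x ∈ Ω̄} be a reflector from Ω̄ to D. Then the set S = {x ∈ Ω̄ : there exist P_i ≠ P_j in D such that x ∈ τ_σ(P_i) ∩ τ_σ(P_j)} has surface measure zero in S². -/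
noncomputable section

open MeasureTheory Metric Set Filter Topology
attribute [local instance] Classical.propDecidable

/-! ### Auxiliary lemmas -/

lemma norm_axisDir {P : E3} (hP : P ≠ 0) : ‖axisDir P‖ = 1 := by
  have h : ‖P‖ ≠ 0 := norm_ne_zero_iff.mpr hP
  rw [axisDir, norm_smul, norm_inv, norm_norm, inv_mul_cancel₀ h]

lemma ecc_pos {P : E3} (hP : P ≠ 0) {d : ℝ} (hd : 0 < d) : 0 < ecc P d := by
  have hp : (0:ℝ) < ‖P‖ := norm_pos_iff.mpr hP
  have h1 : (d / ‖P‖) ^ 2 < 1 + d ^ 2 / ‖P‖ ^ 2 := by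
    rw [div_pow]; linarith
  have h2 : d / ‖P‖ < Real.sqrt (1 + d ^ 2 / ‖P‖ ^ 2) := by
    have := Real.sqrt_lt_sqrt (by positivity) h1
    rwa [Real.sqrt_sq (by positivity)] at this
  simpa [ecc, sub_pos] using h2

lemma ecc_lt_one {P : E3} (hP : P ≠ 0) {d : ℝ} (hd : 0 < d) : ecc P d < 1 := by
  have hp : (0:ℝ) < ‖P‖ := norm_pos_iff.mpr hP
  have h1 : 1 + d ^ 2 / ‖P‖ ^ 2 < (1 + d / ‖P‖) ^ 2 := by
    have h3 : 0 < d / ‖P‖ := by positivity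
    have h4 : (1 + d/‖P‖)^2 = 1 + 2*(d/‖P‖) + (d/‖P‖)^2 := by ring
    rw [h4, div_pow]; linarith
  have h2 : Real.sqrt (1 + d ^ 2 / ‖P‖ ^ 2) < 1 + d / ‖P‖ := by
    have := Real.sqrt_lt_sqrt (by positivity) h1
    rwa [Real.sqrt_sq (by positivity)] at this
  rw [ecc]; linarith

lemma abs_rinner_le {P : E3} (hP : P ≠ 0) {x : E3} (hx : ‖x‖ = 1) :
    |rinner x (axisDir P)| ≤ 1 := by
  have := abs_real_inner_le_norm x (axisDir P)
  rw [hx, norm_axisDir hP, one_mul] at this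
  exact this

lemma denom_pos {P : E3} (hP : P ≠ 0) {d : ℝ} (hd : 0 < d) {x : E3} (hx : ‖x‖ = 1) :
    0 < 1 - ecc P d * rinner x (axisDir P) := by
  have h1 := ecc_pos hP hd
  have h2 := ecc_lt_one hP hd
  have h3 := abs_rinner_le hP hx
  have h4 : ecc P d * rinner x (axisDir P) ≤ ecc P d * |rinner x (axisDir P)| := by
    have := le_abs_self (rinner x (axisDir P)); nlinarith
  nlinarith [abs_nonneg (rinner x (axisDir P))]

lemma auxStrict (p : ℝ) (hp : 0 < p) (u : ℝ) (hu : |u| ≤ 1) :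
    StrictMonoOn (fun d : ℝ => d / (1 - (Real.sqrt (1 + d ^ 2 / p ^ 2) - d / p) * u)) (Ioi 0) := by
  have key : ∀ d ∈ Ioi (0:ℝ), ∃ v : ℝ, 0 < v ∧ HasDerivAt
      (fun d : ℝ => d / (1 - (Real.sqrt (1 + d ^ 2 / p ^ 2) - d / p) * u)) v d := by
    intro d hd
    have hd0 : (0:ℝ) < d := hd
    have hq : (0:ℝ) < 1 + d ^ 2 / p ^ 2 := by positivity
    have h1 : HasDerivAt (fun d : ℝ => 1 + d ^ 2 / p ^ 2) (2 * d / p ^ 2) d := by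
      have := ((hasDerivAt_pow 2 d).div_const (p^2)).const_add 1
      simpa [mul_comm] using this
    have h2 : HasDerivAt (fun d : ℝ => Real.sqrt (1 + d ^ 2 / p ^ 2))
        (1 / (2 * Real.sqrt (1 + d ^ 2 / p ^ 2)) * (2 * d / p ^ 2)) d :=
      (Real.hasDerivAt_sqrt hq.ne').comp d h1
    have h3 : HasDerivAt (fun d : ℝ => Real.sqrt (1 + d ^ 2 / p ^ 2) - d / p)
        (1 / (2 * Real.sqrt (1 + d ^ 2 / p ^ 2)) * (2 * d / p ^ 2) - 1 / p) d := by
      exact h2.sub ((hasDerivAt_id d).div_const p)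
    set s := Real.sqrt (1 + d ^ 2 / p ^ 2) with hs
    have hs0 : 0 < s := Real.sqrt_pos.mpr hq
    have hs2 : s ^ 2 = 1 + d ^ 2 / p ^ 2 := Real.sq_sqrt hq.le
    have hs2' : s ^ 2 * p ^ 2 = p ^ 2 + d ^ 2 := by
      rw [hs2]; field_simp
    have hdp : 0 < d / p := div_pos hd0 hp
    have hdp2 : d ^ 2 / p ^ 2 = (d / p) ^ 2 := by rw [div_pow]
    have hs1 : 1 < s := by nlinarith
    have hse : 0 < s - d / p := by nlinarith
    have hsl : s - d / p < 1 := by nlinarith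
    have hden : 0 < 1 - (s - d / p) * u := by
      nlinarith [le_abs_self u, neg_abs_le u]
    have h4 : HasDerivAt (fun d : ℝ => 1 - (Real.sqrt (1 + d ^ 2 / p ^ 2) - d / p) * u)
        (-((1 / (2 * s) * (2 * d / p ^ 2) - 1 / p) * u)) d := by
      simpa using (h3.mul_const u).const_sub 1
    have h5 := (hasDerivAt_id d).div h4 hden.ne'
    simp only [id_eq, one_mul] at h5
    refine ⟨_, ?_, h5⟩
    have hnum : (1 - (s - d / p) * u) - d * -((1 / (2 * s) * (2 * d / p ^ 2) - 1 / p) * u)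
        = 1 - u / s := by
      have hsne : s ≠ 0 := hs0.ne'
      have hpne : p ≠ 0 := hp.ne'
      field_simp
      linear_combination (-u) * hs2'
    rw [hnum]
    have h6 : u / s < 1 := by
      rw [div_lt_one hs0]; nlinarith [le_abs_self u]
    have h7 : 0 < 1 - u / s := by linarith
    exact div_pos h7 (pow_pos hden 2)
  have hcont : ContinuousOn
      (fun d : ℝ => d / (1 - (Real.sqrt (1 + d ^ 2 / p ^ 2) - d / p) * u)) (Ioi 0) := by
    intro d hd
    obtain ⟨v, _, hv⟩ := key d hd
    exact hv.continuousAt.continuousWithinAt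
  refine strictMonoOn_of_deriv_pos (convex_Ioi 0) hcont ?_
  intro d hd
  rw [interior_Ioi] at hd
  obtain ⟨v, hv0, hv⟩ := key d hd
  rw [hv.deriv]
  exact hv0

lemma polar_strictMonoOn {P : E3} (hP : P ≠ 0) {x : E3} (hx : ‖x‖ = 1) :
    StrictMonoOn (fun d => polarRadius P d x) (Ioi 0) := by
  have hp : (0:ℝ) < ‖P‖ := norm_pos_iff.mpr hP
  have := auxStrict ‖P‖ hp (rinner x (axisDir P)) (abs_rinner_le hP hx)
  simpa [polarRadius, ecc] using this

lemma closure_sub_sphere {Ω : Set E3} (hΩ : Ω ⊆ sphere2) {x : E3} (hx : x ∈ closure Ω) :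
    ‖x‖ = 1 := by
  have h : closure Ω ⊆ sphere2 := closure_minimal hΩ Metric.isClosed_sphere
  exact mem_sphere_zero_iff_norm.mp (h hx)

lemma d_unique {Ω : Set E3} (hΩ : Ω ⊆ sphere2) {ρ : E3 → ℝ} {P : E3} {d d' : ℝ} {x x' : E3}
    (hx : x ∈ closure Ω) (hx' : x' ∈ closure Ω)
    (h : IsSupportingAt Ω ρ P d x) (h' : IsSupportingAt Ω ρ P d' x') : d = d' := by
  obtain ⟨hP, hd, hle, heq⟩ := h
  obtain ⟨_, hd', hle', heq'⟩ := h'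
  have hnx : ‖x‖ = 1 := closure_sub_sphere hΩ hx
  have hnx' : ‖x'‖ = 1 := closure_sub_sphere hΩ hx'
  have mono := polar_strictMonoOn hP hnx
  have mono' := polar_strictMonoOn hP hnx'
  have h1 : polarRadius P d x ≤ polarRadius P d' x := heq ▸ (hle' x hx)
  have h2 : polarRadius P d' x' ≤ polarRadius P d x' := heq' ▸ (hle x' hx')
  by_contra hne
  rcases lt_or_gt_of_ne hne with hlt | hgt
  · exact absurd h2 (not_le.mpr (mono' (mem_Ioi.mpr hd) (mem_Ioi.mpr hd') hlt))
  · exact absurd h1 (not_le.mpr (mono (mem_Ioi.mpr hd') (mem_Ioi.mpr hd) hgt))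

lemma lip_smul_vec {f : ℝ → ℝ} {K : NNReal} (hf : LipschitzWith K f) (v : E3) :
    LipschitzWith (K * ‖v‖₊) (fun θ => f θ • v) := by
  apply LipschitzWith.of_dist_le_mul
  intro a b
  rw [dist_eq_norm, ← sub_smul, norm_smul]
  have h1 : ‖f a - f b‖ ≤ K * dist a b := by
    rw [← dist_eq_norm]; exact hf.dist_le_mul a b
  have h2 : (0:ℝ) ≤ ‖v‖ := norm_nonneg v
  calc ‖f a - f b‖ * ‖v‖ ≤ (K * dist a b) * ‖v‖ := by nlinarith
    _ = ↑(K * ‖v‖₊) * dist a b := by push_cast; ring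
lemma lipcos : LipschitzWith 1 Real.cos := by
  apply lipschitzWith_of_nnnorm_deriv_le Real.differentiable_cos
  intro x
  rw [Real.deriv_cos]
  rw [← NNReal.coe_le_coe, coe_nnnorm]
  simpa using abs_le.mpr ⟨Real.neg_one_le_sin x, Real.sin_le_one x⟩
lemma lipsin : LipschitzWith 1 Real.sin := by
  apply lipschitzWith_of_nnnorm_deriv_le Real.differentiable_sin
  intro x
  rw [Real.deriv_sin]
  rw [← NNReal.coe_le_coe, coe_nnnorm]
  simpa using abs_le.mpr ⟨Real.neg_one_le_cos x, Real.cos_le_one x⟩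

lemma circle_null (w : E3) (hw : w ≠ 0) (c : ℝ) :
    μH[2] {x : E3 | ‖x‖ = 1 ∧ rinner x w = c} = 0 := by
  set Z := {x : E3 | ‖x‖ = 1 ∧ rinner x w = c} with hZ
  have hwn : (0:ℝ) < ‖w‖ := norm_pos_iff.mpr hw
  set n : E3 := ‖w‖⁻¹ • w with hn
  have hn1 : ‖n‖ = 1 := by
    rw [hn, norm_smul, norm_inv, norm_norm, inv_mul_cancel₀ hwn.ne']
  set h : ℝ := c / ‖w‖ with hh
  have hcard : Module.finrank ℝ E3 = Fintype.card (Fin 3) := by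
    simp [finrank_euclideanSpace_fin]
  have horth : Orthonormal ℝ (({0} : Set (Fin 3)).restrict (fun _ => n)) := by
    constructor
    · intro i
      simp [Set.restrict, real_inner_self_eq_norm_sq, hn1]
    · intro i j hij
      exfalso
      exact hij (Subtype.ext (by simpa using i.2.trans j.2.symm))
  obtain ⟨b, hb⟩ := Orthonormal.exists_orthonormalBasis_extension_of_card_eq hcard horth
  have hb0 : b 0 = n := hb 0 rfl
  set r : ℝ := Real.sqrt (1 - h ^ 2) with hr
  set γ : ℝ → E3 := fun θ => h • n + ((r * Real.cos θ) • b 1 + (r * Real.sin θ) • b 2) with hγ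
  have hlipc : LipschitzWith (‖r‖₊ * 1) (fun θ : ℝ => r * Real.cos θ) := by
    have := (lipschitzWith_smul (r : ℝ) (β := ℝ)).comp lipcos
    simpa [smul_eq_mul, Function.comp_def] using this
  have hlips : LipschitzWith (‖r‖₊ * 1) (fun θ : ℝ => r * Real.sin θ) := by
    have := (lipschitzWith_smul (r : ℝ) (β := ℝ)).comp lipsin
    simpa [smul_eq_mul, Function.comp_def] using this
  have hlip : LipschitzWith (0 + (‖r‖₊ * 1 * ‖b 1‖₊ + ‖r‖₊ * 1 * ‖b 2‖₊)) γ := by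
    apply (LipschitzWith.const' (h • n) (K := 0)).add
    exact (lip_smul_vec hlipc (b 1)).add (lip_smul_vec hlips (b 2))
  have hsub : Z ⊆ Set.range γ := by
    intro x hx
    obtain ⟨hx1, hx2⟩ := hx
    have hxn : rinner x n = h := by
      rw [hn, hh, rinner, inner_smul_right, ← rinner]
      rw [hx2]; ring
    have hsum := b.sum_repr' x
    rw [Fin.sum_univ_three] at hsum
    have hc0 : (inner ℝ (b 0) x : ℝ) = h := by
      rw [hb0, real_inner_comm, ← rinner, hxn]
    set α : ℝ := inner ℝ (b 1) x with hα
    set β : ℝ := inner ℝ (b 2) x with hβ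
    have hpar : h ^ 2 + (α ^ 2 + β ^ 2) = 1 := by
      have h1 : ‖b.repr x‖ = 1 := by rw [b.repr.norm_map x, hx1]
      have h2 : ‖b.repr x‖ ^ 2 = 1 := by rw [h1]; norm_num
      rw [EuclideanSpace.norm_eq] at h2
      rw [Real.sq_sqrt (by positivity)] at h2
      rw [Fin.sum_univ_three] at h2
      simp only [OrthonormalBasis.repr_apply_apply, Real.norm_eq_abs, sq_abs] at h2
      rw [← h2, hc0]
      ring
    have hαβ : α ^ 2 + β ^ 2 = 1 - h ^ 2 := by linarith
    set z : ℂ := ⟨α, β⟩ with hz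
    have habs : ‖z‖ = r := by
      rw [hr, Complex.norm_def, Complex.normSq_mk, ← hαβ]
      ring_nf
    by_cases hz0 : z = 0
    · have hα0 : α = 0 := by rw [hz] at hz0; exact congrArg Complex.re hz0
      have hβ0 : β = 0 := by rw [hz] at hz0; exact congrArg Complex.im hz0
      have hr0 : r = 0 := by rw [← habs, hz0]; simp
      refine ⟨0, ?_⟩
      rw [hγ]
      simp only [Real.cos_zero, Real.sin_zero, mul_one, mul_zero, zero_smul, hr0]
      rw [← hsum, hc0, hα0, hβ0, hb0]
      simp
    · refine ⟨Complex.arg z, ?_⟩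
      have hrne : r ≠ 0 := by rw [← habs]; simpa using hz0
      have hcos : r * Real.cos (Complex.arg z) = α := by
        rw [Complex.cos_arg hz0, habs]
        field_simp
        rfl
      have hsin : r * Real.sin (Complex.arg z) = β := by
        rw [Complex.sin_arg, habs]
        field_simp
        rfl
      rw [hγ]
      simp only [hcos, hsin]
      rw [← hsum, hc0, hb0]
      abel
  have hdim : dimH Z ≤ 1 := by
    calc dimH Z ≤ dimH (Set.range γ) := dimH_mono hsub
      _ = dimH (γ '' Set.univ) := by rw [Set.image_univ]
      _ ≤ dimH (Set.univ : Set ℝ) := hlip.dimH_image_le Set.univ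
      _ = 1 := Real.dimH_univ
  have hlt : dimH Z < (2 : NNReal) := by
    refine lt_of_le_of_lt hdim ?_
    norm_num
  have := hausdorffMeasure_of_dimH_lt hlt
  simpa using this

lemma ecc_norm_inj {P₁ P₂ : E3} (h1 : P₁ ≠ 0) (h2 : P₂ ≠ 0) {d : ℝ} (hd : 0 < d)
    (he : ecc P₁ d = ecc P₂ d) : ‖P₁‖ = ‖P₂‖ := by
  have hp₁ : (0:ℝ) < ‖P₁‖ := norm_pos_iff.mpr h1
  have hp₂ : (0:ℝ) < ‖P₂‖ := norm_pos_iff.mpr h2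
  have key : ∀ p : ℝ, 0 < p →
      (Real.sqrt (1 + d^2/p^2) - d/p) * (Real.sqrt (1 + d^2/p^2) + d/p) = 1 := by
    intro p hp
    have hq : (0:ℝ) ≤ 1 + d^2/p^2 := by positivity
    have hsq := Real.sq_sqrt hq
    have hpne : p ≠ 0 := hp.ne'
    have hexp : (Real.sqrt (1 + d^2/p^2) - d/p) * (Real.sqrt (1 + d^2/p^2) + d/p)
        = Real.sqrt (1 + d^2/p^2) ^ 2 - (d/p)^2 := by ring
    rw [hexp, hsq, div_pow]
    field_simp
    ring
  have k₁ := key ‖P₁‖ hp₁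
  have k₂ := key ‖P₂‖ hp₂
  have he₁ : ecc P₁ d = Real.sqrt (1 + d^2/‖P₁‖^2) - d/‖P₁‖ := rfl
  have he₂ : ecc P₂ d = Real.sqrt (1 + d^2/‖P₂‖^2) - d/‖P₂‖ := rfl
  rw [← he₁] at k₁
  rw [← he₂, ← he] at k₂
  have hene : ecc P₁ d ≠ 0 := (ecc_pos h1 hd).ne'
  have hsum : Real.sqrt (1 + d^2/‖P₁‖^2) + d/‖P₁‖
      = Real.sqrt (1 + d^2/‖P₂‖^2) + d/‖P₂‖ :=
    mul_left_cancel₀ hene (k₁.trans k₂.symm)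
  have hdiff : Real.sqrt (1 + d^2/‖P₁‖^2) - d/‖P₁‖
      = Real.sqrt (1 + d^2/‖P₂‖^2) - d/‖P₂‖ := by
    rw [← he₁, ← he₂]; exact he
  have ht : d/‖P₁‖ = d/‖P₂‖ := by linarith
  have h3 := (div_eq_div_iff hp₁.ne' hp₂.ne').mp ht
  have h4 : d * ‖P₂‖ = d * ‖P₁‖ := by linarith
  have := mul_left_cancel₀ hd.ne' h4
  linarith

lemma P_eq_norm_smul_axisDir (P : E3) (hP : P ≠ 0) : P = ‖P‖ • axisDir P := by
  rw [axisDir, smul_inv_smul₀ (norm_ne_zero_iff.mpr hP)]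

lemma tracing_pair_null {Ω : Set E3} (hΩ : Ω ⊆ sphere2) {ρ : E3 → ℝ}
    {P₁ P₂ : E3} (hne : P₁ ≠ P₂) :
    μH[2] (tracing Ω ρ {P₁} ∩ tracing Ω ρ {P₂}) = 0 := by
  set T := tracing Ω ρ {P₁} ∩ tracing Ω ρ {P₂} with hT
  rcases T.eq_empty_or_nonempty with hTe | ⟨x₀, hx₀⟩
  · rw [hTe]; exact measure_empty
  obtain ⟨⟨hx₀Ω, Q₁, hQ₁, d₁, hs₁⟩, ⟨-, Q₂, hQ₂, d₂, hs₂⟩⟩ := hx₀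
  rw [mem_singleton_iff] at hQ₁ hQ₂
  rw [hQ₁] at hs₁
  rw [hQ₂] at hs₂
  have hP1 : P₁ ≠ 0 := hs₁.1
  have hP2 : P₂ ≠ 0 := hs₂.1
  have hd₁ : 0 < d₁ := hs₁.2.1
  have hd₂ : 0 < d₂ := hs₂.2.1
  -- every point of T lies on both fixed ellipsoids
  have key : ∀ x ∈ T, ρ x = polarRadius P₁ d₁ x ∧ ρ x = polarRadius P₂ d₂ x := by
    rintro x ⟨⟨hxΩ, Q₁, hQ₁, e₁, ht₁⟩, ⟨-, Q₂, hQ₂, e₂, ht₂⟩⟩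
    rw [mem_singleton_iff] at hQ₁ hQ₂
    rw [hQ₁] at ht₁
    rw [hQ₂] at ht₂
    have he₁ : e₁ = d₁ := d_unique hΩ hxΩ hx₀Ω ht₁ hs₁
    have he₂ : e₂ = d₂ := d_unique hΩ hxΩ hx₀Ω ht₂ hs₂
    subst he₁; subst he₂
    exact ⟨ht₁.2.2.2, ht₂.2.2.2⟩
  set w : E3 := d₁ • (ecc P₂ d₂ • axisDir P₂) - d₂ • (ecc P₁ d₁ • axisDir P₁) with hw
  have hplane : ∀ x ∈ T, rinner x w = d₁ - d₂ := by
    intro x hx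
    have hxΩ : x ∈ closure Ω := hx.1.1
    have hnx : ‖x‖ = 1 := closure_sub_sphere hΩ hxΩ
    obtain ⟨hr1, hr2⟩ := key x hx
    have hA : 0 < 1 - ecc P₁ d₁ * rinner x (axisDir P₁) := denom_pos hP1 hd₁ hnx
    have hB : 0 < 1 - ecc P₂ d₂ * rinner x (axisDir P₂) := denom_pos hP2 hd₂ hnx
    have heq : polarRadius P₁ d₁ x = polarRadius P₂ d₂ x := hr1 ▸ hr2
    rw [polarRadius, polarRadius, div_eq_div_iff hA.ne' hB.ne'] at heq
    have hexp : rinner x w =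
        d₁ * (ecc P₂ d₂ * rinner x (axisDir P₂)) - d₂ * (ecc P₁ d₁ * rinner x (axisDir P₁)) := by
      rw [hw, rinner, inner_sub_right, real_inner_smul_right, real_inner_smul_right,
        real_inner_smul_right, real_inner_smul_right]
      rfl
    rw [hexp]
    nlinarith [heq]
  by_cases hw0 : w = 0
  · exfalso
    have h0 : rinner x₀ w = d₁ - d₂ := hplane x₀ ⟨⟨hx₀Ω, P₁, rfl, d₁, hs₁⟩, ⟨hx₀Ω, P₂, rfl, d₂, hs₂⟩⟩
    rw [hw0] at h0
    have hz : rinner x₀ 0 = 0 := by rw [rinner, inner_zero_right]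
    have hd12 : d₁ = d₂ := by rw [hz] at h0; linarith
    have hsmul : (d₁ * ecc P₂ d₂) • axisDir P₂ = (d₂ * ecc P₁ d₁) • axisDir P₁ := by
      have := sub_eq_zero.mp (hw ▸ hw0)
      rw [← smul_smul, ← smul_smul]
      exact this
    have hnorm : d₁ * ecc P₂ d₂ = d₂ * ecc P₁ d₁ := by
      have h5 := congrArg norm hsmul
      rw [norm_smul, norm_smul, norm_axisDir hP1, norm_axisDir hP2] at h5
      simp only [mul_one] at h5
      rw [Real.norm_eq_abs, Real.norm_eq_abs] at h5
      have e1 := ecc_pos hP1 hd₁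
      have e2 := ecc_pos hP2 hd₂
      rw [abs_of_pos (by positivity), abs_of_pos (by positivity)] at h5
      exact h5
    subst hd12
    have hecc : ecc P₂ d₁ = ecc P₁ d₁ := mul_left_cancel₀ hd₁.ne' hnorm
    have haxis : axisDir P₂ = axisDir P₁ := by
      have hne0 : d₁ * ecc P₂ d₁ ≠ 0 := by
        have := ecc_pos hP2 hd₁; positivity
      apply smul_right_injective E3 hne0
      show (d₁ * ecc P₂ d₁) • axisDir P₂ = (d₁ * ecc P₂ d₁) • axisDir P₁
      rw [hsmul, hnorm]
    have hnorms : ‖P₁‖ = ‖P₂‖ := ecc_norm_inj hP1 hP2 hd₁ hecc.symm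
    exact hne (by
      rw [P_eq_norm_smul_axisDir P₁ hP1, P_eq_norm_smul_axisDir P₂ hP2, hnorms, haxis])
  · refine measure_mono_null ?_ (circle_null w hw0 (d₁ - d₂))
    intro x hx
    exact ⟨closure_sub_sphere hΩ hx.1.1, hplane x hx⟩

/-- If the target `D` is countable (or finite) with `O ∉ closure D` and
`σ = {ρ(x)x}` is a reflector from `closure Ω` to `D`, then the set of directions traced
to two distinct target points has surface measure zero. -/
theorem ambigSet_null_of_countable_target
    (Ω : Set E3) (hΩ : Ω ⊆ sphere2) (hfr : μH[2] (sphFrontier Ω) = 0)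
    (D : Set E3) (hDc : D.Countable) (hO : (0 : E3) ∉ D) (hOcl : (0 : E3) ∉ closure D)
    (ρ : E3 → ℝ) (hσ : IsReflector Ω D ρ) :
    μH[2] (ambigSet Ω D ρ) = 0 := by
  have hsub : ambigSet Ω D ρ ⊆
      ⋃ q ∈ {q : E3 × E3 | q.1 ∈ D ∧ q.2 ∈ D ∧ q.1 ≠ q.2},
        (tracing Ω ρ {q.1} ∩ tracing Ω ρ {q.2}) := by
    rintro x ⟨hxc, P₁, hP₁, P₂, hP₂, hne, ht₁, ht₂⟩
    exact mem_biUnion (show (P₁, P₂) ∈ _ from ⟨hP₁, hP₂, hne⟩) ⟨ht₁, ht₂⟩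
  have hcnt : {q : E3 × E3 | q.1 ∈ D ∧ q.2 ∈ D ∧ q.1 ≠ q.2}.Countable := by
    apply Set.Countable.mono ?_ (hDc.prod hDc)
    intro q hq
    exact ⟨hq.1, hq.2.1⟩
  apply measure_mono_null hsub
  rw [measure_biUnion_null_iff hcnt]
  rintro ⟨P₁, P₂⟩ ⟨h1, h2, hne⟩
  exact tracing_pair_null hΩ hne
end
end

section
/- Suppose σ is a reflector from Ω̄ to D, where D is compact with O ∉ D and D is contained in a plane or D is countable. If A and B are disjoint subsets of D, then τ_σ(A) ∩ τ_σ(B) has surface measure zero in S². -/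
noncomputable section

open MeasureTheory Metric Set Filter Topology
attribute [local instance] Classical.propDecidable
set_option maxHeartbeats 1000000

namespace ReflectorAux

open scoped ENNReal NNReal RealInnerProductSpace

abbrev E2 : Type := EuclideanSpace ℝ (Fin 2)

lemma rinner_eq (x y : E3) : rinner x y = ⟪x, y⟫ := rfl

/-! ### Scalar facts about the eccentricity -/

lemma sqrt_facts {q : ℝ} (hq : 0 < q) :
    0 < Real.sqrt (1 + q^2) - q ∧ Real.sqrt (1 + q^2) - q < 1 ∧
      1 - (Real.sqrt (1 + q^2) - q)^2 = 2*q*(Real.sqrt (1 + q^2) - q) := by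
  have h1 : (0:ℝ) ≤ 1 + q^2 := by positivity
  have hs : Real.sqrt (1+q^2)^2 = 1 + q^2 := Real.sq_sqrt h1
  have hnn : 0 ≤ Real.sqrt (1+q^2) := Real.sqrt_nonneg _
  have hsq : q < Real.sqrt (1+q^2) := by nlinarith
  have hlt : Real.sqrt (1+q^2) < 1 + q := by nlinarith
  exact ⟨by linarith, by linarith, by nlinarith⟩

lemma ecc_eq {P : E3} (hP : P ≠ 0) (d : ℝ) :
    ecc P d = Real.sqrt (1 + (d/‖P‖)^2) - d/‖P‖ := by
  rw [ecc, div_pow]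

lemma ecc_pos {P : E3} (hP : P ≠ 0) {d : ℝ} (hd : 0 < d) : 0 < ecc P d := by
  have hr : 0 < ‖P‖ := norm_pos_iff.mpr hP
  rw [ecc_eq hP]; exact (sqrt_facts (div_pos hd hr)).1

lemma ecc_lt_one {P : E3} (hP : P ≠ 0) {d : ℝ} (hd : 0 < d) : ecc P d < 1 := by
  have hr : 0 < ‖P‖ := norm_pos_iff.mpr hP
  rw [ecc_eq hP]; exact (sqrt_facts (div_pos hd hr)).2.1

lemma ecc_identity {P : E3} (hP : P ≠ 0) {d : ℝ} (hd : 0 < d) :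
    1 - (ecc P d)^2 = 2*(d/‖P‖)*(ecc P d) := by
  have hr : 0 < ‖P‖ := norm_pos_iff.mpr hP
  rw [ecc_eq hP]; exact (sqrt_facts (div_pos hd hr)).2.2

lemma norm_eq_of_ecc_eq {P Q : E3} (hP : P ≠ 0) (hQ : Q ≠ 0) {d : ℝ} (hd : 0 < d)
    (h : ecc P d = ecc Q d) : ‖P‖ = ‖Q‖ := by
  have hrP : 0 < ‖P‖ := norm_pos_iff.mpr hP
  have hrQ : 0 < ‖Q‖ := norm_pos_iff.mpr hQ
  have h1 := ecc_identity hP hd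
  have h2 := ecc_identity hQ hd
  have he : 0 < ecc Q d := ecc_pos hQ hd
  rw [h] at h1
  have heq : (d/‖P‖) * (2*ecc Q d) = (d/‖Q‖) * (2*ecc Q d) := by linarith
  have h3 : d/‖P‖ = d/‖Q‖ := mul_right_cancel₀ (ne_of_gt (by positivity)) heq
  rw [div_eq_div_iff (ne_of_gt hrP) (ne_of_gt hrQ)] at h3
  exact mul_left_cancel₀ (ne_of_gt hd) h3.symm

lemma axisDir_norm {P : E3} (hP : P ≠ 0) : ‖axisDir P‖ = 1 := norm_smul_inv_norm hP

lemma smul_axisDir {P : E3} (hP : P ≠ 0) : ‖P‖ • axisDir P = P := by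
  rw [axisDir, smul_smul, mul_inv_cancel₀ (norm_ne_zero_iff.mpr hP), one_smul]

/-! ### Consequences of the supporting inequality -/

section Support

variable {Ω : Set E3} {ρ : E3 → ℝ} {P : E3} {d : ℝ} {x₀ : E3}

lemma denom_pos (hρ : ∀ y ∈ closure Ω, 0 < ρ y) (hs : IsSupportingAt Ω ρ P d x₀)
    {y : E3} (hy : y ∈ closure Ω) :
    0 < 1 - ecc P d * rinner y (axisDir P) := by
  obtain ⟨hP, hd, hle, _⟩ := hs
  have h1 := hle y hy
  have h2 := hρ y hy
  by_contra hcon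
  push_neg at hcon
  have : polarRadius P d y ≤ 0 := by
    rcases lt_or_eq_of_le hcon with h' | h'
    · exact le_of_lt (div_neg_of_pos_of_neg hd h')
    · show d / (1 - ecc P d * rinner y (axisDir P)) ≤ 0
      rw [h', div_zero]
  linarith

/-- The affine minorant inequality `(1 - ε⟨y,m⟩)/d ≤ 1/ρ(y)`. -/
lemma ell_le_u (hρ : ∀ y ∈ closure Ω, 0 < ρ y) (hs : IsSupportingAt Ω ρ P d x₀)
    {y : E3} (hy : y ∈ closure Ω) :
    (1 - ecc P d * rinner y (axisDir P)) / d ≤ (ρ y)⁻¹ := by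
  have hden := denom_pos hρ hs hy
  have h1 := hs.2.2.1 y hy
  have h2 := hρ y hy
  have hd := hs.2.1
  have h3 : ρ y * (1 - ecc P d * rinner y (axisDir P)) ≤ d := by
    have := (le_div_iff₀ hden).mp h1
    linarith [this]
  rw [inv_eq_one_div, div_le_div_iff₀ hd h2]
  nlinarith

lemma ell_eq_u (hρ : ∀ y ∈ closure Ω, 0 < ρ y) (hs : IsSupportingAt Ω ρ P d x₀)
    (hx : x₀ ∈ closure Ω) :
    (1 - ecc P d * rinner x₀ (axisDir P)) / d = (ρ x₀)⁻¹ := by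
  have hden := denom_pos hρ hs hx
  have hd := hs.2.1
  have he : ρ x₀ = d / (1 - ecc P d * rinner x₀ (axisDir P)) := hs.2.2.2
  rw [he]
  field_simp

/-- Lower bound on the parameter `d` of any supporting ellipsoid, in terms of two
fixed distinct points of `closure Ω`. -/
lemma d_lower (hρ : ∀ y ∈ closure Ω, 0 < ρ y) (hs : IsSupportingAt Ω ρ P d x₀)
    {y₁ y₂ : E3} (h1 : y₁ ∈ closure Ω) (h2 : y₂ ∈ closure Ω)
    (hn1 : ‖y₁‖ = 1) (hn2 : ‖y₂‖ = 1) :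
    (‖y₁ - y₂‖^2/8) * min (ρ y₁) (ρ y₂) ≤ d := by
  obtain ⟨hP, hd, hle, _⟩ := hs
  have hm : ‖axisDir P‖ = 1 := axisDir_norm hP
  have he0 : 0 < ecc P d := ecc_pos hP hd
  have he1 : ecc P d < 1 := ecc_lt_one hP hd
  set m := axisDir P with hmdef
  -- one of the two points is far from m
  have htri : ‖y₁ - y₂‖ ≤ ‖y₁ - m‖ + ‖y₂ - m‖ := by
    have := norm_sub_le_norm_sub_add_norm_sub y₁ m y₂
    calc ‖y₁ - y₂‖ ≤ ‖y₁ - m‖ + ‖m - y₂‖ := norm_sub_le_norm_sub_add_norm_sub _ _ _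
      _ = ‖y₁ - m‖ + ‖y₂ - m‖ := by rw [norm_sub_rev m y₂]
  have hkey : ∃ y ∈ closure Ω, 0 < ρ y ∧ min (ρ y₁) (ρ y₂) ≤ ρ y ∧
      rinner y m ≤ 1 - ‖y₁ - y₂‖^2/8 := by
    rcases le_total ‖y₁ - m‖ ‖y₂ - m‖ with hc | hc
    · refine ⟨y₂, h2, hρ _ h2, min_le_right _ _, ?_⟩
      have hbig : ‖y₁ - y₂‖/2 ≤ ‖y₂ - m‖ := by linarith
      have hip : ‖y₂ - m‖^2 = 2 - 2 * rinner y₂ m := by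
        rw [rinner_eq, norm_sub_sq_real, hn2, hm]; ring
      nlinarith [norm_nonneg (y₁ - y₂), norm_nonneg (y₂ - m)]
    · refine ⟨y₁, h1, hρ _ h1, min_le_left _ _, ?_⟩
      have hbig : ‖y₁ - y₂‖/2 ≤ ‖y₁ - m‖ := by linarith
      have hip : ‖y₁ - m‖^2 = 2 - 2 * rinner y₁ m := by
        rw [rinner_eq, norm_sub_sq_real, hn1, hm]; ring
      nlinarith [norm_nonneg (y₁ - y₂), norm_nonneg (y₁ - m)]
  obtain ⟨y, hy, hρy, hminy, hip⟩ := hkey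
  have hκle : ‖y₁ - y₂‖^2/8 ≤ 1/2 := by
    have : ‖y₁ - y₂‖ ≤ 2 := by
      calc ‖y₁ - y₂‖ ≤ ‖y₁‖ + ‖y₂‖ := norm_sub_le _ _
        _ = 2 := by rw [hn1, hn2]; norm_num
    nlinarith [norm_nonneg (y₁ - y₂)]
  -- denominator at y is at least κ
  set κ := ‖y₁ - y₂‖^2/8 with hκdef
  have hκ0 : 0 ≤ κ := by positivity
  have hden_ge : κ ≤ 1 - ecc P d * rinner y m := by
    rcases le_or_gt 0 (rinner y m) with hc | hc
    · nlinarith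
    · nlinarith
  -- supporting inequality at y
  have hsy : ρ y ≤ polarRadius P d y := hle y hy
  have hden := denom_pos hρ ⟨hP, hd, hle, ‹ρ x₀ = polarRadius P d x₀›⟩ hy
  have h3 : ρ y * (1 - ecc P d * rinner y m) ≤ d := by
    have := (le_div_iff₀ hden).mp hsy
    linarith
  nlinarith

end Support

/-! ### The Lipschitz envelope of the supporting affine functions -/

/-- The family of all supporting ellipsoids of the reflector. -/
def SuppFam (Ω D : Set E3) (ρ : E3 → ℝ) : Set (E3 × ℝ) :=
  {q | q.1 ∈ D ∧ ∃ x₀ ∈ closure Ω, IsSupportingAt Ω ρ q.1 q.2 x₀}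

/-- The gradient vector of the affine function associated to a supporting ellipsoid. -/
noncomputable def bvec (q : E3 × ℝ) : E3 := (ecc q.1 q.2 / q.2) • axisDir q.1

/-- The affine function associated to a supporting ellipsoid. -/
noncomputable def ellAff (q : E3 × ℝ) (y : E3) : ℝ := (q.2)⁻¹ - rinner y (bvec q)

lemma ellAff_eq {q : E3 × ℝ} (hd : q.2 ≠ 0) (y : E3) :
    ellAff q y = (1 - ecc q.1 q.2 * rinner y (axisDir q.1)) / q.2 := by
  have h1 : rinner y (bvec q) = (ecc q.1 q.2 / q.2) * rinner y (axisDir q.1) :=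
    real_inner_smul_right _ _ _
  rw [ellAff, h1]
  field_simp

lemma suppfam_props {Ω D : Set E3} {ρ : E3 → ℝ} {q : E3 × ℝ} (hq : q ∈ SuppFam Ω D ρ) :
    q.1 ≠ 0 ∧ 0 < q.2 := by
  obtain ⟨_, x₀, _, hs⟩ := hq
  exact ⟨hs.1, hs.2.1⟩

lemma bvec_norm_le {q : E3 × ℝ} (hP : q.1 ≠ 0) (hd : 0 < q.2) : ‖bvec q‖ ≤ (q.2)⁻¹ := by
  rw [bvec, norm_smul, axisDir_norm hP, mul_one, Real.norm_eq_abs]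
  have h1 : 0 < ecc q.1 q.2 := ecc_pos hP hd
  have h2 : ecc q.1 q.2 < 1 := ecc_lt_one hP hd
  rw [abs_of_pos (div_pos h1 hd), div_le_iff₀ hd, inv_mul_cancel₀ (ne_of_gt hd)]
  linarith

/-- The upper envelope of all supporting affine functions. -/
noncomputable def env (Ω D : Set E3) (ρ : E3 → ℝ) (y : E3) : ℝ :=
  sSup ((fun q => ellAff q y) '' SuppFam Ω D ρ)

section Env

variable {Ω D : Set E3} {ρ : E3 → ℝ} {d₀ : ℝ}

lemma ellAff_bound (hd₀ : 0 < d₀) (hlow : ∀ q ∈ SuppFam Ω D ρ, d₀ ≤ q.2)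
    {q : E3 × ℝ} (hq : q ∈ SuppFam Ω D ρ) (y : E3) :
    ellAff q y ≤ (1 + ‖y‖)/d₀ := by
  obtain ⟨hP, hd⟩ := suppfam_props hq
  have hb := bvec_norm_le hP hd
  have hdl := hlow q hq
  have hip : |rinner y (bvec q)| ≤ ‖y‖ * ‖bvec q‖ := abs_real_inner_le_norm _ _
  have h2 : (q.2)⁻¹ ≤ d₀⁻¹ := by
    apply inv_anti₀ hd₀ hdl
  have h3 : ‖bvec q‖ ≤ d₀⁻¹ := le_trans hb h2
  have h4 : -rinner y (bvec q) ≤ ‖y‖ * d₀⁻¹ := by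
    nlinarith [abs_nonneg (rinner y (bvec q)), neg_abs_le (rinner y (bvec q)), norm_nonneg y]
  rw [ellAff, div_eq_mul_inv, add_mul, one_mul]
  linarith

lemma env_bddAbove (hd₀ : 0 < d₀) (hlow : ∀ q ∈ SuppFam Ω D ρ, d₀ ≤ q.2) (y : E3) :
    BddAbove ((fun q => ellAff q y) '' SuppFam Ω D ρ) := by
  refine ⟨(1 + ‖y‖)/d₀, ?_⟩
  rintro r ⟨q, hq, rfl⟩
  exact ellAff_bound hd₀ hlow hq y

lemma le_env (hd₀ : 0 < d₀) (hlow : ∀ q ∈ SuppFam Ω D ρ, d₀ ≤ q.2)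
    {q : E3 × ℝ} (hq : q ∈ SuppFam Ω D ρ) (y : E3) :
    ellAff q y ≤ env Ω D ρ y :=
  le_csSup (env_bddAbove hd₀ hlow y) (Set.mem_image_of_mem _ hq)

lemma env_le (hne : (SuppFam Ω D ρ).Nonempty) {y : E3} {c : ℝ}
    (h : ∀ q ∈ SuppFam Ω D ρ, ellAff q y ≤ c) : env Ω D ρ y ≤ c := by
  apply csSup_le (hne.image _)
  rintro r ⟨q, hq, rfl⟩
  exact h q hq

lemma env_lipschitz (hd₀ : 0 < d₀) (hlow : ∀ q ∈ SuppFam Ω D ρ, d₀ ≤ q.2)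
    (hne : (SuppFam Ω D ρ).Nonempty) :
    LipschitzWith (Real.toNNReal d₀⁻¹) (env Ω D ρ) := by
  have hkey : ∀ y y' : E3, env Ω D ρ y ≤ env Ω D ρ y' + d₀⁻¹ * ‖y - y'‖ := by
    intro y y'
    apply env_le hne
    intro q hq
    obtain ⟨hP, hd⟩ := suppfam_props hq
    have hb : ‖bvec q‖ ≤ d₀⁻¹ :=
      le_trans (bvec_norm_le hP hd) (inv_anti₀ hd₀ (hlow q hq))
    have h1 : ellAff q y - ellAff q y' = rinner (y' - y) (bvec q) := by
      rw [ellAff, ellAff, rinner_eq, rinner_eq, rinner_eq, inner_sub_left]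
      ring
    have h2 : rinner (y' - y) (bvec q) ≤ ‖y - y'‖ * d₀⁻¹ := by
      have habs : |rinner (y' - y) (bvec q)| ≤ ‖y' - y‖ * ‖bvec q‖ :=
        abs_real_inner_le_norm (y' - y) (bvec q)
      have hn : ‖y' - y‖ = ‖y - y'‖ := norm_sub_rev _ _
      rw [hn] at habs
      nlinarith [le_abs_self (rinner (y' - y) (bvec q)), norm_nonneg (y - y'),
        norm_nonneg (bvec q)]
    have h3 : ellAff q y' ≤ env Ω D ρ y' := le_env hd₀ hlow hq y'
    nlinarith
  apply LipschitzWith.of_dist_le_mul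
  intro y y'
  rw [Real.dist_eq, Real.coe_toNNReal _ (le_of_lt (inv_pos.mpr hd₀))]
  rw [abs_le]
  constructor
  · have h5 := hkey y' y
    have hn : ‖y' - y‖ = ‖y - y'‖ := norm_sub_rev _ _
    rw [hn] at h5
    rw [dist_eq_norm]
    linarith
  · have h5 := hkey y y'
    rw [dist_eq_norm]
    linarith

end Env

/-! ### Measure-theoretic helpers -/

lemma subsingleton_null {X : Type*} [EMetricSpace X] [MeasurableSpace X] [BorelSpace X]
    {s : Set X} (hs : s.Subsingleton) : μH[2] s = 0 := by
  rcases Measure.hausdorffMeasure_zero_or_top (show (0:ℝ) < 2 by norm_num) s with h | h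
  · exact h
  · exfalso
    have := Measure.hausdorffMeasure_le_one_of_subsingleton hs (le_refl (0:ℝ))
    rw [h] at this
    simp at this

/-- A Lebesgue null set of the plane is Hausdorff-2 null. -/
lemma vol_null_to_hausdorff {A : Set E2} (h : volume A = 0) : μH[2] A = 0 := by
  obtain ⟨N, hAN, hNm, hN0⟩ := exists_measurable_superset_of_null h
  have hvol : volume ((WithLp.equiv 2 (Fin 2 → ℝ)) '' N) = 0 := by
    have hinv : (WithLp.equiv 2 (Fin 2 → ℝ)) '' N = (WithLp.equiv 2 (Fin 2 → ℝ)).symm ⁻¹' N :=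
      Equiv.image_eq_preimage_symm _ N
    rw [hinv, WithLp.equiv_symm_apply, (PiLp.volume_preserving_toLp (Fin 2)).measure_preimage
      hNm.nullMeasurableSet]
    exact hN0
  have hpi : (μH[(2:ℝ)] : Measure (Fin 2 → ℝ)) = volume := by
    simpa using MeasureTheory.hausdorffMeasure_pi_real (ι := Fin 2)
  have hH : μH[(2:ℝ)] ((WithLp.equiv 2 (Fin 2 → ℝ)) '' N) = 0 := by rw [hpi]; exact hvol
  have hsub : A ⊆ (WithLp.equiv 2 (Fin 2 → ℝ)).symm '' ((WithLp.equiv 2 (Fin 2 → ℝ)) '' N) :=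
    fun a ha => ⟨(WithLp.equiv 2 (Fin 2 → ℝ)) a, Set.mem_image_of_mem _ (hAN ha), rfl⟩
  refine measure_mono_null hsub ?_
  have hlip : LipschitzWith 2 ((WithLp.equiv 2 (Fin 2 → ℝ)).symm) := by
    have h1 := PiLp.antilipschitzWith_ofLp 2 (fun _ : Fin 2 => ℝ)
    have h2 := h1.to_rightInverse (fun x => (WithLp.equiv 2 (Fin 2 → ℝ)).apply_symm_apply x)
    refine h2.weaken ?_
    have h3 : ((Fintype.card (Fin 2) : ℝ≥0) ^ ((1/(2:ℝ≥0∞)).toReal) : ℝ≥0) ≤ 2 := by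
      rw [show ((1/(2:ℝ≥0∞))).toReal = (2:ℝ)⁻¹ by norm_num,
        show ((Fintype.card (Fin 2) : ℝ≥0)) = 2 by norm_num]
      calc ((2:ℝ≥0)) ^ ((2:ℝ)⁻¹) ≤ 2 ^ (1:ℝ) :=
              NNReal.rpow_le_rpow_of_exponent_le (by norm_num) (by norm_num)
           _ = 2 := by norm_num
    exact h3
  have hle := hlip.hausdorffMeasure_image_le (show (0:ℝ) ≤ 2 by norm_num)
      ((WithLp.equiv 2 (Fin 2 → ℝ)) '' N)
  rw [hH, mul_zero] at hle
  exact le_antisymm hle (zero_le)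

/-- Porous subsets of the plane are Lebesgue null. -/
lemma porous_plane_null (S : Set E2) {α t₀ : ℝ} (hα : 0 < α) (hα1 : α ≤ 1) (ht₀ : 0 < t₀)
    (hpor : ∀ p ∈ S, ∀ t : ℝ, 0 < t → t ≤ t₀ → ∃ z : E2,
      closedBall z (α*t) ⊆ closedBall p t ∧ ∀ q ∈ S, q ∉ closedBall z (α*t)) :
    volume S = 0 := by
  have hfail : ∀ p ∈ S, ¬ Tendsto
      (fun r => volume (S ∩ closedBall p r) / volume (closedBall p r)) (𝓝[>] 0) (𝓝 1) := by
    intro p hp htend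
    have hbound : ∀ t : ℝ, 0 < t → t ≤ t₀ →
        volume (S ∩ closedBall p t) / volume (closedBall p t)
          ≤ ENNReal.ofReal (1 - α^2) := by
      intro t ht ht'
      obtain ⟨z, hzsub, hzdisj⟩ := hpor p hp t ht ht'
      apply ENNReal.div_le_of_le_mul
      have hsub : S ∩ closedBall p t ⊆ closedBall p t \ closedBall z (α*t) := by
        rintro q ⟨hqS, hq⟩
        exact ⟨hq, hzdisj q hqS⟩
      have hballz : volume (closedBall z (α*t)) =
          ENNReal.ofReal (α^2*t^2) * volume (ball (0:E2) 1) := by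
        rw [Measure.addHaar_closedBall _ z (by positivity),
          show Module.finrank ℝ E2 = 2 from by simp, mul_pow]
      have hballp : volume (closedBall p t) =
          ENNReal.ofReal (t^2) * volume (ball (0:E2) 1) := by
        rw [Measure.addHaar_closedBall _ p (le_of_lt ht),
          show Module.finrank ℝ E2 = 2 from by simp]
      calc volume (S ∩ closedBall p t)
          ≤ volume (closedBall p t \ closedBall z (α*t)) := measure_mono hsub
        _ = volume (closedBall p t) - volume (closedBall z (α*t)) :=
            measure_diff hzsub measurableSet_closedBall.nullMeasurableSet
              measure_closedBall_lt_top.ne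
        _ ≤ ENNReal.ofReal (1 - α^2) * volume (closedBall p t) := by
            have hα2 : (0:ℝ) ≤ 1 - α^2 := by nlinarith
            rw [tsub_le_iff_right, hballz, hballp, ← mul_assoc,
              ← ENNReal.ofReal_mul hα2, ← add_mul,
              ← ENNReal.ofReal_add (by nlinarith) (by positivity)]
            apply le_of_eq
            congr 2
            ring
    have hev : ∀ᶠ t in 𝓝[>] (0:ℝ),
        volume (S ∩ closedBall p t) / volume (closedBall p t)
          ≤ ENNReal.ofReal (1 - α^2) := by
      filter_upwards [Ioc_mem_nhdsGT_of_mem (Set.mem_Ico.mpr ⟨le_refl _, ht₀⟩)] with t ht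
      exact hbound t ht.1 ht.2
    have hle1 : (1:ℝ≥0∞) ≤ ENNReal.ofReal (1 - α^2) := le_of_tendsto htend hev
    have hlt1 : ENNReal.ofReal (1 - α^2) < 1 := by
      apply ENNReal.ofReal_lt_one.mpr
      nlinarith
    exact absurd hle1 (not_le_of_gt hlt1)
  have hae := Besicovitch.ae_tendsto_measure_inter_div (volume : Measure E2) S
  have h0 := ae_iff.mp hae
  refine le_antisymm ?_ (zero_le)
  calc volume S = (volume.restrict S) S := (Measure.restrict_apply_self _ _).symm
    _ ≤ (volume.restrict S) {x | ¬ Tendsto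
      (fun r => volume (S ∩ closedBall x r) / volume (closedBall x r)) (𝓝[>] 0) (𝓝 1)} :=
        measure_mono (fun x hx => hfail x hx)
    _ = 0 := h0

/-! ### Graph charts on the unit sphere -/

def sgl2 (i : Fin 2) : E2 := EuclideanSpace.single i (1:ℝ)
def sgl3 (i : Fin 3) : E3 := EuclideanSpace.single i (1:ℝ)

/-- Graph chart over the plane spanned by `u, w`, with pole direction `e`. -/
noncomputable def chartMap (e u w : E3) (p : E2) : E3 :=
  p 0 • u + p 1 • w + Real.sqrt (1 - min (‖p‖^2) (21/25)) • e

/-- Coordinates of `x` in the chart. -/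
noncomputable def coordMap (u w : E3) (x : E3) : E2 :=
  (WithLp.equiv 2 (Fin 2 → ℝ)).symm ![⟪x, u⟫, ⟪x, w⟫]

@[simp] lemma coordMap_apply0 (u w x : E3) : coordMap u w x 0 = ⟪x, u⟫ := by
  simp [coordMap, WithLp.equiv_symm_apply]

@[simp] lemma coordMap_apply1 (u w x : E3) : coordMap u w x 1 = ⟪x, w⟫ := by
  simp [coordMap, WithLp.equiv_symm_apply]

lemma E2_norm_sq (q : E2) : ‖q‖^2 = q 0^2 + q 1^2 := by
  rw [EuclideanSpace.norm_eq, Real.sq_sqrt (by positivity)]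
  simp [Fin.sum_univ_two, sq_abs]

lemma E2_inner (p q : E2) : (⟪p, q⟫:ℝ) = p 0 * q 0 + p 1 * q 1 := by
  rw [PiLp.inner_apply]
  simp [Fin.sum_univ_two, RCLike.inner_apply]
  ring

lemma E2_coord_abs_le (q : E2) (i : Fin 2) : |q i| ≤ ‖q‖ := by
  have h : ‖q‖^2 = q 0^2 + q 1^2 := E2_norm_sq q
  have hn := norm_nonneg q
  have h0 : |q 0| ≤ ‖q‖ := by nlinarith [sq_abs (q 0), sq_abs (q 1), abs_nonneg (q 0)]
  have h1 : |q 1| ≤ ‖q‖ := by nlinarith [sq_abs (q 0), sq_abs (q 1), abs_nonneg (q 1)]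
  fin_cases i
  · exact h0
  · exact h1

/-- The data of a "chart triple": three unit vectors allowing coordinate decomposition. -/
def IsChartTriple (e u w : E3) : Prop :=
  ‖e‖ = 1 ∧ ‖u‖ = 1 ∧ ‖w‖ = 1 ∧ ∀ x : E3, x = ⟪x,u⟫ • u + ⟪x,w⟫ • w + ⟪x,e⟫ • e

section Chart

variable {e u w : E3}

lemma triple_inner_decomp (h : IsChartTriple e u w) (x y : E3) :
    (⟪x,y⟫:ℝ) = ⟪x,u⟫*⟪y,u⟫ + ⟪x,w⟫*⟪y,w⟫ + ⟪x,e⟫*⟪y,e⟫ := by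
  conv_lhs => rw [h.2.2.2 y]
  rw [inner_add_right, inner_add_right, real_inner_smul_right, real_inner_smul_right,
    real_inner_smul_right]
  ring

lemma triple_norm_sq (h : IsChartTriple e u w) (x : E3) :
    ‖x‖^2 = ⟪x,u⟫^2 + ⟪x,w⟫^2 + ⟪x,e⟫^2 := by
  have := triple_inner_decomp h x x
  rw [real_inner_self_eq_norm_sq] at this
  nlinarith [this]

lemma coord_norm_sq (h : IsChartTriple e u w) (x : E3) :
    ‖coordMap u w x‖^2 = ⟪x,u⟫^2 + ⟪x,w⟫^2 := by
  rw [E2_norm_sq, coordMap_apply0, coordMap_apply1]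

lemma coord_sub_norm_sq (h : IsChartTriple e u w) (x y : E3) :
    ‖coordMap u w x - coordMap u w y‖^2 = ⟪x - y, u⟫^2 + ⟪x - y, w⟫^2 := by
  rw [E2_norm_sq]
  have h0 : (coordMap u w x - coordMap u w y) 0 = ⟪x - y, u⟫ := by
    rw [inner_sub_left]; simp
  have h1 : (coordMap u w x - coordMap u w y) 1 = ⟪x - y, w⟫ := by
    rw [inner_sub_left]; simp
  rw [h0, h1]

lemma coord_contract (h : IsChartTriple e u w) (x y : E3) :
    ‖coordMap u w x - coordMap u w y‖ ≤ ‖x - y‖ := by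
  have h1 : ‖coordMap u w x - coordMap u w y‖^2 ≤ ‖x - y‖^2 := by
    rw [coord_sub_norm_sq h, triple_norm_sq h (x - y)]
    nlinarith [sq_nonneg (⟪x-y, e⟫:ℝ)]
  have := Real.sqrt_le_sqrt h1
  rwa [Real.sqrt_sq (norm_nonneg _), Real.sqrt_sq (norm_nonneg _)] at this

lemma chart_coord (h : IsChartTriple e u w) {x : E3} (hx : ‖x‖ = 1)
    (hxe : 2/5 ≤ (⟪x, e⟫:ℝ)) : chartMap e u w (coordMap u w x) = x := by
  have hns : ‖coordMap u w x‖^2 = 1 - ⟪x,e⟫^2 := by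
    rw [coord_norm_sq h]
    have := triple_norm_sq h x
    rw [hx] at this
    nlinarith [this]
  have hle : ‖coordMap u w x‖^2 ≤ 21/25 := by
    rw [hns]; nlinarith
  have hsqrt : Real.sqrt (1 - min (‖coordMap u w x‖^2) (21/25)) = ⟪x,e⟫ := by
    rw [min_eq_left hle, hns]
    have : (1:ℝ) - (1 - ⟪x,e⟫^2) = ⟪x,e⟫^2 := by ring
    rw [this, Real.sqrt_sq (by linarith)]
  rw [chartMap, hsqrt, coordMap_apply0, coordMap_apply1]
  exact (h.2.2.2 x).symm

lemma coord_expand (h : IsChartTriple e u w) {x y : E3} (hx : ‖x‖ = 1) (hy : ‖y‖ = 1)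
    (hxe : 2/5 ≤ (⟪x, e⟫:ℝ)) (hye : 2/5 ≤ (⟪y, e⟫:ℝ)) :
    ‖x - y‖ ≤ 3 * ‖coordMap u w x - coordMap u w y‖ := by
  set a : ℝ := ⟪x,e⟫ with ha
  set b : ℝ := ⟪y,e⟫ with hb
  set px := coordMap u w x with hpx
  set py := coordMap u w y with hpy
  have hax : ‖px‖^2 = 1 - a^2 := by
    rw [coord_norm_sq h]
    have := triple_norm_sq h x; rw [hx] at this; nlinarith [this]
  have hby : ‖py‖^2 = 1 - b^2 := by
    rw [coord_norm_sq h]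
    have := triple_norm_sq h y; rw [hy] at this; nlinarith [this]
  have hdist : ‖x - y‖^2 = ‖px - py‖^2 + (a - b)^2 := by
    rw [coord_sub_norm_sq h, triple_norm_sq h (x - y)]
    have he : (⟪x - y, e⟫:ℝ) = a - b := by rw [inner_sub_left]
    rw [he]
  have hpx1 : ‖px‖ ≤ 1 := by nlinarith [norm_nonneg px, sq_nonneg a]
  have hpy1 : ‖py‖ ≤ 1 := by nlinarith [norm_nonneg py, sq_nonneg b]
  have habs : |‖px‖ - ‖py‖| ≤ ‖px - py‖ := abs_norm_sub_norm_le px py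
  have hsq : a^2 - b^2 = ‖py‖^2 - ‖px‖^2 := by rw [hax, hby]; ring
  -- |a - b| ≤ (5/2) ‖px - py‖
  have hab : 4/5 ≤ a + b := by linarith
  have hdiff : |a - b| ≤ (5/2) * ‖px - py‖ := by
    have h1 : |a - b| * (a + b) = |‖px‖^2 - ‖py‖^2| := by
      rw [abs_sub_comm (‖px‖^2), ← abs_of_nonneg (show (0:ℝ) ≤ a + b by linarith), ← abs_mul]
      congr 1
      linear_combination hsq
    have h2 : |‖px‖^2 - ‖py‖^2| ≤ 2 * ‖px - py‖ := by
      have h3 : |‖px‖^2 - ‖py‖^2| = |‖px‖ - ‖py‖| * (‖px‖ + ‖py‖) := by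
        rw [← abs_of_nonneg (show (0:ℝ) ≤ ‖px‖ + ‖py‖ by positivity), ← abs_mul]
        congr 1; ring
      rw [h3]
      have h4 : ‖px‖ + ‖py‖ ≤ 2 := by linarith
      nlinarith [abs_nonneg (‖px‖ - ‖py‖), norm_nonneg (px - py)]
    nlinarith [abs_nonneg (a - b)]
  have hfin : ‖x - y‖^2 ≤ (3 * ‖px - py‖)^2 := by
    rw [hdist]
    nlinarith [sq_abs (a - b), abs_nonneg (a-b), norm_nonneg (px - py),
      mul_self_le_mul_self (abs_nonneg (a-b)) hdiff]
  have := Real.sqrt_le_sqrt hfin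
  rwa [Real.sqrt_sq (norm_nonneg _), Real.sqrt_sq (by positivity)] at this

/-- 1-Lipschitz property of `min · c`. -/
lemma min_lip (x y c : ℝ) : |min x c - min y c| ≤ |x - y| := by
  have h1 := le_abs_self (x - y)
  have h2 := neg_abs_le (x - y)
  rcases le_total x c with hx | hx <;> rcases le_total y c with hy | hy
  · rw [min_eq_left hx, min_eq_left hy]
  · rw [min_eq_left hx, min_eq_right hy, abs_le]
    constructor <;> linarith
  · rw [min_eq_right hx, min_eq_left hy, abs_le]
    constructor <;> linarith
  · rw [min_eq_right hx, min_eq_right hy, abs_le]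
    constructor <;> linarith

lemma sqrt_min_lip {a b : ℝ} (ha : 0 ≤ a) (hb : 0 ≤ b) :
    |Real.sqrt (1 - min (a^2) (21/25)) - Real.sqrt (1 - min (b^2) (21/25))| ≤ 3*|a-b| := by
  have h45 : Real.sqrt (4/25) = 2/5 := by
    rw [show (4/25:ℝ) = (2/5)^2 by norm_num]
    exact Real.sqrt_sq (by norm_num)
  have main : ∀ x y : ℝ, 0 ≤ x → x ≤ 1 → 0 ≤ y → y ≤ 1 →
      |Real.sqrt (1 - min (x^2) (21/25)) - Real.sqrt (1 - min (y^2) (21/25))| ≤ 3*|x-y| := by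
    intro x y hx0 hx1 hy0 hy1
    set s := min (x^2) (21/25) with hs
    set t := min (y^2) (21/25) with ht
    have hs0 : 0 ≤ s := le_min (by positivity) (by norm_num)
    have ht0 : 0 ≤ t := le_min (by positivity) (by norm_num)
    have hsc : s ≤ 21/25 := min_le_right _ _
    have htc : t ≤ 21/25 := min_le_right _ _
    have hS : Real.sqrt (1-s)^2 = 1-s := Real.sq_sqrt (by linarith)
    have hT : Real.sqrt (1-t)^2 = 1-t := Real.sq_sqrt (by linarith)
    have hSge : 2/5 ≤ Real.sqrt (1-s) := by
      rw [← h45]; exact Real.sqrt_le_sqrt (by linarith)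
    have hTge : 2/5 ≤ Real.sqrt (1-t) := by
      rw [← h45]; exact Real.sqrt_le_sqrt (by linarith)
    have hst : |s - t| ≤ |x^2 - y^2| := min_lip _ _ _
    have hxy2 : |x^2 - y^2| ≤ 2 * |x - y| := by
      have heq : |x^2 - y^2| = |x - y| * (x + y) := by
        rw [← abs_of_nonneg (show (0:ℝ) ≤ x + y by linarith), ← abs_mul]
        congr 1; ring
      rw [heq]
      nlinarith [abs_nonneg (x - y)]
    have hkey : |Real.sqrt (1-s) - Real.sqrt (1-t)| * (Real.sqrt (1-s) + Real.sqrt (1-t))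
        = |s - t| := by
      have hfac : (Real.sqrt (1-s) - Real.sqrt (1-t)) * (Real.sqrt (1-s) + Real.sqrt (1-t))
          = t - s := by nlinarith [hS, hT]
      rw [← abs_of_nonneg (show (0:ℝ) ≤ Real.sqrt (1-s) + Real.sqrt (1-t) by positivity),
        ← abs_mul, hfac, abs_sub_comm]
    have hfin : |Real.sqrt (1-s) - Real.sqrt (1-t)| ≤ (5/4) * |s - t| := by
      nlinarith [abs_nonneg (Real.sqrt (1-s) - Real.sqrt (1-t)), abs_nonneg (s - t)]
    calc |Real.sqrt (1-s) - Real.sqrt (1-t)| ≤ (5/4) * |s-t| := hfin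
      _ ≤ 3 * |x - y| := by nlinarith [abs_nonneg (s - t), abs_nonneg (x - y)]
  have hcap : ∀ x : ℝ, 0 ≤ x → min (x^2) (21/25) = min ((min x 1)^2) (21/25) := by
    intro x hx
    rcases le_total x 1 with h | h
    · rw [min_eq_left h]
    · rw [min_eq_right h, min_eq_right (by nlinarith : (21/25:ℝ) ≤ x^2), one_pow,
        min_eq_right (by norm_num : (21/25:ℝ) ≤ (1:ℝ))]
  have hminlip : |min a 1 - min b 1| ≤ |a - b| := min_lip a b 1
  have h1 := main (min a 1) (min b 1) (le_min ha zero_le_one) (min_le_right _ _)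
    (le_min hb zero_le_one) (min_le_right _ _)
  rw [← hcap a ha, ← hcap b hb] at h1
  linarith

lemma chart_lipschitz (h : IsChartTriple e u w) : LipschitzWith 5 (chartMap e u w) := by
  apply LipschitzWith.of_dist_le_mul
  intro p q
  rw [dist_eq_norm, dist_eq_norm]
  have hdecomp : chartMap e u w p - chartMap e u w q
      = (p 0 - q 0) • u + ((p 1 - q 1) • w
        + (Real.sqrt (1 - min (‖p‖^2) (21/25)) - Real.sqrt (1 - min (‖q‖^2) (21/25))) • e) := by
    rw [chartMap, chartMap, sub_smul, sub_smul, sub_smul]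
    abel
  rw [hdecomp]
  have hc0 : |p 0 - q 0| ≤ ‖p - q‖ := by
    have := E2_coord_abs_le (p - q) 0
    simpa using this
  have hc1 : |p 1 - q 1| ≤ ‖p - q‖ := by
    have := E2_coord_abs_le (p - q) 1
    simpa using this
  have h1 : ‖(p 0 - q 0) • u‖ ≤ ‖p - q‖ := by
    rw [norm_smul, h.2.1, mul_one, Real.norm_eq_abs]; exact hc0
  have h2 : ‖(p 1 - q 1) • w‖ ≤ ‖p - q‖ := by
    rw [norm_smul, h.2.2.1, mul_one, Real.norm_eq_abs]; exact hc1
  have h3 : ‖(Real.sqrt (1 - min (‖p‖^2) (21/25)) - Real.sqrt (1 - min (‖q‖^2) (21/25))) • e‖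
      ≤ 3 * ‖p - q‖ := by
    rw [norm_smul, h.1, mul_one, Real.norm_eq_abs]
    calc |Real.sqrt (1 - min (‖p‖^2) (21/25)) - Real.sqrt (1 - min (‖q‖^2) (21/25))|
        ≤ 3 * |‖p‖ - ‖q‖| := sqrt_min_lip (norm_nonneg p) (norm_nonneg q)
      _ ≤ 3 * ‖p - q‖ := by
          have := abs_norm_sub_norm_le p q
          linarith
  have h4 := norm_add_le ((p 1 - q 1) • w)
    ((Real.sqrt (1 - min (‖p‖^2) (21/25)) - Real.sqrt (1 - min (‖q‖^2) (21/25))) • e)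
  have h5 := norm_add_le ((p 0 - q 0) • u)
    ((p 1 - q 1) • w
      + (Real.sqrt (1 - min (‖p‖^2) (21/25)) - Real.sqrt (1 - min (‖q‖^2) (21/25))) • e)
  push_cast
  linarith

lemma chart_hasFDeriv (h : IsChartTriple e u w) {p₀ : E2} (hp : ‖p₀‖^2 < 21/25) :
    ∃ L : E2 →L[ℝ] E3, HasFDerivAt (chartMap e u w) L p₀ ∧
      ∀ k : E2, L k = k 0 • u + k 1 • w - ((⟪p₀, k⟫:ℝ) / Real.sqrt (1 - ‖p₀‖^2)) • e := by
  have hs1 : (0:ℝ) < 1 - ‖p₀‖^2 := by nlinarith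
  have hSpos : 0 < Real.sqrt (1 - ‖p₀‖^2) := Real.sqrt_pos.mpr hs1
  set L : E2 →L[ℝ] E3 := (innerSL ℝ (sgl2 0)).smulRight u + (innerSL ℝ (sgl2 1)).smulRight w
    + ((1 / (2 * Real.sqrt (1 - (⟪p₀, p₀⟫:ℝ)))) •
        ((0 : E2 →L[ℝ] ℝ) - ((innerSL ℝ p₀) + innerSL ℝ p₀))).smulRight e with hL
  have hinner : HasFDerivAt (fun p : E2 => (⟪p, p⟫:ℝ)) ((innerSL ℝ p₀) + (innerSL ℝ p₀)) p₀ := by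
    have hid := (hasFDerivAt_id (𝕜 := ℝ) (E := E2) p₀).inner ℝ (hasFDerivAt_id p₀)
    refine hid.congr_fderiv ?_
    ext k
    simp [real_inner_comm]
  have hone : HasFDerivAt (fun p : E2 => 1 - (⟪p, p⟫:ℝ))
      ((0 : E2 →L[ℝ] ℝ) - ((innerSL ℝ p₀) + innerSL ℝ p₀)) p₀ :=
    (hasFDerivAt_const (1:ℝ) p₀).sub hinner
  have hval : (1 - (⟪p₀, p₀⟫:ℝ)) ≠ 0 := by
    rw [real_inner_self_eq_norm_sq]; linarith
  have hsqrt := hone.sqrt hval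
  have ht3 := hsqrt.smul_const e
  have ht1 := ((innerSL ℝ (sgl2 0)).hasFDerivAt (x := p₀)).smul_const u
  have ht2 := ((innerSL ℝ (sgl2 1)).hasFDerivAt (x := p₀)).smul_const w
  have hg : HasFDerivAt (fun p : E2 => (⟪sgl2 0, p⟫:ℝ) • u + (⟪sgl2 1, p⟫:ℝ) • w
      + Real.sqrt (1 - (⟪p, p⟫:ℝ)) • e) L p₀ := (ht1.add ht2).add ht3
  have heq : chartMap e u w =ᶠ[nhds p₀] (fun p : E2 => (⟪sgl2 0, p⟫:ℝ) • u + (⟪sgl2 1, p⟫:ℝ) • w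
      + Real.sqrt (1 - (⟪p, p⟫:ℝ)) • e) := by
    have hopen : IsOpen {p : E2 | ‖p‖^2 < 21/25} := isOpen_lt (Continuous.pow continuous_norm 2) continuous_const
    filter_upwards [hopen.mem_nhds hp] with p hp'
    rw [chartMap, min_eq_left (le_of_lt hp'), real_inner_self_eq_norm_sq]
    congr 2
    · rw [show (⟪sgl2 0, p⟫:ℝ) = p 0 by simp [sgl2, EuclideanSpace.inner_single_left]]
    · rw [show (⟪sgl2 1, p⟫:ℝ) = p 1 by simp [sgl2, EuclideanSpace.inner_single_left]]
  refine ⟨L, hg.congr_of_eventuallyEq heq, ?_⟩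
  intro k
  rw [hL]
  simp only [ContinuousLinearMap.add_apply, ContinuousLinearMap.smulRight_apply,
    ContinuousLinearMap.smul_apply, ContinuousLinearMap.sub_apply,
    ContinuousLinearMap.zero_apply, innerSL_apply_apply]
  have hs0 : (⟪sgl2 0, k⟫:ℝ) = k 0 := by simp [sgl2, EuclideanSpace.inner_single_left]
  have hs1' : (⟪sgl2 1, k⟫:ℝ) = k 1 := by simp [sgl2, EuclideanSpace.inner_single_left]
  rw [hs0, hs1', real_inner_self_eq_norm_sq, smul_eq_mul]
  have hscal : (1 / (2 * Real.sqrt (1 - ‖p₀‖^2))) * (0 - ((⟪p₀, k⟫:ℝ) + ⟪p₀, k⟫))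
      = -((⟪p₀, k⟫:ℝ) / Real.sqrt (1 - ‖p₀‖^2)) := by
    field_simp
    ring
  rw [hscal, neg_smul, ← sub_eq_add_neg]

end Chart
/-! ### Rademacher on the sphere: a.e. tangential uniqueness of supporting gradients -/

lemma chart_tangent {e u w : E3} (h : IsChartTriple e u w) (f : E3 → ℝ) (K : ℝ≥0)
    (hf : LipschitzWith K f) :
    ∃ N : Set E3, μH[2] N = 0 ∧ ∀ x : E3, ‖x‖ = 1 → 1/2 < (⟪x, e⟫:ℝ) → x ∉ N →
      ∀ (a₁ a₂ : ℝ) (b₁ b₂ : E3),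
        (∀ y, a₁ - ⟪y, b₁⟫ ≤ f y) → (∀ y, a₂ - ⟪y, b₂⟫ ≤ f y) →
        a₁ - ⟪x, b₁⟫ = f x → a₂ - ⟪x, b₂⟫ = f x →
        ∀ τ : E3, (⟪τ, x⟫:ℝ) = 0 → (⟪τ, b₁⟫:ℝ) = ⟪τ, b₂⟫ := by
  classical
  set g := f ∘ chartMap e u w with hgdef
  have hglip : LipschitzWith (K * 5) g := hf.comp (chart_lipschitz h)
  set ND := {p : E2 | ¬ DifferentiableAt ℝ g p} with hNDdef
  have hvol : volume ND = 0 := ae_iff.mp (hglip.ae_differentiableAt (μ := volume))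
  refine ⟨chartMap e u w '' ND, ?_, ?_⟩
  · have h2 : μH[2] ND = 0 := vol_null_to_hausdorff hvol
    have h3 := (chart_lipschitz h).hausdorffMeasure_image_le (show (0:ℝ) ≤ 2 by norm_num) ND
    rw [h2, mul_zero] at h3
    exact le_antisymm h3 (zero_le)
  · intro x hx hxe hxN a₁ a₂ b₁ b₂ hb₁ hb₂ he₁ he₂ τ hτ
    have hxe' : 2/5 ≤ (⟪x,e⟫:ℝ) := by linarith
    have hcc : chartMap e u w (coordMap u w x) = x := chart_coord h hx hxe'
    have hdg : DifferentiableAt ℝ g (coordMap u w x) := by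
      by_contra hnd
      exact hxN ⟨_, hnd, hcc⟩
    set p₀ := coordMap u w x with hp₀def
    have hnormp : ‖p₀‖^2 = 1 - ⟪x,e⟫^2 := by
      rw [hp₀def, coord_norm_sq h]
      have h4 := triple_norm_sq h x
      rw [hx] at h4
      nlinarith [h4]
    have hplt : ‖p₀‖^2 < 21/25 := by rw [hnormp]; nlinarith
    obtain ⟨L, hL, hLspec⟩ := chart_hasFDeriv h hplt
    -- the common-derivative argument
    have hkey : ∀ (a : ℝ) (b : E3), (∀ y, a - ⟪y, b⟫ ≤ f y) → (a - ⟪x, b⟫ = f x) →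
        (innerSL ℝ b).comp L = - (fderiv ℝ g p₀ - (0 : E2 →L[ℝ] ℝ)) := by
      intro a b hb hbe
      have hiSL : (fun p : E2 => (⟪chartMap e u w p, b⟫:ℝ)) = (innerSL ℝ b) ∘ chartMap e u w := by
        funext p
        exact real_inner_comm _ _
      have hφ : HasFDerivAt (fun p : E2 => (⟪chartMap e u w p, b⟫:ℝ))
          ((innerSL ℝ b).comp L) p₀ := by
        rw [hiSL]
        exact ((innerSL ℝ b).hasFDerivAt).comp p₀ hL
      have hψ : HasFDerivAt (fun p : E2 => (g p - a) + ⟪chartMap e u w p, b⟫)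
          ((fderiv ℝ g p₀ - (0 : E2 →L[ℝ] ℝ)) + (innerSL ℝ b).comp L) p₀ :=
        ((hdg.hasFDerivAt).sub (hasFDerivAt_const a p₀)).add hφ
      have hmin : IsLocalMin (fun p : E2 => (g p - a) + ⟪chartMap e u w p, b⟫) p₀ := by
        apply Filter.Eventually.of_forall
        intro p
        have h5 : a - ⟪chartMap e u w p, b⟫ ≤ g p := hb (chartMap e u w p)
        have h6 : g p₀ = f x := by rw [hgdef]; simp only [Function.comp_apply]; rw [hcc]
        have h7 : (⟪chartMap e u w p₀, b⟫:ℝ) = ⟪x, b⟫ := by rw [hcc]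
        dsimp only
        rw [h6, h7]
        linarith
      have h8 : fderiv ℝ (fun p : E2 => (g p - a) + ⟪chartMap e u w p, b⟫) p₀ = 0 :=
        hmin.fderiv_eq_zero
      rw [hψ.fderiv] at h8
      exact eq_neg_of_add_eq_zero_right h8
    have hk1 := hkey a₁ b₁ hb₁ he₁
    have hk2 := hkey a₂ b₂ hb₂ he₂
    have hcomp : (innerSL ℝ b₁).comp L = (innerSL ℝ b₂).comp L := by rw [hk1, hk2]
    -- evaluate at the coordinates of τ
    set k := coordMap u w τ with hkdef
    have hLk : L k = τ := by
      rw [hLspec k]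
      have hk0 : k 0 = ⟪τ, u⟫ := by rw [hkdef]; simp
      have hk1' : k 1 = ⟪τ, w⟫ := by rw [hkdef]; simp
      have hip : (⟪p₀, k⟫:ℝ) = - (⟪x,e⟫ * ⟪τ,e⟫) := by
        rw [E2_inner, hk0, hk1']
        rw [hp₀def]
        simp only [coordMap_apply0, coordMap_apply1]
        have hdec := triple_inner_decomp h x τ
        have hxτ : (⟪x, τ⟫:ℝ) = 0 := by rw [real_inner_comm]; exact hτ
        rw [hxτ] at hdec
        linarith [hdec]
      have hxemp : Real.sqrt (1 - ‖p₀‖^2) = ⟪x,e⟫ := by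
        rw [hnormp]
        have h9 : (1:ℝ) - (1 - ⟪x,e⟫^2) = ⟪x,e⟫^2 := by ring
        rw [h9, Real.sqrt_sq (by linarith)]
      rw [hip, hxemp, hk0, hk1']
      have hne : (⟪x,e⟫:ℝ) ≠ 0 := by linarith
      have h10 : -(⟪x,e⟫ * ⟪τ,e⟫) / (⟪x,e⟫:ℝ) = - ⟪τ,e⟫ := by
        rw [neg_div, mul_div_cancel_left₀ _ hne]
      rw [h10, neg_smul, sub_neg_eq_add]
      exact (h.2.2.2 τ).symm
    have h11 : ((innerSL ℝ b₁).comp L) k = ((innerSL ℝ b₂).comp L) k := by rw [hcomp]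
    rw [ContinuousLinearMap.comp_apply, ContinuousLinearMap.comp_apply, hLk] at h11
    have h12 : (⟪b₁, τ⟫:ℝ) = ⟪b₂, τ⟫ := h11
    rw [real_inner_comm b₁ τ, real_inner_comm b₂ τ]
    exact h12

/-! ### The six standard charts -/

lemma sgl3_inner (i : Fin 3) (x : E3) : (⟪x, sgl3 i⟫:ℝ) = x i := by
  simp [sgl3, EuclideanSpace.inner_single_right]

lemma std_triple {i j k : Fin 3} {σ : ℝ} (hσ : σ = 1 ∨ σ = -1)
    (hperm : ∀ x : E3, x = x j • sgl3 j + x k • sgl3 k + x i • sgl3 i) :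
    IsChartTriple (σ • sgl3 i) (sgl3 j) (sgl3 k) := by
  have hsn : ∀ l : Fin 3, ‖sgl3 l‖ = 1 := by
    intro l; rw [sgl3, EuclideanSpace.norm_single]; norm_num
  have hσ1 : |σ| = 1 := by rcases hσ with rfl | rfl <;> norm_num
  have hσ2 : σ * σ = 1 := by rcases hσ with rfl | rfl <;> norm_num
  refine ⟨?_, hsn j, hsn k, ?_⟩
  · rw [norm_smul, Real.norm_eq_abs, hσ1, one_mul]; exact hsn i
  · intro x
    have h1 : (⟪x, sgl3 j⟫:ℝ) = x j := sgl3_inner j x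
    have h2 : (⟪x, sgl3 k⟫:ℝ) = x k := sgl3_inner k x
    have h3 : (⟪x, σ • sgl3 i⟫:ℝ) • (σ • sgl3 i) = x i • sgl3 i := by
      rw [real_inner_smul_right, sgl3_inner, smul_smul]
      rw [show σ * x i * σ = x i * (σ * σ) by ring, hσ2, mul_one]
    rw [h1, h2, h3]
    exact hperm x

lemma hperm0 : ∀ x : E3, x = x 1 • sgl3 1 + x 2 • sgl3 2 + x 0 • sgl3 0 := by
  intro x; ext i; fin_cases i <;> simp [sgl3, EuclideanSpace.single_apply]
lemma hperm1 : ∀ x : E3, x = x 0 • sgl3 0 + x 2 • sgl3 2 + x 1 • sgl3 1 := by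
  intro x; ext i; fin_cases i <;> simp [sgl3, EuclideanSpace.single_apply]
lemma hperm2 : ∀ x : E3, x = x 0 • sgl3 0 + x 1 • sgl3 1 + x 2 • sgl3 2 := by
  intro x; ext i; fin_cases i <;> simp [sgl3, EuclideanSpace.single_apply]

lemma E3_norm_sq (x : E3) : ‖x‖^2 = x 0^2 + x 1^2 + x 2^2 := by
  rw [EuclideanSpace.norm_eq, Real.sq_sqrt (by positivity)]
  simp [Fin.sum_univ_three, sq_abs]

lemma exists_cap {x : E3} (hx : ‖x‖ = 1) :
    ∃ (i : Fin 3) (σ : ℝ), (σ = 1 ∨ σ = -1) ∧ 1/2 < (⟪x, σ • sgl3 i⟫:ℝ) := by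
  have hsum : x 0^2 + x 1^2 + x 2^2 = 1 := by rw [← E3_norm_sq, hx]; norm_num
  have hbig : 1/4 < x 0^2 ∨ 1/4 < x 1^2 ∨ 1/4 < x 2^2 := by
    by_contra hc
    push_neg at hc
    linarith [hc.1, hc.2.1, hc.2.2]
  have hgen : ∀ i : Fin 3, 1/4 < x i^2 →
      ∃ σ : ℝ, (σ = 1 ∨ σ = -1) ∧ 1/2 < (⟪x, σ • sgl3 i⟫:ℝ) := by
    intro i hi
    rcases le_or_gt 0 (x i) with hpos | hneg
    · refine ⟨1, Or.inl rfl, ?_⟩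
      rw [real_inner_smul_right, sgl3_inner, one_mul]
      nlinarith
    · refine ⟨-1, Or.inr rfl, ?_⟩
      rw [real_inner_smul_right, sgl3_inner]
      nlinarith
  rcases hbig with h | h | h
  exacts [⟨0, hgen 0 h⟩, ⟨1, hgen 1 h⟩, ⟨2, hgen 2 h⟩]

/-- A.e. on the sphere, any two supporting affine minorants of `f` touching at `x`
have gradients differing only radially. -/
lemma tangent_null (f : E3 → ℝ) (K : ℝ≥0) (hf : LipschitzWith K f) :
    ∃ N : Set E3, μH[2] N = 0 ∧ ∀ x : E3, ‖x‖ = 1 → x ∉ N →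
      ∀ (a₁ a₂ : ℝ) (b₁ b₂ : E3),
        (∀ y, a₁ - ⟪y, b₁⟫ ≤ f y) → (∀ y, a₂ - ⟪y, b₂⟫ ≤ f y) →
        a₁ - ⟪x, b₁⟫ = f x → a₂ - ⟪x, b₂⟫ = f x →
        b₁ - b₂ = (⟪x, b₁ - b₂⟫:ℝ) • x := by
  have ht0p : IsChartTriple ((1:ℝ) • sgl3 0) (sgl3 1) (sgl3 2) := std_triple (Or.inl rfl) hperm0
  have ht0m : IsChartTriple ((-1:ℝ) • sgl3 0) (sgl3 1) (sgl3 2) := std_triple (Or.inr rfl) hperm0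
  have ht1p : IsChartTriple ((1:ℝ) • sgl3 1) (sgl3 0) (sgl3 2) := std_triple (Or.inl rfl) hperm1
  have ht1m : IsChartTriple ((-1:ℝ) • sgl3 1) (sgl3 0) (sgl3 2) := std_triple (Or.inr rfl) hperm1
  have ht2p : IsChartTriple ((1:ℝ) • sgl3 2) (sgl3 0) (sgl3 1) := std_triple (Or.inl rfl) hperm2
  have ht2m : IsChartTriple ((-1:ℝ) • sgl3 2) (sgl3 0) (sgl3 1) := std_triple (Or.inr rfl) hperm2
  obtain ⟨N0p, hN0p, hP0p⟩ := chart_tangent ht0p f K hf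
  obtain ⟨N0m, hN0m, hP0m⟩ := chart_tangent ht0m f K hf
  obtain ⟨N1p, hN1p, hP1p⟩ := chart_tangent ht1p f K hf
  obtain ⟨N1m, hN1m, hP1m⟩ := chart_tangent ht1m f K hf
  obtain ⟨N2p, hN2p, hP2p⟩ := chart_tangent ht2p f K hf
  obtain ⟨N2m, hN2m, hP2m⟩ := chart_tangent ht2m f K hf
  refine ⟨N0p ∪ N0m ∪ N1p ∪ N1m ∪ N2p ∪ N2m, ?_, ?_⟩
  · repeat
      apply measure_union_null
    all_goals assumption
  · intro x hx hxN a₁ a₂ b₁ b₂ hb₁ hb₂ he₁ he₂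
    have hxmem : ∀ N' : Set E3, N' ∈ [N0p, N0m, N1p, N1m, N2p, N2m] → x ∉ N' := by
      intro N' hN'
      simp only [Set.mem_union, not_or] at hxN
      fin_cases hN'
      exacts [hxN.1.1.1.1.1, hxN.1.1.1.1.2, hxN.1.1.1.2, hxN.1.1.2, hxN.1.2, hxN.2]
    have htan : ∀ τ : E3, (⟪τ, x⟫:ℝ) = 0 → (⟪τ, b₁⟫:ℝ) = ⟪τ, b₂⟫ := by
    -- dispatch on the cap containing x
      obtain ⟨i, σ, hσ, hcap⟩ := exists_cap hx
      fin_cases i <;> rcases hσ with rfl | rfl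
      · exact hP0p x hx hcap (hxmem N0p (by simp)) a₁ a₂ b₁ b₂ hb₁ hb₂ he₁ he₂
      · exact hP0m x hx hcap (hxmem N0m (by simp)) a₁ a₂ b₁ b₂ hb₁ hb₂ he₁ he₂
      · exact hP1p x hx hcap (hxmem N1p (by simp)) a₁ a₂ b₁ b₂ hb₁ hb₂ he₁ he₂
      · exact hP1m x hx hcap (hxmem N1m (by simp)) a₁ a₂ b₁ b₂ hb₁ hb₂ he₁ he₂
      · exact hP2p x hx hcap (hxmem N2p (by simp)) a₁ a₂ b₁ b₂ hb₁ hb₂ he₁ he₂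
      · exact hP2m x hx hcap (hxmem N2m (by simp)) a₁ a₂ b₁ b₂ hb₁ hb₂ he₁ he₂
    -- conclude radiality
    have hτx : (⟪(b₁ - b₂) - (⟪x, b₁ - b₂⟫:ℝ) • x, x⟫:ℝ) = 0 := by
      rw [inner_sub_left, real_inner_smul_left, real_inner_self_eq_norm_sq, hx,
        real_inner_comm (b₁ - b₂) x]
      ring
    have h13 := htan _ hτx
    have hτδ : (⟪(b₁ - b₂) - (⟪x, b₁ - b₂⟫:ℝ) • x, b₁ - b₂⟫:ℝ) = 0 := by
      rw [inner_sub_right, h13, sub_self]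
    have hττ : (⟪(b₁ - b₂) - (⟪x, b₁ - b₂⟫:ℝ) • x,
        (b₁ - b₂) - (⟪x, b₁ - b₂⟫:ℝ) • x⟫:ℝ) = 0 := by
      rw [inner_sub_right, real_inner_smul_right, hτδ, hτx]
      ring
    have hτ0 : (b₁ - b₂) - (⟪x, b₁ - b₂⟫:ℝ) • x = 0 :=
      inner_self_eq_zero.mp hττ
    exact sub_eq_zero.mp hτ0
/-! ### Porous subsets of the sphere are null -/

lemma eq_of_inner_one {x y : E3} (hx : ‖x‖ = 1) (hy : ‖y‖ = 1) (h : (⟪x,y⟫:ℝ) = 1) :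
    x = y := by
  have h1 : ‖x - y‖^2 = ‖x‖^2 - 2*⟪x,y⟫ + ‖y‖^2 := by rw [norm_sub_sq_real]
  rw [hx, hy, h] at h1
  have h2 : ‖x - y‖^2 = 0 := by rw [h1]; ring
  have h3 : ‖x - y‖ = 0 := by
    nlinarith [norm_nonneg (x - y)]
  exact sub_eq_zero.mp (norm_eq_zero.mp h3)

lemma porous_cap_null {e u w : E3} (h3 : IsChartTriple e u w) (S : Set E3)
    (hS : ∀ x ∈ S, ‖x‖ = 1)
    (hp : ∀ x ∈ S, ∃ ex : E3, ‖ex‖ = 1 ∧ (⟪x, ex⟫:ℝ) = 0 ∧ ∀ y ∈ S, 0 ≤ (⟪y - x, ex⟫:ℝ)) :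
    μH[2] {x ∈ S | 1/2 < (⟪x, e⟫:ℝ)} = 0 := by
  classical
  set Scap := {x ∈ S | 1/2 < (⟪x, e⟫:ℝ)} with hScap
  set A := coordMap u w '' Scap with hA
  -- A is porous
  have hpor : ∀ p ∈ A, ∀ t : ℝ, 0 < t → t ≤ 1/8 → ∃ z : E2,
      closedBall z ((1/10)*t) ⊆ closedBall p t ∧ ∀ q ∈ A, q ∉ closedBall z ((1/10)*t) := by
    rintro p ⟨x, hxScap, rfl⟩ t ht ht8
    obtain ⟨hxS, hxe⟩ := hxScap
    have hx1 : ‖x‖ = 1 := hS x hxS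
    obtain ⟨ex, hex1, hexx, hexpos⟩ := hp x hxS
    set z := x - (t/2) • ex with hz
    have hz2 : ‖z‖^2 = 1 + t^2/4 := by
      rw [hz, norm_sub_sq_real, real_inner_smul_right, hexx, norm_smul, hx1, hex1,
        Real.norm_eq_abs, abs_of_pos (by linarith : (0:ℝ) < t/2)]
      ring
    have hz1 : 1 ≤ ‖z‖ := by nlinarith [norm_nonneg z]
    have hzne : z ≠ 0 := by
      intro h0
      rw [h0] at hz1
      norm_num at hz1
    have hzu : ‖z‖ ≤ 1 + t^2/8 := by nlinarith [norm_nonneg z]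
    have hz32 : ‖z‖ ≤ 3/2 := by nlinarith
    set zs := ‖z‖⁻¹ • z with hzs
    have hzs1 : ‖zs‖ = 1 := norm_smul_inv_norm hzne
    have hzpos : (0:ℝ) < ‖z‖ := by linarith
    -- distance from zs to x
    have hzsz : ‖zs - z‖ = ‖z‖ - 1 := by
      have hzz : zs - z = (‖z‖⁻¹ - 1) • z := by rw [hzs, sub_smul, one_smul]
      rw [hzz, norm_smul, Real.norm_eq_abs]
      have hinv : ‖z‖⁻¹ ≤ 1 := by
        rw [inv_le_one_iff₀]
        right; exact hz1
      rw [abs_of_nonpos (by linarith), neg_sub, sub_mul, one_mul,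
        inv_mul_cancel₀ (ne_of_gt hzpos)]
    have hzx : ‖z - x‖ = t/2 := by
      have : z - x = -((t/2) • ex) := by rw [hz]; abel
      rw [this, norm_neg, norm_smul, hex1, Real.norm_eq_abs,
        abs_of_pos (by linarith : (0:ℝ) < t/2), mul_one]
    have hzsx : ‖zs - x‖ ≤ (9/16)*t := by
      have htri : ‖zs - x‖ ≤ ‖zs - z‖ + ‖z - x‖ := by
        have : zs - x = (zs - z) + (z - x) := by abel
        rw [this]; exact norm_add_le _ _
      have ht64 : ‖z‖ - 1 ≤ t/64 := by nlinarith
      rw [hzx] at htri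
      linarith
    -- inner products
    have hze' : (⟪z, ex⟫:ℝ) = -(t/2) := by
      rw [hz, inner_sub_left, real_inner_smul_left, hexx, real_inner_self_eq_norm_sq, hex1]
      ring
    have hxzs : (⟪x - zs, ex⟫:ℝ) = ‖z‖⁻¹ * (t/2) := by
      rw [inner_sub_left, hzs, real_inner_smul_left, hexx, hze']
      ring
    have hinv23 : (2/3:ℝ) ≤ ‖z‖⁻¹ := by
      rw [le_inv_comm₀ (by norm_num) hzpos]
      linarith
    -- points of S are far from zs
    have hfar : ∀ s ∈ S, t/3 ≤ ‖s - zs‖ := by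
      intro s hsS
      have h5 : (⟪s - zs, ex⟫:ℝ) = ⟪s - x, ex⟫ + ⟪x - zs, ex⟫ := by
        rw [inner_sub_left, inner_sub_left, inner_sub_left]
        ring
      have h6 : t/3 ≤ (⟪s - zs, ex⟫:ℝ) := by
        rw [h5, hxzs]
        have := hexpos s hsS
        nlinarith
      have h7 : (⟪s - zs, ex⟫:ℝ) ≤ ‖s - zs‖ := by
        have := real_inner_le_norm (s - zs) ex
        rw [hex1, mul_one] at this
        exact this
      linarith
    -- zs is in the chart region
    have hzse : 2/5 ≤ (⟪zs, e⟫:ℝ) := by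
      have h8 : (⟪zs - x, e⟫:ℝ) ≤ ‖zs - x‖ := by
        have h9 := abs_real_inner_le_norm (zs - x) e
        rw [h3.1, mul_one] at h9
        nlinarith [le_abs_self (⟪zs - x, e⟫:ℝ), neg_abs_le (⟪zs - x, e⟫:ℝ)]
      have h10 : (⟪zs, e⟫:ℝ) = ⟪x, e⟫ + ⟪zs - x, e⟫ := by
        rw [inner_sub_left]; ring
      have h11 : -(⟪zs - x, e⟫:ℝ) ≤ ‖zs - x‖ := by
        have h9 := abs_real_inner_le_norm (zs - x) e
        rw [h3.1, mul_one] at h9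
        nlinarith [neg_abs_le (⟪zs - x, e⟫:ℝ)]
      rw [h10]
      have : (9/16)*t ≤ 9/128 := by linarith
      linarith
    refine ⟨coordMap u w zs, ?_, ?_⟩
    · apply closedBall_subset_closedBall'
      have hd : dist (coordMap u w zs) (coordMap u w x) ≤ ‖zs - x‖ := by
        rw [dist_eq_norm]
        exact coord_contract h3 zs x
      have : ‖zs - x‖ ≤ (9/16)*t := hzsx
      calc (1/10)*t + dist (coordMap u w zs) (coordMap u w x)
          ≤ (1/10)*t + (9/16)*t := by linarith
        _ ≤ t := by linarith
    · rintro q ⟨s, hsScap, rfl⟩ hq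
      obtain ⟨hsS, hse⟩ := hsScap
      have hs1 : ‖s‖ = 1 := hS s hsS
      have hexp : ‖s - zs‖ ≤ 3 * ‖coordMap u w s - coordMap u w zs‖ :=
        coord_expand h3 hs1 hzs1 (by linarith) hzse
      have hfar' := hfar s hsS
      rw [mem_closedBall, dist_eq_norm] at hq
      have : ‖coordMap u w s - coordMap u w zs‖ ≤ (1/10)*t := hq
      linarith
  have hvolA : volume A = 0 :=
    porous_plane_null A (by norm_num : (0:ℝ) < 1/10) (by norm_num) (by norm_num : (0:ℝ) < 1/8) hpor
  have hHA : μH[2] A = 0 := vol_null_to_hausdorff hvolA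
  have hsub : Scap ⊆ chartMap e u w '' A := by
    intro x hx
    obtain ⟨hxS, hxe⟩ := hx
    exact ⟨coordMap u w x, ⟨x, ⟨hxS, hxe⟩, rfl⟩, chart_coord h3 (hS x hxS) (by linarith)⟩
  refine measure_mono_null hsub ?_
  have him := (chart_lipschitz h3).hausdorffMeasure_image_le (show (0:ℝ) ≤ 2 by norm_num) A
  rw [hHA, mul_zero] at him
  exact le_antisymm him (zero_le)

/-- A subset of the sphere which is "one-sided tangentially porous" at each of its points
is `μH[2]`-null. -/
lemma porous_null (S : Set E3) (hS : ∀ x ∈ S, ‖x‖ = 1)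
    (hp : ∀ x ∈ S, ∃ ex : E3, ‖ex‖ = 1 ∧ (⟪x, ex⟫:ℝ) = 0 ∧ ∀ y ∈ S, 0 ≤ (⟪y - x, ex⟫:ℝ)) :
    μH[2] S = 0 := by
  have ht0p : IsChartTriple ((1:ℝ) • sgl3 0) (sgl3 1) (sgl3 2) := std_triple (Or.inl rfl) hperm0
  have ht0m : IsChartTriple ((-1:ℝ) • sgl3 0) (sgl3 1) (sgl3 2) := std_triple (Or.inr rfl) hperm0
  have ht1p : IsChartTriple ((1:ℝ) • sgl3 1) (sgl3 0) (sgl3 2) := std_triple (Or.inl rfl) hperm1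
  have ht1m : IsChartTriple ((-1:ℝ) • sgl3 1) (sgl3 0) (sgl3 2) := std_triple (Or.inr rfl) hperm1
  have ht2p : IsChartTriple ((1:ℝ) • sgl3 2) (sgl3 0) (sgl3 1) := std_triple (Or.inl rfl) hperm2
  have ht2m : IsChartTriple ((-1:ℝ) • sgl3 2) (sgl3 0) (sgl3 1) := std_triple (Or.inr rfl) hperm2
  have hcover : S ⊆ {x ∈ S | 1/2 < (⟪x, (1:ℝ) • sgl3 0⟫:ℝ)} ∪ {x ∈ S | 1/2 < (⟪x, (-1:ℝ) • sgl3 0⟫:ℝ)}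
      ∪ {x ∈ S | 1/2 < (⟪x, (1:ℝ) • sgl3 1⟫:ℝ)} ∪ {x ∈ S | 1/2 < (⟪x, (-1:ℝ) • sgl3 1⟫:ℝ)}
      ∪ {x ∈ S | 1/2 < (⟪x, (1:ℝ) • sgl3 2⟫:ℝ)} ∪ {x ∈ S | 1/2 < (⟪x, (-1:ℝ) • sgl3 2⟫:ℝ)} := by
    intro x hx
    obtain ⟨i, σ, hσ, hcap⟩ := exists_cap (hS x hx)
    simp only [Set.mem_union, Set.mem_setOf_eq]
    fin_cases i <;> rcases hσ with rfl | rfl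
    · exact Or.inl (Or.inl (Or.inl (Or.inl (Or.inl ⟨hx, hcap⟩))))
    · exact Or.inl (Or.inl (Or.inl (Or.inl (Or.inr ⟨hx, hcap⟩))))
    · exact Or.inl (Or.inl (Or.inl (Or.inr ⟨hx, hcap⟩)))
    · exact Or.inl (Or.inl (Or.inr ⟨hx, hcap⟩))
    · exact Or.inl (Or.inr ⟨hx, hcap⟩)
    · exact Or.inr ⟨hx, hcap⟩
  refine measure_mono_null hcover ?_
  repeat
    apply measure_union_null
  exacts [porous_cap_null ht0p S hS hp, porous_cap_null ht0m S hS hp,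
    porous_cap_null ht1p S hS hp, porous_cap_null ht1m S hS hp,
    porous_cap_null ht2p S hS hp, porous_cap_null ht2m S hS hp]

/-- Intersections of the unit sphere with a plane are `μH[2]`-null. -/
lemma plane_section_null {n : E3} (hn : n ≠ 0) (c : ℝ) :
    μH[2] {x : E3 | ‖x‖ = 1 ∧ (⟪x, n⟫:ℝ) = c} = 0 := by
  classical
  set S := {x : E3 | ‖x‖ = 1 ∧ (⟪x, n⟫:ℝ) = c} with hSdef
  have hS : ∀ x ∈ S, ‖x‖ = 1 := fun x hx => hx.1
  rcases eq_or_ne c 0 with rfl | hc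
  · apply porous_null S hS
    intro x hx
    refine ⟨‖n‖⁻¹ • n, norm_smul_inv_norm hn, ?_, ?_⟩
    · rw [real_inner_smul_right, hx.2, mul_zero]
    · intro y hy
      rw [real_inner_smul_right, inner_sub_left, hx.2, hy.2]
      simp
  · by_cases hex : ∃ x ∈ S, c⁻¹ • n - x = 0
    · obtain ⟨x, hxS, hx0⟩ := hex
      have hxn : c⁻¹ • n = x := sub_eq_zero.mp hx0
      apply subsingleton_null
      intro y hy z hz
      have hkey : ∀ v, v ∈ S → v = x := by
        intro v hv
        have h1 : (⟪v, c⁻¹ • n⟫:ℝ) = 1 := by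
          rw [real_inner_smul_right, hv.2, inv_mul_cancel₀ hc]
        rw [hxn] at h1
        exact eq_of_inner_one hv.1 (hS x hxS) h1
      rw [hkey y hy, hkey z hz]
    · push_neg at hex
      apply porous_null S hS
      intro x hx
      set wt := c⁻¹ • n - x with hwt
      have hwtne : wt ≠ 0 := hex x hx
      have hxwt : (⟪x, wt⟫:ℝ) = 0 := by
        rw [hwt, inner_sub_right, real_inner_smul_right, hx.2,
          real_inner_self_eq_norm_sq, hx.1, inv_mul_cancel₀ hc]
        ring
      refine ⟨‖wt‖⁻¹ • wt, norm_smul_inv_norm hwtne, ?_, ?_⟩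
      · rw [real_inner_smul_right, hxwt, mul_zero]
      · intro y hy
        rw [real_inner_smul_right]
        have h1 : (⟪y - x, wt⟫:ℝ) = 1 - ⟪y, x⟫ := by
          rw [hwt, inner_sub_right, inner_sub_left, inner_sub_left, real_inner_smul_right,
            real_inner_smul_right, hx.2, hy.2, real_inner_self_eq_norm_sq, hx.1,
            inv_mul_cancel₀ hc]
          ring
        have h2 : (⟪y, x⟫:ℝ) ≤ 1 := by
          have := real_inner_le_norm y x
          rw [hy.1, hx.1] at this
          linarith
        rw [h1]
        have h3 : (0:ℝ) ≤ ‖wt‖⁻¹ := by positivity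
        nlinarith
/-! ### Geometry of two tangent supporting ellipsoids -/

lemma ecc_identity' {P : E3} (hP : P ≠ 0) {d : ℝ} (hd : 0 < d) :
    ‖P‖ * (1 - (ecc P d)^2) = 2*d*(ecc P d) := by
  have h := ecc_identity hP hd
  have hr : ‖P‖ ≠ 0 := norm_ne_zero_iff.mpr hP
  calc ‖P‖ * (1 - (ecc P d)^2) = ‖P‖ * (2*(d/‖P‖)*(ecc P d)) := by rw [h]
    _ = 2*d*(ecc P d) := by field_simp

/-- If the affine data of two supporting ellipsoids coincide, the ellipsoids coincide. -/
lemma param_inj {P₁ P₂ : E3} {d₁ d₂ : ℝ} (h₁ : P₁ ≠ 0) (h₂ : P₂ ≠ 0)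
    (hd₁ : 0 < d₁) (hd₂ : 0 < d₂)
    (hb : (ecc P₁ d₁/d₁) • axisDir P₁ = (ecc P₂ d₂/d₂) • axisDir P₂)
    (ha : d₁⁻¹ = d₂⁻¹) : P₁ = P₂ := by
  have hd : d₁ = d₂ := by
    have := inv_inv d₁ ▸ inv_inv d₂ ▸ congrArg (·⁻¹) ha
    simpa using this
  subst hd
  have hm1 : ‖axisDir P₁‖ = 1 := axisDir_norm h₁
  have hm2 : ‖axisDir P₂‖ = 1 := axisDir_norm h₂
  have he1 : 0 < ecc P₁ d₁ := ecc_pos h₁ hd₁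
  have he2 : 0 < ecc P₂ d₁ := ecc_pos h₂ hd₁
  have hnorm : ecc P₁ d₁/d₁ = ecc P₂ d₁/d₁ := by
    have h3 := congrArg (fun y : E3 => ‖y‖) hb
    simp only [norm_smul, hm1, hm2, mul_one, Real.norm_eq_abs] at h3
    rwa [abs_of_pos (div_pos he1 hd₁), abs_of_pos (div_pos he2 hd₁)] at h3
  have hecc : ecc P₁ d₁ = ecc P₂ d₁ := by
    have := mul_right_cancel₀ (ne_of_gt (inv_pos.mpr hd₁))
      (show ecc P₁ d₁ * d₁⁻¹ = ecc P₂ d₁ * d₁⁻¹ by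
        rw [← div_eq_mul_inv, ← div_eq_mul_inv]; exact hnorm)
    exact this
  have hmm : axisDir P₁ = axisDir P₂ := by
    rw [hnorm] at hb
    exact smul_right_injective E3 (ne_of_gt (div_pos he2 hd₁)) hb
  have hr : ‖P₁‖ = ‖P₂‖ := norm_eq_of_ecc_eq h₁ h₂ hd₁ hecc
  calc P₁ = ‖P₁‖ • axisDir P₁ := (smul_axisDir h₁).symm
    _ = ‖P₂‖ • axisDir P₂ := by rw [hr, hmm]
    _ = P₂ := smul_axisDir h₂

/-- If two distinct supporting ellipsoids at `x` have radially-aligned affine gradients, then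
the reflector point `ρ(x)x` lies on the line through the two foci; in particular if both foci
are in the plane `⟨·,n⟩ = c`, so is the reflector point. -/
lemma colinear_plane {Ω : Set E3} {ρ : E3 → ℝ} (hρ : ∀ y ∈ closure Ω, 0 < ρ y)
    {P₁ P₂ : E3} {d₁ d₂ : ℝ} {x : E3} (hx : x ∈ closure Ω) (hxn : ‖x‖ = 1)
    (h1 : IsSupportingAt Ω ρ P₁ d₁ x) (h2 : IsSupportingAt Ω ρ P₂ d₂ x)
    (hPne : P₁ ≠ P₂)
    (hrad : (ecc P₁ d₁/d₁) • axisDir P₁ - (ecc P₂ d₂/d₂) • axisDir P₂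
      = (d₁⁻¹ - d₂⁻¹) • x)
    {n : E3} {c : ℝ} (hn1 : (⟪P₁, n⟫:ℝ) = c) (hn2 : (⟪P₂, n⟫:ℝ) = c) :
    ρ x * (⟪x, n⟫:ℝ) = c := by
  obtain ⟨hP1, hd1, hle1, heq1⟩ := h1
  obtain ⟨hP2, hd2, hle2, heq2⟩ := h2
  have hρx : 0 < ρ x := hρ x hx
  set ε₁ := ecc P₁ d₁ with hε₁
  set ε₂ := ecc P₂ d₂ with hε₂
  set m₁ := axisDir P₁ with hm₁
  set m₂ := axisDir P₂ with hm₂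
  set r₁ := ‖P₁‖ with hr₁
  set r₂ := ‖P₂‖ with hr₂
  have hr1 : 0 < r₁ := norm_pos_iff.mpr hP1
  have hr2 : 0 < r₂ := norm_pos_iff.mpr hP2
  have hε1p : 0 < ε₁ := ecc_pos hP1 hd1
  have hε2p : 0 < ε₂ := ecc_pos hP2 hd2
  have hε1l : ε₁ < 1 := ecc_lt_one hP1 hd1
  have hε2l : ε₂ < 1 := ecc_lt_one hP2 hd2
  have hnm1 : ‖m₁‖ = 1 := axisDir_norm hP1
  have hnm2 : ‖m₂‖ = 1 := axisDir_norm hP2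
  have hden1 := denom_pos hρ ⟨hP1, hd1, hle1, heq1⟩ hx
  have hden2 := denom_pos hρ ⟨hP2, hd2, hle2, heq2⟩ hx
  -- division-free inner product identities
  have hipx1 : ρ x * (ε₁ * ⟪x, m₁⟫) = ρ x - d₁ := by
    have h3 : ρ x * (1 - ε₁ * rinner x m₁) = d₁ := by
      rw [heq1, polarRadius]
      field_simp
      rfl
    rw [rinner_eq] at h3
    linarith [h3]
  have hipx2 : ρ x * (ε₂ * ⟪x, m₂⟫) = ρ x - d₂ := by
    have h3 : ρ x * (1 - ε₂ * rinner x m₂) = d₂ := by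
      rw [heq2, polarRadius]
      field_simp
      rfl
    rw [rinner_eq] at h3
    linarith [h3]
  -- the normal direction vectors
  set ν₁ : E3 := x - ε₁ • m₁ with hν₁
  set ν₂ : E3 := x - ε₂ • m₂ with hν₂
  -- the gradients are radially aligned ⟹ the normals are parallel
  have hb2 : (ε₂/d₂) • m₂ = (ε₁/d₁) • m₁ - (d₁⁻¹ - d₂⁻¹) • x := by
    rw [← hrad]; abel
  have hν2' : d₁ • ν₂ = d₂ • ν₁ := by
    have hsm2 : ε₂ • m₂ = d₂ • ((ε₂/d₂) • m₂) := by
      rw [smul_smul]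
      congr 1
      field_simp
    rw [hν₁, hν₂, hsm2, hb2]
    match_scalars <;> field_simp <;> ring
  -- norms of the normals
  set Λ₁ := r₁ - ε₁ * ρ x with hΛ₁
  set Λ₂ := r₂ - ε₂ * ρ x with hΛ₂
  have hid1 : r₁ * (1 - ε₁^2) = 2*d₁*ε₁ := ecc_identity' hP1 hd1
  have hid2 : r₂ * (1 - ε₂^2) = 2*d₂*ε₂ := ecc_identity' hP2 hd2
  have hexp1 : ‖ν₁‖^2 = 1 - 2*(ε₁ * ⟪x, m₁⟫) + ε₁^2 := by
    rw [hν₁, norm_sub_sq_real, real_inner_smul_right, norm_smul, hxn, hnm1,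
      Real.norm_eq_abs, abs_of_pos hε1p]
    ring
  have hexp2 : ‖ν₂‖^2 = 1 - 2*(ε₂ * ⟪x, m₂⟫) + ε₂^2 := by
    rw [hν₂, norm_sub_sq_real, real_inner_smul_right, norm_smul, hxn, hnm2,
      Real.norm_eq_abs, abs_of_pos hε2p]
    ring
  have hE1 : ρ x * r₁ * ‖ν₁‖^2 = 2*d₁*Λ₁ := by
    rw [hΛ₁]
    linear_combination (ρ x * r₁) * hexp1 - (2*r₁) * hipx1 - (ρ x) * hid1
  have hE2 : ρ x * r₂ * ‖ν₂‖^2 = 2*d₂*Λ₂ := by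
    rw [hΛ₂]
    linear_combination (ρ x * r₂) * hexp2 - (2*r₂) * hipx2 - (ρ x) * hid2
  -- positivity of Λ
  have hνne1 : ν₁ ≠ 0 := by
    intro h0
    have : x = ε₁ • m₁ := by rw [hν₁] at h0; exact sub_eq_zero.mp h0
    have h4 : (1:ℝ) = ε₁ := by
      have := congrArg (fun y : E3 => ‖y‖) this
      simpa [hxn, norm_smul, hnm1, abs_of_pos hε1p] using this
    linarith
  have hνne2 : ν₂ ≠ 0 := by
    intro h0
    have : x = ε₂ • m₂ := by rw [hν₂] at h0; exact sub_eq_zero.mp h0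
    have h4 : (1:ℝ) = ε₂ := by
      have := congrArg (fun y : E3 => ‖y‖) this
      simpa [hxn, norm_smul, hnm2, abs_of_pos hε2p] using this
    linarith
  have hν1pos : 0 < ‖ν₁‖^2 := pow_pos (norm_pos_iff.mpr hνne1) 2
  have hν2pos : 0 < ‖ν₂‖^2 := pow_pos (norm_pos_iff.mpr hνne2) 2
  have hΛ1pos : 0 < Λ₁ := by nlinarith [mul_pos (mul_pos hρx hr1) hν1pos]
  have hΛ2pos : 0 < Λ₂ := by nlinarith [mul_pos (mul_pos hρx hr2) hν2pos]
  -- relation between the Λ's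
  have hnν' : d₁^2 * ‖ν₂‖^2 = d₂^2 * ‖ν₁‖^2 := by
    have h5 := congrArg (fun y : E3 => ‖y‖^2) hν2'
    simp only [norm_smul, Real.norm_eq_abs, mul_pow, sq_abs] at h5
    exact h5
  have hΛrel : Λ₂ * (d₁ * r₁) = Λ₁ * (d₂ * r₂) := by
    have heq0 : 2*d₁*d₂*(Λ₂ * (d₁ * r₁)) = 2*d₁*d₂*(Λ₁ * (d₂ * r₂)) := by
      linear_combination (-(r₁*d₁^2)) * hE2 + (r₂*d₂^2) * hE1 + (ρ x * r₁ * r₂) * hnν'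
    exact mul_left_cancel₀ (by positivity) heq0
  -- the colinearity identity
  have hP1m : P₁ = r₁ • m₁ := (smul_axisDir hP1).symm
  have hP2m : P₂ = r₂ • m₂ := (smul_axisDir hP2).symm
  have hidν1 : ε₁ • (P₁ - ρ x • x) = Λ₁ • x - r₁ • ν₁ := by
    rw [hP1m, hν₁, hΛ₁]
    match_scalars <;> ring
  have hidν2 : ε₂ • (P₂ - ρ x • x) = Λ₂ • x - r₂ • ν₂ := by
    rw [hP2m, hν₂, hΛ₂]
    match_scalars <;> ring
  have hx4 : (Λ₂ * (d₁ * r₁)) • x = (Λ₁ * (d₂ * r₂)) • x := by rw [hΛrel]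
  have hcol : (ε₁^2*ε₂*r₂*d₂) • (P₁ - ρ x • x) = (ε₁*ε₂^2*r₁*d₁) • (P₂ - ρ x • x) := by
    linear_combination (norm := module) (ε₁*ε₂*r₂*d₂) • hidν1 - (ε₁*ε₂*r₁*d₁) • hidν2
      + (ε₁*ε₂*r₁*r₂) • hν2' - (ε₁*ε₂) • hx4
  -- take inner products with n
  have hin := congrArg (fun y : E3 => (⟪y, n⟫:ℝ)) hcol
  simp only [real_inner_smul_left, inner_sub_left] at hin
  rw [hn1, hn2] at hin
  -- two cases
  rcases eq_or_ne (ε₁^2*ε₂*r₂*d₂) (ε₁*ε₂^2*r₁*d₁) with hAB | hAB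
  · exfalso
    rw [hAB] at hcol
    have h6 : P₁ - ρ x • x = P₂ - ρ x • x :=
      smul_right_injective E3 (by positivity) hcol
    exact hPne (by linear_combination (norm := module) h6)
  · have h7 : (ε₁^2*ε₂*r₂*d₂ - ε₁*ε₂^2*r₁*d₁) * (c - ρ x * ⟪x, n⟫) = 0 := by
      linear_combination hin
    rcases mul_eq_zero.mp h7 with h8 | h8
    · exact absurd (sub_eq_zero.mp h8) hAB
    · linarith [sub_eq_zero.mp h8]

/-- Any two vectors of `ℝ³` admit a common nonzero orthogonal vector. -/
lemma exists_orthogonal (a b : E3) : ∃ v : E3, v ≠ 0 ∧ (⟪a, v⟫:ℝ) = 0 ∧ (⟪b, v⟫:ℝ) = 0 := by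
  classical
  have hKne : (Submodule.span ℝ ({a, b} : Set E3))ᗮ ≠ ⊥ := by
    intro h0
    have h1 : Submodule.span ℝ ({a, b} : Set E3) = ⊤ :=
      Submodule.orthogonal_eq_bot_iff.mp h0
    have h2 : Module.finrank ℝ (Submodule.span ℝ ({a, b} : Set E3)) ≤ 2 := by
      have h3 := finrank_span_finset_le_card (R := ℝ) ({a, b} : Finset E3)
      have h4 : (({a, b} : Finset E3) : Set E3) = ({a, b} : Set E3) := by simp
      rw [h4] at h3
      calc Module.finrank ℝ (Submodule.span ℝ ({a, b} : Set E3))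
          = ({a, b} : Set E3).finrank ℝ := rfl
        _ ≤ ({a, b} : Finset E3).card := h3
        _ ≤ 2 := le_trans (Finset.card_insert_le _ _) (by simp)
    rw [h1, finrank_top] at h2
    have h5 : Module.finrank ℝ E3 = 3 := by simp
    omega
  obtain ⟨v, hvK, hv0⟩ := Submodule.exists_mem_ne_zero_of_ne_bot hKne
  rw [Submodule.mem_orthogonal] at hvK
  exact ⟨v, hv0, hvK a (Submodule.subset_span (by simp)),
    hvK b (Submodule.subset_span (by simp))⟩

lemma ell_affine (P : E3) {d : ℝ} (hd : d ≠ 0) (x : E3) :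
    d⁻¹ - (⟪x, bvec (P, d)⟫:ℝ) = (1 - ecc P d * rinner x (axisDir P)) / d :=
  ellAff_eq (q := (P,d)) hd x

/-- The set of reflector points lying on the target plane is null (case `O ∉ plane`). -/
lemma Qstar_null {Ω D : Set E3} {ρ : E3 → ℝ} (hσ : IsReflector Ω D ρ)
    (hcl : ∀ x ∈ closure Ω, ‖x‖ = 1) {n : E3} {c : ℝ} (hc : c ≠ 0)
    (hplane : ∀ P ∈ D, (⟪P, n⟫:ℝ) = c) :
    μH[2] {x ∈ closure Ω | ρ x * (⟪x, n⟫:ℝ) = c} = 0 := by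
  classical
  set S := {x ∈ closure Ω | ρ x * (⟪x, n⟫:ℝ) = c} with hSdef
  have hρ := hσ.1
  have hSnorm : ∀ x ∈ S, ‖x‖ = 1 := fun x hx => hcl x hx.1
  -- the main inequality for a support at x
  have hmain : ∀ x ∈ S, ∀ P ∈ D, ∀ d : ℝ, IsSupportingAt Ω ρ P d x →
      (⟪x, c⁻¹ • n + bvec (P, d)⟫:ℝ) = d⁻¹ ∧
      ∀ y ∈ S, d⁻¹ * (1 - ⟪x, y⟫) ≤ ⟪y - x, (c⁻¹ • n + bvec (P, d)) - d⁻¹ • x⟫ := by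
    intro x hxS P hPD d hsup
    have hxΩ := hxS.1
    have hd : 0 < d := hsup.2.1
    have hval : ∀ y, y ∈ S → c⁻¹ * (⟪y, n⟫:ℝ) = (ρ y)⁻¹ := by
      intro y hy
      have hρy : 0 < ρ y := hρ y hy.1
      have h3 : (⟪y, n⟫:ℝ) = c / ρ y := by
        rw [eq_div_iff (ne_of_gt hρy)]
        linarith [hy.2]
      rw [h3]
      field_simp
    have hux : (ρ x)⁻¹ = d⁻¹ - ⟪x, bvec (P, d)⟫ := by
      rw [ell_affine P (ne_of_gt hd) x]
      exact (ell_eq_u hρ hsup hxΩ).symm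
    have huy : ∀ y ∈ S, d⁻¹ - (⟪y, bvec (P, d)⟫:ℝ) ≤ (ρ y)⁻¹ := by
      intro y hy
      rw [ell_affine P (ne_of_gt hd) y]
      exact ell_le_u hρ hsup hy.1
    constructor
    · rw [inner_add_right, real_inner_smul_right, hval x hxS, hux]
      ring
    · intro y hyS
      have h6 : (⟪y - x, c⁻¹ • n + bvec (P, d)⟫:ℝ)
          = (c⁻¹ * ⟪y, n⟫ - c⁻¹ * ⟪x, n⟫) + (⟪y, bvec (P,d)⟫ - ⟪x, bvec (P,d)⟫) := by
        rw [inner_sub_left, inner_add_right, inner_add_right, real_inner_smul_right,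
          real_inner_smul_right]
        ring
      have h7 : (0:ℝ) ≤ ⟪y - x, c⁻¹ • n + bvec (P, d)⟫ := by
        rw [h6, hval x hxS, hval y hyS]
        have := huy y hyS
        rw [hux]
        linarith
      have h8 : (⟪y - x, (c⁻¹ • n + bvec (P, d)) - d⁻¹ • x⟫:ℝ)
          = ⟪y - x, c⁻¹ • n + bvec (P, d)⟫ - d⁻¹ * (⟪y, x⟫ - 1) := by
        have hxx : (⟪x, x⟫:ℝ) = 1 := by
          rw [real_inner_self_eq_norm_sq, hSnorm x hxS]; norm_num
        simp only [inner_sub_right, inner_sub_left, real_inner_smul_right, hxx]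
        ring
      rw [h8]
      have h9 : (⟪y, x⟫:ℝ) = ⟪x, y⟫ := real_inner_comm _ _
      rw [h9]
      linarith
  by_cases hdeg : ∃ x ∈ S, ∃ P ∈ D, ∃ d : ℝ, IsSupportingAt Ω ρ P d x ∧
      (c⁻¹ • n + bvec (P, d)) - d⁻¹ • x = 0
  · obtain ⟨x, hxS, P, hPD, d, hsup, hGt0⟩ := hdeg
    apply subsingleton_null
    intro y hy z hz
    have hkey : ∀ v, v ∈ S → v = x := by
      intro v hv
      have h10 := (hmain x hxS P hPD d hsup).2 v hv
      rw [hGt0] at h10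
      simp only [inner_zero_right] at h10
      have hd : 0 < d := hsup.2.1
      have h11 : (⟪x, v⟫:ℝ) ≤ 1 := by
        have := real_inner_le_norm x v
        rw [hSnorm x hxS, hSnorm v hv] at this
        linarith
      have h12 : (⟪x, v⟫:ℝ) = 1 := by
        by_contra h13
        have h14 : (0:ℝ) < d⁻¹ * (1 - ⟪x, v⟫) := by
          apply mul_pos (inv_pos.mpr hd)
          cases lt_or_eq_of_le h11 with
          | inl h => linarith
          | inr h => exact absurd h h13
        linarith
      exact (eq_of_inner_one (hSnorm x hxS) (hSnorm v hv) h12).symm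
    rw [hkey y hy, hkey z hz]
  · push_neg at hdeg
    apply porous_null S hSnorm
    intro x hxS
    obtain ⟨P, hPD, d, hsup⟩ := hσ.2 x hxS.1
    set Gt := (c⁻¹ • n + bvec (P, d)) - d⁻¹ • x with hGt
    have hGtne : Gt ≠ 0 := hdeg x hxS P hPD d hsup
    have hm := hmain x hxS P hPD d hsup
    have hd : 0 < d := hsup.2.1
    refine ⟨‖Gt‖⁻¹ • Gt, norm_smul_inv_norm hGtne, ?_, ?_⟩
    · have hxx : (⟪x, x⟫:ℝ) = 1 := by
        rw [real_inner_self_eq_norm_sq, hSnorm x hxS]; norm_num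
      rw [real_inner_smul_right, hGt, inner_sub_right, real_inner_smul_right, hxx, hm.1]
      ring
    · intro y hyS
      rw [real_inner_smul_right]
      have h15 := hm.2 y hyS
      have h16 : (⟪x, y⟫:ℝ) ≤ 1 := by
        have := real_inner_le_norm x y
        rw [hSnorm x hxS, hSnorm y hyS] at this
        linarith
      have h17 : (0:ℝ) ≤ d⁻¹ * (1 - ⟪x, y⟫) := by
        apply mul_nonneg (le_of_lt (inv_pos.mpr hd))
        linarith
      have h18 : (0:ℝ) ≤ ‖Gt‖⁻¹ := by positivity
      rw [← hGt] at h15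
      nlinarith

end ReflectorAux

open ReflectorAux
open scoped RealInnerProductSpace

/-- If `σ` is a reflector from `closure Ω` to a compact target `D` with
`O ∉ D`, `D` contained in a plane or countable, and `A, B ⊆ D` are disjoint, then
`τ_σ(A) ∩ τ_σ(B)` has surface measure zero. -/
theorem tracing_inter_null_of_disjoint
    (Ω : Set E3) (hΩ : Ω ⊆ sphere2) (hfr : μH[2] (sphFrontier Ω) = 0)
    (D : Set E3) (hD : IsCompact D) (hO : (0 : E3) ∉ D)
    (hDpc : InPlane D ∨ D.Countable)
    (ρ : E3 → ℝ) (hσ : IsReflector Ω D ρ)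
    (A B : Set E3) (hA : A ⊆ D) (hB : B ⊆ D) (hAB : Disjoint A B) :
    μH[2] (tracing Ω ρ A ∩ tracing Ω ρ B) = 0 := by
  classical
  have hρ := hσ.1
  have hclsph : closure Ω ⊆ sphere2 := closure_minimal hΩ isClosed_sphere
  have hnorm : ∀ x ∈ closure Ω, ‖x‖ = 1 := fun x hx =>
    mem_sphere_zero_iff_norm.mp (hclsph hx)
  set T := tracing Ω ρ A ∩ tracing Ω ρ B with hT
  have hTsubcl : T ⊆ closure Ω := fun x hx => hx.1.1
  by_cases hsub : (closure Ω).Subsingleton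
  · exact subsingleton_null (hsub.anti hTsubcl)
  rw [Set.not_subsingleton_iff] at hsub
  obtain ⟨y₁, hy₁, y₂, hy₂, hyne⟩ := hsub
  set d₀ := (‖y₁ - y₂‖^2/8) * min (ρ y₁) (ρ y₂) with hd₀def
  have hd₀ : 0 < d₀ := by
    have h1 : 0 < ‖y₁ - y₂‖ := by rw [norm_pos_iff, sub_ne_zero]; exact hyne
    have h2 := hρ y₁ hy₁
    have h3 := hρ y₂ hy₂
    have h4 : 0 < min (ρ y₁) (ρ y₂) := lt_min h2 h3
    positivity
  have hlow : ∀ q ∈ SuppFam Ω D ρ, d₀ ≤ q.2 := by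
    rintro q ⟨hqD, x₀, hx₀, hs⟩
    exact d_lower hρ hs hy₁ hy₂ (hnorm _ hy₁) (hnorm _ hy₂)
  by_cases hTne : T = ∅
  · rw [hTne]; exact measure_empty
  obtain ⟨xs, hxs⟩ := Set.nonempty_iff_ne_empty.mpr hTne
  have hFne : (SuppFam Ω D ρ).Nonempty := by
    obtain ⟨hxcl, P, hPA, d, hs⟩ := hxs.1
    exact ⟨(P, d), hA hPA, xs, hxcl, hs⟩
  have hlip := env_lipschitz hd₀ hlow hFne
  obtain ⟨N, hN0, hNprop⟩ := tangent_null (env Ω D ρ) _ hlip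
  -- shared pointwise analysis
  have hpoint : ∀ x ∈ T, x ∉ N → ∃ P₁ ∈ A, ∃ P₂ ∈ B, ∃ d₁ d₂ : ℝ,
      IsSupportingAt Ω ρ P₁ d₁ x ∧ IsSupportingAt Ω ρ P₂ d₂ x ∧ P₁ ≠ P₂ ∧
      d₁⁻¹ - d₂⁻¹ ≠ 0 ∧
      bvec (P₁, d₁) - bvec (P₂, d₂) = (d₁⁻¹ - d₂⁻¹) • x := by
    intro x hx hxN
    obtain ⟨⟨hxcl, P₁, hP₁A, d₁, hs₁⟩, ⟨_, P₂, hP₂B, d₂, hs₂⟩⟩ := hx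
    have hxn := hnorm x hxcl
    have hPne : P₁ ≠ P₂ := by
      intro he
      exact (Set.disjoint_left.mp hAB hP₁A) (he ▸ hP₂B)
    have hq₁ : (P₁, d₁) ∈ SuppFam Ω D ρ := ⟨hA hP₁A, x, hxcl, hs₁⟩
    have hq₂ : (P₂, d₂) ∈ SuppFam Ω D ρ := ⟨hB hP₂B, x, hxcl, hs₂⟩
    have hd₁ : 0 < d₁ := hs₁.2.1
    have hd₂ : 0 < d₂ := hs₂.2.1
    have hglob₁ : ∀ y, d₁⁻¹ - ⟪y, bvec (P₁, d₁)⟫ ≤ env Ω D ρ y := fun y =>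
      le_env hd₀ hlow hq₁ y
    have hglob₂ : ∀ y, d₂⁻¹ - ⟪y, bvec (P₂, d₂)⟫ ≤ env Ω D ρ y := fun y =>
      le_env hd₀ hlow hq₂ y
    have henvle : env Ω D ρ x ≤ (ρ x)⁻¹ := by
      apply env_le hFne
      rintro q ⟨hqD, x₀, hx₀, hs⟩
      have h5 : ellAff q x = (1 - ecc q.1 q.2 * rinner x (axisDir q.1)) / q.2 :=
        ellAff_eq (ne_of_gt hs.2.1) x
      rw [h5]
      exact ell_le_u hρ hs hxcl
    have htouch₁ : d₁⁻¹ - (⟪x, bvec (P₁, d₁)⟫:ℝ) = env Ω D ρ x := by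
      apply le_antisymm (hglob₁ x)
      calc env Ω D ρ x ≤ (ρ x)⁻¹ := henvle
        _ = d₁⁻¹ - ⟪x, bvec (P₁, d₁)⟫ := by
            rw [ell_affine P₁ (ne_of_gt hd₁) x]
            exact (ell_eq_u hρ hs₁ hxcl).symm
    have htouch₂ : d₂⁻¹ - (⟪x, bvec (P₂, d₂)⟫:ℝ) = env Ω D ρ x := by
      apply le_antisymm (hglob₂ x)
      calc env Ω D ρ x ≤ (ρ x)⁻¹ := henvle
        _ = d₂⁻¹ - ⟪x, bvec (P₂, d₂)⟫ := by
            rw [ell_affine P₂ (ne_of_gt hd₂) x]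
            exact (ell_eq_u hρ hs₂ hxcl).symm
    have hδrad := hNprop x hxn hxN d₁⁻¹ d₂⁻¹ (bvec (P₁, d₁)) (bvec (P₂, d₂))
      hglob₁ hglob₂ htouch₁ htouch₂
    have hκval : (⟪x, bvec (P₁, d₁) - bvec (P₂, d₂)⟫:ℝ) = d₁⁻¹ - d₂⁻¹ := by
      rw [inner_sub_right]
      have := htouch₁.trans htouch₂.symm
      linarith
    rw [hκval] at hδrad
    refine ⟨P₁, hP₁A, P₂, hP₂B, d₁, d₂, hs₁, hs₂, hPne, ?_, hδrad⟩
    intro hκ0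
    rw [hκ0, zero_smul, sub_eq_zero] at hδrad
    have hinv : d₁⁻¹ = d₂⁻¹ := by linarith [sub_eq_zero.mp (by linarith [hκ0] : d₁⁻¹ - d₂⁻¹ = (0:ℝ))]
    exact hPne (param_inj hs₁.1 hs₂.1 hd₁ hd₂ hδrad hinv)
  -- now split into the our cases
  rcases hDpc with ⟨n, hn0, c, hplane'⟩ | hDc
  · -- D in a plane
    have hplane : ∀ P ∈ D, (⟪P, n⟫:ℝ) = c := fun P hP => hplane' P hP
    rcases eq_or_ne c 0 with rfl | hc
    · -- plane through the origin
      have hTsub : T ⊆ N ∪ {x : E3 | ‖x‖ = 1 ∧ (⟪x, n⟫:ℝ) = 0} := by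
        intro x hx
        by_cases hxN : x ∈ N
        · exact Or.inl hxN
        obtain ⟨P₁, hP₁A, P₂, hP₂B, d₁, d₂, hs₁, hs₂, hPne, hκ, hrad⟩ := hpoint x hx hxN
        refine Or.inr ⟨hnorm x hx.1.1, ?_⟩
        have hbn : ∀ (P : E3) (d : ℝ), P ∈ D → P ≠ 0 → (⟪bvec (P, d), n⟫:ℝ) = 0 := by
          intro P d hPD hPne0
          have h6 : (⟪axisDir P, n⟫:ℝ) = 0 := by
            rw [axisDir, real_inner_smul_left, hplane P hPD, mul_zero]
          rw [bvec, real_inner_smul_left]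
          rw [show axisDir (P, d).1 = axisDir P from rfl, h6, mul_zero]
        have h7 := congrArg (fun y : E3 => (⟪y, n⟫:ℝ)) hrad
        simp only [inner_sub_left, real_inner_smul_left] at h7
        rw [hbn P₁ d₁ (hA hP₁A) hs₁.1, hbn P₂ d₂ (hB hP₂B) hs₂.1] at h7
        have h8 : (d₁⁻¹ - d₂⁻¹) * ⟪x, n⟫ = 0 := by linarith
        rcases mul_eq_zero.mp h8 with h9 | h9
        · exact absurd h9 hκ
        · exact h9
      refine measure_mono_null hTsub (measure_union_null hN0 ?_)
      exact plane_section_null hn0 0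
    · -- plane not through the origin
      have hTsub : T ⊆ N ∪ {x ∈ closure Ω | ρ x * (⟪x, n⟫:ℝ) = c} := by
        intro x hx
        by_cases hxN : x ∈ N
        · exact Or.inl hxN
        obtain ⟨P₁, hP₁A, P₂, hP₂B, d₁, d₂, hs₁, hs₂, hPne, hκ, hrad⟩ := hpoint x hx hxN
        refine Or.inr ⟨hx.1.1, ?_⟩
        exact colinear_plane hρ hx.1.1 (hnorm x hx.1.1) hs₁ hs₂ hPne hrad
          (hplane P₁ (hA hP₁A)) (hplane P₂ (hB hP₂B))
      refine measure_mono_null hTsub (measure_union_null hN0 ?_)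
      exact Qstar_null hσ hnorm hc hplane
  · -- D countable
    choose wv hwv0 hwv1 hwv2 using
      fun z : E3 × E3 => exists_orthogonal (axisDir z.1) (axisDir z.2)
    have hTsub : T ⊆ N ∪ ⋃ z ∈ D ×ˢ D, {x : E3 | ‖x‖ = 1 ∧ (⟪x, wv z⟫:ℝ) = 0} := by
      intro x hx
      by_cases hxN : x ∈ N
      · exact Or.inl hxN
      obtain ⟨P₁, hP₁A, P₂, hP₂B, d₁, d₂, hs₁, hs₂, hPne, hκ, hrad⟩ := hpoint x hx hxN
      refine Or.inr ?_
      refine Set.mem_biUnion (Set.mk_mem_prod (hA hP₁A) (hB hP₂B)) ?_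
      refine ⟨hnorm x hx.1.1, ?_⟩
      have hbw : ∀ (P : E3) (d : ℝ) (hne : (⟪axisDir P, wv (P₁, P₂)⟫:ℝ) = 0),
          (⟪bvec (P, d), wv (P₁, P₂)⟫:ℝ) = 0 := by
        intro P d hne
        rw [bvec, real_inner_smul_left]
        rw [show axisDir (P, d).1 = axisDir P from rfl, hne, mul_zero]
      have h7 := congrArg (fun y : E3 => (⟪y, wv (P₁, P₂)⟫:ℝ)) hrad
      simp only [inner_sub_left, real_inner_smul_left] at h7
      rw [hbw P₁ d₁ (hwv1 (P₁, P₂)), hbw P₂ d₂ (hwv2 (P₁, P₂))] at h7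
      have h8 : (d₁⁻¹ - d₂⁻¹) * ⟪x, wv (P₁, P₂)⟫ = 0 := by linarith
      rcases mul_eq_zero.mp h8 with h9 | h9
      · exact absurd h9 hκ
      · exact h9
    refine measure_mono_null hTsub (measure_union_null hN0 ?_)
    rw [measure_biUnion_null_iff (hDc.prod hDc)]
    intro z hz
    exact plane_section_null (hwv0 z) 0
end
end

section
/- If σ = {ρ(x)x : x ∈ Ω̄} is a reflector in the class A(δ), then ρ(x) ≥ δM/(1 + c_δ) for all x ∈ Ω̄, ρ is bounded above on Ω̄, and ρ is globally Lipschitz on Ω̄ with Lipschitz constant at most (M/2)·(1 + c_δ)/(1 − c_δ), i.e., |ρ(x) − ρ(y)| ≤ (M/2)·((1 + c_δ)/(1 − c_δ))·|x − y| for all x, y ∈ Ω̄. -/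
noncomputable section

open MeasureTheory Metric Set Filter Topology
attribute [local instance] Classical.propDecidable

/- ### Auxiliary lemmas -/

private lemma one_le_sqrt_aux (t : ℝ) : 1 ≤ Real.sqrt (1 + t ^ 2) := by
  have hs : Real.sqrt (1 + t ^ 2) ^ 2 = 1 + t ^ 2 := Real.sq_sqrt (by positivity)
  nlinarith [Real.sqrt_nonneg (1 + t ^ 2), sq_nonneg t]

private lemma sqrt_sub_aux (t : ℝ) (ht : 0 ≤ t) :
    Real.sqrt (1 + t ^ 2) - t = 1 / (Real.sqrt (1 + t ^ 2) + t) := by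
  have hs : Real.sqrt (1 + t ^ 2) ^ 2 = 1 + t ^ 2 := Real.sq_sqrt (by positivity)
  have h1 := one_le_sqrt_aux t
  rw [eq_div_iff (by positivity)]
  linear_combination hs

private lemma f_pos_aux (t : ℝ) (ht : 0 ≤ t) : 0 < Real.sqrt (1 + t ^ 2) - t := by
  rw [sqrt_sub_aux t ht]
  have h1 := one_le_sqrt_aux t
  apply div_pos one_pos; linarith

private lemma f_lt_one_aux (t : ℝ) (ht : 0 < t) : Real.sqrt (1 + t ^ 2) - t < 1 := by
  rw [sqrt_sub_aux t ht.le]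
  have h1 := one_le_sqrt_aux t
  rw [div_lt_one (by linarith)]; linarith

private lemma f_anti_aux (s t : ℝ) (hs : 0 ≤ s) (hst : s ≤ t) :
    Real.sqrt (1 + t ^ 2) - t ≤ Real.sqrt (1 + s ^ 2) - s := by
  rw [sqrt_sub_aux s hs, sqrt_sub_aux t (hs.trans hst)]
  have h1 := one_le_sqrt_aux s
  have h2 : Real.sqrt (1 + s ^ 2) ≤ Real.sqrt (1 + t ^ 2) :=
    Real.sqrt_le_sqrt (by nlinarith)
  apply one_div_le_one_div_of_le (by linarith) (by linarith)

private lemma f_id_aux (t : ℝ) (ht : 0 ≤ t) :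
    (Real.sqrt (1 + t ^ 2) - t) ^ 2 + 2 * (Real.sqrt (1 + t ^ 2) - t) * t = 1 := by
  linear_combination Real.sq_sqrt (show (0:ℝ) ≤ 1 + t ^ 2 by positivity)

private lemma ecc_eq_aux (P : E3) (d : ℝ) :
    ecc P d = Real.sqrt (1 + (d / ‖P‖) ^ 2) - d / ‖P‖ := by
  rw [ecc, div_pow]

private lemma norm_axisDir_aux (P : E3) (hP : P ≠ 0) : ‖axisDir P‖ = 1 := by
  rw [axisDir, norm_smul, norm_inv, norm_norm,
    inv_mul_cancel₀ (norm_ne_zero_iff.mpr hP)]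

/-- The core arithmetic estimate for the Lipschitz bound. -/
private lemma lip_key_aux (d ε Pn M c n s qx qy : ℝ)
    (hε0 : 0 < ε) (hεc : ε ≤ c) (hc1 : c < 1)
    (hPn : 0 < Pn) (hPM : Pn ≤ M) (hd : 0 < d)
    (hid : Pn * ε ^ 2 + 2 * ε * d = Pn)
    (hqx : 1 - ε ≤ qx) (hqy : 1 - ε ≤ qy)
    (hq : qy - qx = ε * s) (hs : s ≤ n) (hn : 0 ≤ n) :
    d / qx - d / qy ≤ M / 2 * ((1 + c) / (1 - c)) * n := by
  have hε1 : ε < 1 := lt_of_le_of_lt hεc hc1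
  have hqx0 : 0 < qx := by linarith
  have hqy0 : 0 < qy := by linarith
  have hnum : d * qy - qx * d = d * ε * s := by linear_combination d * hq
  have h1 : d / qx - d / qy = d * ε * s / (qx * qy) := by
    rw [div_sub_div _ _ hqx0.ne' hqy0.ne', hnum]
  have h2 : d * ε * s / (qx * qy) ≤ d * ε * n / (qx * qy) := by
    apply div_le_div_of_nonneg_right _ (by positivity)
    exact mul_le_mul_of_nonneg_left hs (by positivity)
  have hee : 0 < (1 - ε) * (1 - ε) := by nlinarith
  have h3 : d * ε * n / (qx * qy) ≤ d * ε * n / ((1 - ε) * (1 - ε)) := by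
    apply div_le_div_of_nonneg_left (by positivity) hee
    exact mul_le_mul hqx hqy (by linarith) (by linarith)
  have hdε : 2 * (d * ε) = Pn * (1 - ε) * (1 + ε) := by linear_combination hid
  have h4 : d * ε * n / ((1 - ε) * (1 - ε)) = Pn * (1 + ε) * n / (2 * (1 - ε)) := by
    rw [div_eq_div_iff hee.ne' (ne_of_gt (by linarith : (0:ℝ) < 2 * (1 - ε)))]
    linear_combination n * (1 - ε) * hdε
  have e1 : Pn * (1 + ε) * (1 - c) ≤ M * (1 + c) * (1 - ε) := by
    have hA : (1 + ε) * (1 - c) ≤ (1 + c) * (1 - ε) := by nlinarith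
    have hA0 : (0:ℝ) ≤ (1 + ε) * (1 - c) := by nlinarith
    have hMnn : (0:ℝ) ≤ M := by linarith
    nlinarith [mul_le_mul_of_nonneg_right hPM hA0, mul_le_mul_of_nonneg_left hA hMnn]
  have h5 : Pn * (1 + ε) * n / (2 * (1 - ε)) ≤ M * (1 + c) * n / (2 * (1 - c)) := by
    rw [div_le_div_iff₀ (by linarith) (by linarith)]
    nlinarith [mul_le_mul_of_nonneg_right e1 hn]
  have h6 : M * (1 + c) * n / (2 * (1 - c)) = M / 2 * ((1 + c) / (1 - c)) * n := by
    field_simp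
  linarith [h1.le, h2, h3, h4.le, h5, h6.le, h1.ge, h4.ge, h6.ge]

/-- A reflector in the class `A(δ)` is bounded below by `δM/(1 + c_δ)`,
bounded above, and globally Lipschitz with constant `(M/2)(1 + c_δ)/(1 − c_δ)`. -/
theorem classA_lower_bound_bounded_and_lipschitz
    (Ω : Set E3) (hΩ : Ω ⊆ sphere2) (hfr : μH[2] (sphFrontier Ω) = 0)
    (D : Set E3) (hD : IsCompact D) (hO : (0 : E3) ∉ D)
    (M : ℝ) (hM : IsGreatest ((fun p : E3 => ‖p‖) '' D) M)
    (δ : ℝ) (hδ : 0 < δ)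
    (ρ : E3 → ℝ) (hσ : InClassA Ω D ρ δ M) :
    (∀ x ∈ closure Ω, δ * M / (1 + cconst δ) ≤ ρ x) ∧
    (∃ B : ℝ, ∀ x ∈ closure Ω, ρ x ≤ B) ∧
    (∀ x ∈ closure Ω, ∀ y ∈ closure Ω,
      |ρ x - ρ y| ≤ M / 2 * ((1 + cconst δ) / (1 - cconst δ)) * ‖x - y‖) := by
  obtain ⟨P0, hP0D, hP0⟩ := hM.1
  have hP0ne : P0 ≠ 0 := by rintro rfl; exact hO hP0D
  have hM0 : 0 < M := hP0 ▸ norm_pos_iff.mpr hP0ne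
  have hc0 : 0 < cconst δ := f_pos_aux δ hδ.le
  have hc1 : cconst δ < 1 := f_lt_one_aux δ hδ
  have hsub : closure Ω ⊆ sphere2 :=
    closure_minimal hΩ Metric.isClosed_sphere
  have hnorm : ∀ x ∈ closure Ω, ‖x‖ = 1 := fun x hx =>
    mem_sphere_zero_iff_norm.mp (hsub hx)
  -- common facts for a supporting ellipsoid with δM ≤ d
  have hcom : ∀ P ∈ D, ∀ d : ℝ, P ≠ 0 → 0 < d → δ * M ≤ d →
      0 < ‖P‖ ∧ ‖P‖ ≤ M ∧ 0 < ecc P d ∧ ecc P d ≤ cconst δ ∧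
        ‖P‖ * ecc P d ^ 2 + 2 * ecc P d * d = ‖P‖ := by
    intro P hPD d hP hd0 hδd
    have hPn : 0 < ‖P‖ := norm_pos_iff.mpr hP
    have hPM : ‖P‖ ≤ M := hM.2 (mem_image_of_mem _ hPD)
    have ht0 : 0 < d / ‖P‖ := div_pos hd0 hPn
    have htδ : δ ≤ d / ‖P‖ := by
      rw [le_div_iff₀ hPn]
      nlinarith [mul_le_mul_of_nonneg_left hPM hδ.le]
    refine ⟨hPn, hPM, ?_, ?_, ?_⟩
    · rw [ecc_eq_aux]; exact f_pos_aux _ ht0.le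
    · rw [ecc_eq_aux]; exact f_anti_aux δ (d / ‖P‖) hδ.le htδ
    · have h := f_id_aux (d / ‖P‖) ht0.le
      rw [← ecc_eq_aux] at h
      field_simp [hPn.ne'] at h
      linear_combination h
  -- bounds on the inner product factor
  have hqb : ∀ P : E3, P ≠ 0 → ∀ x ∈ closure Ω, |rinner x (axisDir P)| ≤ 1 := by
    intro P hP x hx
    have h := abs_real_inner_le_norm x (axisDir P)
    rw [hnorm x hx, norm_axisDir_aux P hP, one_mul] at h
    exact h
  constructor
  · -- lower bound
    intro x hx
    obtain ⟨P, hPD, d, hδd, hP, hd0, hsupp, heq⟩ := hσ.2 x hx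
    obtain ⟨hPn, hPM, hε0, hεc, hid⟩ := hcom P hPD d hP hd0 hδd
    have hε1 : ecc P d < 1 := lt_of_le_of_lt hεc hc1
    obtain ⟨hr1, hr2⟩ := abs_le.mp (hqb P hP x hx)
    have hq0 : 0 < 1 - ecc P d * rinner x (axisDir P) := by nlinarith
    have hqc : 1 - ecc P d * rinner x (axisDir P) ≤ 1 + cconst δ := by nlinarith
    rw [heq]
    unfold polarRadius
    rw [div_le_div_iff₀ (by linarith) hq0]
    nlinarith [mul_le_mul_of_nonneg_right hδd hq0.le,
      mul_le_mul_of_nonneg_left hqc hd0.le]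
  constructor
  · -- upper bound
    by_cases hne : (closure Ω).Nonempty
    · obtain ⟨x₁, hx₁⟩ := hne
      obtain ⟨P, hPD, d, hδd, hP, hd0, hsupp, heq⟩ := hσ.2 x₁ hx₁
      obtain ⟨hPn, hPM, hε0, hεc, hid⟩ := hcom P hPD d hP hd0 hδd
      have hε1 : ecc P d < 1 := lt_of_le_of_lt hεc hc1
      refine ⟨d / (1 - ecc P d), fun x hx => ?_⟩
      refine (hsupp x hx).trans ?_
      obtain ⟨hr1, hr2⟩ := abs_le.mp (hqb P hP x hx)
      have hq1 : 1 - ecc P d ≤ 1 - ecc P d * rinner x (axisDir P) := by nlinarith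
      unfold polarRadius
      exact div_le_div_of_nonneg_left hd0.le (by linarith) hq1
    · exact ⟨0, fun x hx => absurd ⟨x, hx⟩ hne⟩
  · -- Lipschitz
    have claim : ∀ x ∈ closure Ω, ∀ y ∈ closure Ω,
        ρ x - ρ y ≤ M / 2 * ((1 + cconst δ) / (1 - cconst δ)) * ‖x - y‖ := by
      intro x hx y hy
      obtain ⟨P, hPD, d, hδd, hP, hd0, hsupp, heq⟩ := hσ.2 y hy
      obtain ⟨hPn, hPM, hε0, hεc, hid⟩ := hcom P hPD d hP hd0 hδd
      obtain ⟨hrx1, hrx2⟩ := abs_le.mp (hqb P hP x hx)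
      obtain ⟨hry1, hry2⟩ := abs_le.mp (hqb P hP y hy)
      have hs : rinner x (axisDir P) - rinner y (axisDir P) ≤ ‖x - y‖ := by
        have h1 : rinner x (axisDir P) - rinner y (axisDir P)
            = rinner (x - y) (axisDir P) := by
          simp [rinner, inner_sub_left]
        have h2 := real_inner_le_norm (x - y) (axisDir P)
        rw [norm_axisDir_aux P hP, mul_one] at h2
        rw [h1]; exact h2
      have hkey := lip_key_aux d (ecc P d) ‖P‖ M (cconst δ) ‖x - y‖
        (rinner x (axisDir P) - rinner y (axisDir P))
        (1 - ecc P d * rinner x (axisDir P)) (1 - ecc P d * rinner y (axisDir P))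
        hε0 hεc hc1 hPn hPM hd0 hid (by nlinarith) (by nlinarith) (by ring)
        hs (norm_nonneg _)
      have hρx : ρ x ≤ d / (1 - ecc P d * rinner x (axisDir P)) := hsupp x hx
      have hρy : ρ y = d / (1 - ecc P d * rinner y (axisDir P)) := heq
      linarith
    intro x hx y hy
    rw [abs_sub_le_iff]
    refine ⟨claim x hx y hy, ?_⟩
    have h := claim y hy x hx
    rwa [norm_sub_rev] at h
end
end

section
/- If σ = {ρ(x)x : x ∈ Ω̄} is a reflector in the class A(δ), then the Harnack-type inequality sup_{x ∈ Ω̄} ρ(x) ≤ ((1 + c_δ)/(1 − c_δ)) · inf_{x ∈ Ω̄} ρ(x) holds. -/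
noncomputable section

open MeasureTheory Metric Set Filter Topology
attribute [local instance] Classical.propDecidable

lemma sqrtFun_antitone {a b : ℝ} (ha : 0 ≤ a) (hab : a ≤ b) :
    Real.sqrt (1 + b ^ 2) - b ≤ Real.sqrt (1 + a ^ 2) - a := by
  have hs : Real.sqrt (1 + a ^ 2) ^ 2 = 1 + a ^ 2 :=
    Real.sq_sqrt (by positivity)
  have hr : Real.sqrt (1 + b ^ 2) ^ 2 = 1 + b ^ 2 :=
    Real.sq_sqrt (by positivity)
  have hsn : 0 ≤ Real.sqrt (1 + a ^ 2) := Real.sqrt_nonneg _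
  have hrn : 0 ≤ Real.sqrt (1 + b ^ 2) := Real.sqrt_nonneg _
  have h1 : 1 ≤ Real.sqrt (1 + a ^ 2) := by nlinarith
  have hrs : Real.sqrt (1 + a ^ 2) ≤ Real.sqrt (1 + b ^ 2) := by
    apply Real.sqrt_le_sqrt; nlinarith
  have e1 : (Real.sqrt (1 + b ^ 2) - b) * (Real.sqrt (1 + b ^ 2) + b) = 1 := by
    nlinarith
  have e2 : (Real.sqrt (1 + a ^ 2) - a) * (Real.sqrt (1 + a ^ 2) + a) = 1 := by
    nlinarith
  have hsa : 0 < Real.sqrt (1 + a ^ 2) - a := by nlinarith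
  have hsp : 0 < Real.sqrt (1 + a ^ 2) + a := by nlinarith
  have hge : Real.sqrt (1 + a ^ 2) + a ≤ Real.sqrt (1 + b ^ 2) + b :=
    add_le_add hrs hab
  nlinarith [mul_pos hsa hsp]

lemma sqrtFun_pos {t : ℝ} (ht : 0 ≤ t) : 0 < Real.sqrt (1 + t ^ 2) - t := by
  have : t < Real.sqrt (1 + t ^ 2) := by
    nlinarith [Real.sq_sqrt (show (0:ℝ) ≤ 1 + t ^ 2 by positivity),
      Real.sqrt_nonneg (1 + t ^ 2)]
  linarith

lemma sqrtFun_lt_one {t : ℝ} (ht : 0 < t) : Real.sqrt (1 + t ^ 2) - t < 1 := by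
  have : Real.sqrt (1 + t ^ 2) < 1 + t := by
    nlinarith [Real.sq_sqrt (show (0:ℝ) ≤ 1 + t ^ 2 by positivity),
      Real.sqrt_nonneg (1 + t ^ 2)]
  linarith

/-- Harnack-type inequality for reflectors in the class `A(δ)`:
`sup ρ ≤ ((1 + c_δ)/(1 − c_δ)) inf ρ`, stated pointwise. -/
theorem classA_harnack
    (Ω : Set E3) (hΩ : Ω ⊆ sphere2) (hfr : μH[2] (sphFrontier Ω) = 0)
    (D : Set E3) (hD : IsCompact D) (hO : (0 : E3) ∉ D)
    (M : ℝ) (hM : IsGreatest ((fun p : E3 => ‖p‖) '' D) M)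
    (δ : ℝ) (hδ : 0 < δ)
    (ρ : E3 → ℝ) (hσ : InClassA Ω D ρ δ M) :
    ∀ x ∈ closure Ω, ∀ y ∈ closure Ω,
      ρ x ≤ (1 + cconst δ) / (1 - cconst δ) * ρ y := by
  have hc1 : cconst δ < 1 := sqrtFun_lt_one hδ
  have hc0 : 0 < cconst δ := sqrtFun_pos hδ.le
  intro x hx y hy
  obtain ⟨P, hP, d, hdM, hPne, hdpos, hsup, heq⟩ := hσ.2 y hy
  have hPnorm : 0 < ‖P‖ := norm_pos_iff.mpr hPne
  have hPM : ‖P‖ ≤ M := hM.2 ⟨P, hP, rfl⟩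
  set t : ℝ := d / ‖P‖ with ht
  have htδ : δ ≤ t := by
    rw [ht, le_div_iff₀ hPnorm]
    calc δ * ‖P‖ ≤ δ * M := by nlinarith
    _ ≤ d := hdM
  have htpos : 0 < t := lt_of_lt_of_le hδ htδ
  have hecc : ecc P d = Real.sqrt (1 + t ^ 2) - t := by
    rw [ecc, ht, div_pow]
  have hεc : ecc P d ≤ cconst δ := by
    rw [hecc, cconst]; exact sqrtFun_antitone hδ.le htδ
  have hε0 : 0 < ecc P d := by rw [hecc]; exact sqrtFun_pos htpos.le
  have hε1 : ecc P d < 1 := by rw [hecc]; exact sqrtFun_lt_one htpos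
  -- inner product bounds
  have hm : ‖axisDir P‖ = 1 := by
    rw [axisDir, norm_smul, norm_inv, norm_norm, inv_mul_cancel₀ hPnorm.ne']
  have hsph : closure Ω ⊆ sphere2 := by
    have : IsClosed sphere2 := Metric.isClosed_sphere
    exact closure_minimal hΩ this
  have hbound : ∀ z ∈ closure Ω, |rinner z (axisDir P)| ≤ 1 := by
    intro z hz
    have hz1 : ‖z‖ = 1 := by
      have := hsph hz
      simpa [sphere2, mem_sphere_iff_norm] using this
    calc |rinner z (axisDir P)| ≤ ‖z‖ * ‖axisDir P‖ := by unfold rinner; exact abs_real_inner_le_norm z _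
    _ = 1 := by rw [hz1, hm, one_mul]
  -- denominators
  have hdenom : ∀ z ∈ closure Ω,
      1 - ecc P d ≤ 1 - ecc P d * rinner z (axisDir P) ∧
      1 - ecc P d * rinner z (axisDir P) ≤ 1 + ecc P d := by
    intro z hz
    have h := abs_le.mp (hbound z hz)
    constructor <;> nlinarith [h.1, h.2]
  have h1ε : (0:ℝ) < 1 - ecc P d := by linarith
  have h1c : (0:ℝ) < 1 - cconst δ := by linarith
  -- upper bound on ρ x
  have hx1 : ρ x ≤ d / (1 - cconst δ) := by
    have h1 := hsup x hx
    have h2 := (hdenom x hx).1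
    have h3 : polarRadius P d x ≤ d / (1 - ecc P d) := by
      rw [polarRadius]
      apply div_le_div_of_nonneg_left hdpos.le h1ε h2
    have h4 : d / (1 - ecc P d) ≤ d / (1 - cconst δ) := by
      apply div_le_div_of_nonneg_left hdpos.le h1c (by linarith)
    linarith
  -- lower bound on ρ y
  have hy1 : d / (1 + cconst δ) ≤ ρ y := by
    rw [heq, polarRadius]
    apply div_le_div_of_nonneg_left hdpos.le
    · have := (hdenom y hy).1; linarith
    · have := (hdenom y hy).2; linarith
  have key : (1 + cconst δ) / (1 - cconst δ) * (d / (1 + cconst δ))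
      = d / (1 - cconst δ) := by
    field_simp
  calc ρ x ≤ d / (1 - cconst δ) := hx1
  _ = (1 + cconst δ) / (1 - cconst δ) * (d / (1 + cconst δ)) := key.symm
  _ ≤ (1 + cconst δ) / (1 - cconst δ) * ρ y := by
      apply mul_le_mul_of_nonneg_left hy1
      positivity
end
end

section
/- Assume D is compact with O ∉ D and D is contained in a plane or D is countable. Let σ ∈ A(δ), and let S = {x ∈ Ω̄ : there exist P₁ ≠ P₂ in D with x ∈ τ_σ(P₁) ∩ τ_σ(P₂)}. Suppose x_n, x₀ ∈ Ω̄ \ S with x_n → x₀, and let E_{d_n}(P_n) and E_{d₀}(P₀) be supporting ellipsoids to σ at ρ(x_n)x_n and ρ(x₀)x₀ respectively, with corresponding outer unit normals ν(x_n) = (x_n − ε_n m_n)/|x_n − ε_n m_n| and ν(x₀) = (x₀ − ε₀ m₀)/|x₀ − ε₀ m₀|. Then d_n → d₀, P_n → P₀, and ν(x_n) → ν(x₀) as n → ∞. -/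
noncomputable section

open MeasureTheory Metric Set Filter Topology
attribute [local instance] Classical.propDecidable

namespace SEC

lemma norm_axisDir {P : E3} (hP : P ≠ 0) : ‖axisDir P‖ = 1 := by
  have h : ‖P‖ ≠ 0 := norm_ne_zero_iff.mpr hP
  rw [axisDir, norm_smul, norm_inv, norm_norm, inv_mul_cancel₀ h]

lemma abs_rinner_le {x y : E3} (hx : ‖x‖ = 1) (hy : ‖y‖ = 1) : |rinner x y| ≤ 1 := by
  have h := abs_real_inner_le_norm x y
  rw [hx, hy, one_mul] at h
  exact h

lemma ecc_pos {P : E3} {d : ℝ} (hP : P ≠ 0) (hd : 0 < d) : 0 < ecc P d := by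
  have hr : (0:ℝ) < ‖P‖ := norm_pos_iff.mpr hP
  have h1 : (0:ℝ) ≤ 1 + d^2/‖P‖^2 := by positivity
  have hs := Real.sq_sqrt h1
  have hs0 := Real.sqrt_nonneg (1 + d^2/‖P‖^2)
  rw [ecc]
  set s := Real.sqrt (1 + d^2/‖P‖^2) with hsdef
  have hdr : 0 < d / ‖P‖ := div_pos hd hr
  have h2 : (d/‖P‖)^2 < s^2 := by
    rw [hs, div_pow]; nlinarith
  nlinarith

lemma ecc_lt_one {P : E3} {d : ℝ} (hP : P ≠ 0) (hd : 0 < d) : ecc P d < 1 := by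
  have hr : (0:ℝ) < ‖P‖ := norm_pos_iff.mpr hP
  have h1 : (0:ℝ) ≤ 1 + d^2/‖P‖^2 := by positivity
  have hs := Real.sq_sqrt h1
  have hs0 := Real.sqrt_nonneg (1 + d^2/‖P‖^2)
  rw [ecc]
  set s := Real.sqrt (1 + d^2/‖P‖^2) with hsdef
  have hdr : 0 < d / ‖P‖ := div_pos hd hr
  have h2 : s^2 < (1 + d/‖P‖)^2 := by
    rw [hs, ← div_pow]; nlinarith
  nlinarith

lemma den_pos {P : E3} {d : ℝ} {x : E3} (hP : P ≠ 0) (hd : 0 < d) (hx : ‖x‖ = 1) :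
    0 < 1 - ecc P d * rinner x (axisDir P) := by
  have h1 := ecc_pos hP hd
  have h2 := ecc_lt_one hP hd
  obtain ⟨hu1, hu2⟩ := abs_le.mp (abs_rinner_le hx (norm_axisDir hP))
  nlinarith

lemma den_lt_two {P : E3} {d : ℝ} {x : E3} (hP : P ≠ 0) (hd : 0 < d) (hx : ‖x‖ = 1) :
    1 - ecc P d * rinner x (axisDir P) < 2 := by
  have h1 := ecc_pos hP hd
  have h2 := ecc_lt_one hP hd
  obtain ⟨hu1, hu2⟩ := abs_le.mp (abs_rinner_le hx (norm_axisDir hP))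
  nlinarith

lemma polar_ge_half {P : E3} {d : ℝ} {x : E3} (hP : P ≠ 0) (hd : 0 < d) (hx : ‖x‖ = 1) :
    d / 2 ≤ polarRadius P d x := by
  have h1 := den_pos hP hd hx
  have h2 := den_lt_two hP hd hx
  rw [polarRadius, le_div_iff₀ h1]
  nlinarith

lemma polar_pos {P : E3} {d : ℝ} {x : E3} (hP : P ≠ 0) (hd : 0 < d) (hx : ‖x‖ = 1) :
    0 < polarRadius P d x := lt_of_lt_of_le (by positivity) (polar_ge_half hP hd hx)

lemma polar_le_add {P : E3} {d : ℝ} {x : E3} (hP : P ≠ 0) (hd : 0 < d) (hx : ‖x‖ = 1) :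
    polarRadius P d x ≤ ‖P‖ + d := by
  have hden := den_pos hP hd hx
  have hr : (0:ℝ) < ‖P‖ := norm_pos_iff.mpr hP
  have hεpos := ecc_pos hP hd
  obtain ⟨hu1, hu2⟩ := abs_le.mp (abs_rinner_le hx (norm_axisDir hP))
  rw [polarRadius, div_le_iff₀ hden]
  -- key : ecc P d * (‖P‖ + d) ≤ ‖P‖
  have key : ecc P d * (‖P‖ + d) ≤ ‖P‖ := by
    have h1 : (0:ℝ) ≤ 1 + d^2/‖P‖^2 := by positivity
    have hs := Real.sq_sqrt h1
    have hs0 := Real.sqrt_nonneg (1 + d^2/‖P‖^2)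
    rw [ecc]
    set s := Real.sqrt (1 + d^2/‖P‖^2) with hsdef
    set r := ‖P‖
    have hsr : (s*r)^2 = r^2 + d^2 := by
      rw [mul_pow, hs]
      field_simp
    -- want : (s - d/r) * (r + d) ≤ r  ⟺  s*r*(r+d) ≤ r^2 + r*d + d^2
    have hkey2 : s*r*(r+d) ≤ r^2 + r*d + d^2 := by
      have hBA : (r^2+r*d+d^2 - s*r*(r+d)) * (r^2+r*d+d^2 + s*r*(r+d)) = r^2*d^2 := by
        linear_combination (-(r+d)^2) * hsr
      have hBpos : 0 < r^2+r*d+d^2 + s*r*(r+d) := by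
        have : 0 ≤ s*r*(r+d) := by positivity
        nlinarith
      nlinarith [sq_nonneg (r*d)]
    have hexp : (s - d/r) * (r + d) = (s*r*(r+d) - d*(r+d))/r := by
      field_simp
    rw [hexp, div_le_iff₀ hr]
    nlinarith [hkey2]
  have hmul : ecc P d * rinner x (axisDir P) ≤ ecc P d := by nlinarith
  nlinarith

lemma key_ineq {r d₁ d₂ u : ℝ} (hr : 0 < r) (h1 : 0 < d₁) (h12 : d₁ < d₂) (hu : |u| ≤ 1) :
    d₁ * (1 - (Real.sqrt (1+d₂^2/r^2) - d₂/r) * u) <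
      d₂ * (1 - (Real.sqrt (1+d₁^2/r^2) - d₁/r) * u) := by
  obtain ⟨hu1, hu2⟩ := abs_le.mp hu
  have ha1 : (0:ℝ) ≤ 1 + d₁^2/r^2 := by positivity
  have ha2 : (0:ℝ) ≤ 1 + d₂^2/r^2 := by positivity
  set s₁ := Real.sqrt (1+d₁^2/r^2) with hs₁def
  set s₂ := Real.sqrt (1+d₂^2/r^2) with hs₂def
  have hs₁ : s₁^2 = 1 + d₁^2/r^2 := Real.sq_sqrt ha1
  have hs₂ : s₂^2 = 1 + d₂^2/r^2 := Real.sq_sqrt ha2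
  have hs₁0 : 0 ≤ s₁ := Real.sqrt_nonneg _
  have hs₂0 : 0 ≤ s₂ := Real.sqrt_nonneg _
  have hd1r : 0 < d₁^2/r^2 := div_pos (pow_pos h1 2) (pow_pos hr 2)
  have hd2r : 0 < d₂^2/r^2 := div_pos (pow_pos (h1.trans h12) 2) (pow_pos hr 2)
  have hs₁1 : 1 < s₁ := by nlinarith
  have hs₂1 : 1 < s₂ := by nlinarith
  have hT : d₂ + d₁ < d₂*s₁ + d₁*s₂ := by nlinarith
  have hAT : (d₂*s₁ - d₁*s₂) * (d₂*s₁ + d₁*s₂) = (d₂-d₁)*(d₂+d₁) := by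
    linear_combination d₂^2 * hs₁ - d₁^2 * hs₂
  have hTpos : 0 < d₂*s₁ + d₁*s₂ := by nlinarith
  have hApos : 0 < d₂*s₁ - d₁*s₂ := by
    by_contra hcon
    push_neg at hcon
    nlinarith [mul_nonneg (neg_nonneg.2 hcon) hTpos.le,
      mul_pos (sub_pos.2 h12) (show (0:ℝ) < d₂ + d₁ by linarith)]
  have hAlt : d₂*s₁ - d₁*s₂ < d₂ - d₁ := by
    by_contra hcon
    push_neg at hcon
    have h7 : (d₂-d₁)*(d₂+d₁) < (d₂*s₁-d₁*s₂)*(d₂*s₁+d₁*s₂) :=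
      mul_lt_mul' hcon hT (by linarith) hApos
    linarith [hAT, h7]
  have h5 : u * (d₂*s₁ - d₁*s₂) ≤ d₂*s₁ - d₁*s₂ := by
    nlinarith [mul_nonneg (sub_nonneg.2 hu2) hApos.le]
  have expand : d₂ * (1 - (s₁ - d₁/r) * u) - d₁ * (1 - (s₂ - d₂/r) * u)
      = (d₂ - d₁) - u * (d₂*s₁ - d₁*s₂) := by
    field_simp; ring
  linarith [hAlt, h5, expand]

lemma polar_lt_polar {P : E3} (hP : P ≠ 0) {d₁ d₂ : ℝ} (h1 : 0 < d₁) (h12 : d₁ < d₂)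
    {x : E3} (hx : ‖x‖ = 1) : polarRadius P d₁ x < polarRadius P d₂ x := by
  have h2 : 0 < d₂ := h1.trans h12
  have hden₁ := den_pos hP h1 hx
  have hden₂ := den_pos hP h2 hx
  have hr : (0:ℝ) < ‖P‖ := norm_pos_iff.mpr hP
  have hu := abs_rinner_le hx (norm_axisDir hP)
  rw [polarRadius, polarRadius, div_lt_div_iff₀ hden₁ hden₂]
  simp only [ecc]
  exact key_ineq hr h1 h12 hu

lemma polar_inj {P : E3} (hP : P ≠ 0) {d₁ d₂ : ℝ} (h1 : 0 < d₁) (h2 : 0 < d₂)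
    {x : E3} (hx : ‖x‖ = 1) (h : polarRadius P d₁ x = polarRadius P d₂ x) : d₁ = d₂ := by
  rcases lt_trichotomy d₁ d₂ with hlt | heq | hgt
  · exact absurd h (ne_of_lt (polar_lt_polar hP h1 hlt hx))
  · exact heq
  · exact absurd h.symm (ne_of_lt (polar_lt_polar hP h2 hgt hx))

end SEC
namespace SEC

lemma tendsto_norm_seq {Pn : ℕ → E3} {P' : E3} (h : Tendsto Pn atTop (𝓝 P')) :
    Tendsto (fun n => ‖Pn n‖) atTop (𝓝 ‖P'‖) :=
  (continuous_norm.tendsto _).comp h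

lemma tendsto_ecc {Pn : ℕ → E3} {dn : ℕ → ℝ} {P' : E3} {d' : ℝ} (hP' : P' ≠ 0)
    (hP : Tendsto Pn atTop (𝓝 P')) (hd : Tendsto dn atTop (𝓝 d')) :
    Tendsto (fun n => ecc (Pn n) (dn n)) atTop (𝓝 (ecc P' d')) := by
  have hr : ‖P'‖ ≠ 0 := norm_ne_zero_iff.mpr hP'
  have hn := tendsto_norm_seq hP
  have h1 : Tendsto (fun n => 1 + (dn n)^2/‖Pn n‖^2) atTop (𝓝 (1 + d'^2/‖P'‖^2)) :=
    tendsto_const_nhds.add ((hd.pow 2).div (hn.pow 2) (pow_ne_zero 2 hr))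
  simp only [ecc]
  exact ((Real.continuous_sqrt.tendsto _).comp h1).sub (hd.div hn hr)

lemma tendsto_axisDir {Pn : ℕ → E3} {P' : E3} (hP' : P' ≠ 0)
    (hP : Tendsto Pn atTop (𝓝 P')) :
    Tendsto (fun n => axisDir (Pn n)) atTop (𝓝 (axisDir P')) := by
  have hr : ‖P'‖ ≠ 0 := norm_ne_zero_iff.mpr hP'
  simp only [axisDir]
  exact ((tendsto_norm_seq hP).inv₀ hr).smul hP

lemma tendsto_rinner {xn yn : ℕ → E3} {x' y' : E3}
    (hx : Tendsto xn atTop (𝓝 x')) (hy : Tendsto yn atTop (𝓝 y')) :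
    Tendsto (fun n => rinner (xn n) (yn n)) atTop (𝓝 (rinner x' y')) := by
  simp only [rinner]
  exact hx.inner hy

lemma tendsto_polar {Pn : ℕ → E3} {dn : ℕ → ℝ} {xn : ℕ → E3} {P' : E3} {d' : ℝ} {x' : E3}
    (hP' : P' ≠ 0) (hden : 1 - ecc P' d' * rinner x' (axisDir P') ≠ 0)
    (hP : Tendsto Pn atTop (𝓝 P')) (hd : Tendsto dn atTop (𝓝 d'))
    (hx : Tendsto xn atTop (𝓝 x')) :
    Tendsto (fun n => polarRadius (Pn n) (dn n) (xn n)) atTop (𝓝 (polarRadius P' d' x')) := by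
  simp only [polarRadius]
  exact hd.div (tendsto_const_nhds.sub ((tendsto_ecc hP' hP hd).mul
    (tendsto_rinner hx (tendsto_axisDir hP' hP)))) hden

lemma tendsto_normalVec {Pn : ℕ → E3} {dn : ℕ → ℝ} {xn : ℕ → E3} {P' : E3} {d' : ℝ} {x' : E3}
    (hP' : P' ≠ 0) (hv : x' - ecc P' d' • axisDir P' ≠ 0)
    (hP : Tendsto Pn atTop (𝓝 P')) (hd : Tendsto dn atTop (𝓝 d'))
    (hx : Tendsto xn atTop (𝓝 x')) :
    Tendsto (fun n => normalVec (Pn n) (dn n) (xn n)) atTop (𝓝 (normalVec P' d' x')) := by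
  have hvt : Tendsto (fun n => xn n - ecc (Pn n) (dn n) • axisDir (Pn n)) atTop
      (𝓝 (x' - ecc P' d' • axisDir P')) :=
    hx.sub ((tendsto_ecc hP' hP hd).smul (tendsto_axisDir hP' hP))
  simp only [normalVec]
  exact (hvt.norm.inv₀ (norm_ne_zero_iff.2 hv)).smul hvt

lemma uniq {Ω D : Set E3} {ρ : E3 → ℝ} {x₀ : E3} (hx₀n : ‖x₀‖ = 1)
    (hx₀ : x₀ ∈ closure Ω) (hS : x₀ ∉ ambigSet Ω D ρ)
    {P₁ P₂ : E3} {d₁ d₂ : ℝ} (h1D : P₁ ∈ D) (h1 : IsSupportingAt Ω ρ P₁ d₁ x₀)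
    (h2D : P₂ ∈ D) (h2 : IsSupportingAt Ω ρ P₂ d₂ x₀) : P₁ = P₂ ∧ d₁ = d₂ := by
  have hPP : P₁ = P₂ := by
    by_contra hne
    exact hS ⟨hx₀, P₁, h1D, P₂, h2D, hne,
      ⟨hx₀, P₁, Set.mem_singleton _, d₁, h1⟩, ⟨hx₀, P₂, Set.mem_singleton _, d₂, h2⟩⟩
  refine ⟨hPP, ?_⟩
  subst hPP
  have heq : polarRadius P₁ d₁ x₀ = polarRadius P₁ d₂ x₀ := by
    rw [← h1.2.2.2, ← h2.2.2.2]
  exact polar_inj h1.1 h1.2.1 h2.2.1 hx₀n heq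

end SEC
/-- Continuity of supporting ellipsoids outside the ambiguous set: if
`x_n → x₀` in `closure Ω \ S` and `E_{d_n}(P_n)`, `E_{d₀}(P₀)` are supporting
ellipsoids at `ρ(x_n)x_n`, `ρ(x₀)x₀`, then `d_n → d₀`, `P_n → P₀` and the
corresponding normals converge. -/
theorem supporting_ellipsoids_converge
    (Ω : Set E3) (hΩ : Ω ⊆ sphere2) (hfr : μH[2] (sphFrontier Ω) = 0)
    (D : Set E3) (hD : IsCompact D) (hO : (0 : E3) ∉ D)
    (hDpc : InPlane D ∨ D.Countable)
    (M : ℝ) (hM : IsGreatest ((fun p : E3 => ‖p‖) '' D) M)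
    (δ : ℝ) (hδ : 0 < δ)
    (ρ : E3 → ℝ) (hσ : InClassA Ω D ρ δ M)
    (x : ℕ → E3) (x₀ : E3)
    (hx : ∀ n, x n ∈ closure Ω) (hx₀ : x₀ ∈ closure Ω)
    (hxS : ∀ n, x n ∉ ambigSet Ω D ρ) (hx₀S : x₀ ∉ ambigSet Ω D ρ)
    (hconv : Filter.Tendsto x Filter.atTop (nhds x₀))
    (P : ℕ → E3) (d : ℕ → ℝ) (P₀ : E3) (d₀ : ℝ)
    (hPn : ∀ n, P n ∈ D ∧ IsSupportingAt Ω ρ (P n) (d n) (x n))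
    (hP₀ : P₀ ∈ D ∧ IsSupportingAt Ω ρ P₀ d₀ x₀) :
    Filter.Tendsto d Filter.atTop (nhds d₀) ∧
    Filter.Tendsto P Filter.atTop (nhds P₀) ∧
    Filter.Tendsto (fun n => normalVec (P n) (d n) (x n)) Filter.atTop
      (nhds (normalVec P₀ d₀ x₀)) := by
  have hclΩ : closure Ω ⊆ sphere2 := closure_minimal hΩ Metric.isClosed_sphere
  have hnorm : ∀ y ∈ closure Ω, ‖y‖ = 1 := fun y hy =>
    mem_sphere_zero_iff_norm.1 (hclΩ hy)
  have hx₀n : ‖x₀‖ = 1 := hnorm _ hx₀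
  have hxnn : ∀ n, ‖x n‖ = 1 := fun n => hnorm _ (hx n)
  obtain ⟨hP₀D, hP₀s⟩ := hP₀
  have hP₀ne : P₀ ≠ 0 := hP₀s.1
  have hd₀pos : 0 < d₀ := hP₀s.2.1
  have hP₀le : ∀ y ∈ closure Ω, ρ y ≤ polarRadius P₀ d₀ y := hP₀s.2.2.1
  have hP₀eq : ρ x₀ = polarRadius P₀ d₀ x₀ := hP₀s.2.2.2
  -- M > 0
  obtain ⟨Q, hQD, hQM⟩ := hM.1
  have hMpos : 0 < M := by
    rw [← hQM]
    exact norm_pos_iff.2 (fun h => hO (h ▸ hQD))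
  have hδM : 0 < δ * M := mul_pos hδ hMpos
  -- uniform lower bound on ρ
  have hρlow : ∀ y ∈ closure Ω, δ * M / 2 ≤ ρ y := by
    intro y hy
    obtain ⟨P', hP'D, d', hd'δ, hs⟩ := hσ.2 y hy
    have h1 := SEC.polar_ge_half hs.1 hs.2.1 (hnorm y hy)
    rw [← hs.2.2.2] at h1
    linarith
  -- uniform upper bound on ρ
  have hρup : ∀ y ∈ closure Ω, ρ y ≤ ‖P₀‖ + d₀ := fun y hy =>
    (hP₀le y hy).trans (SEC.polar_le_add hP₀ne hd₀pos (hnorm y hy))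
  set B : ℝ := 2 * (‖P₀‖ + d₀) with hB
  have hdB : ∀ n, d n ≤ B := by
    intro n
    have h1 := SEC.polar_ge_half (hPn n).2.1 (hPn n).2.2.1 (hxnn n)
    rw [← (hPn n).2.2.2.2] at h1
    have h2 := hρup (x n) (hx n)
    rw [hB]; linarith
  -- the key convergence of the pair (P n, d n)
  have hkey : Tendsto (fun n => (P n, d n)) atTop (𝓝 (P₀, d₀)) := by
    apply tendsto_of_subseq_tendsto
    intro ns hns
    obtain ⟨⟨P', d'⟩, hmem, φ, hφ, hconv'⟩ :=
      (hD.prod isCompact_Icc).tendsto_subseq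
        (x := fun k => (P (ns k), d (ns k)))
        (fun k => Set.mk_mem_prod ((hPn _).1) ⟨((hPn _).2.2.1).le, hdB _⟩)
    have hP'D : P' ∈ D := hmem.1
    have hd'mem : d' ∈ Set.Icc (0:ℝ) B := hmem.2
    set g : ℕ → ℕ := ns ∘ φ with hgdef
    have hg : Tendsto g atTop atTop := hns.comp hφ.tendsto_atTop
    have hPg : Tendsto (fun k => P (g k)) atTop (𝓝 P') :=
      (continuous_fst.tendsto _).comp hconv'
    have hdg : Tendsto (fun k => d (g k)) atTop (𝓝 d') :=
      (continuous_snd.tendsto _).comp hconv'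
    have hxg : Tendsto (fun k => x (g k)) atTop (𝓝 x₀) := hconv.comp hg
    have hP'ne : P' ≠ 0 := fun h => hO (h ▸ hP'D)
    -- the limit d' is positive
    have hd'pos : 0 < d' := by
      rcases (hd'mem.1 : (0:ℝ) ≤ d').lt_or_eq with h | h
      · exact h
      · exfalso
        rw [← h] at hdg
        -- eccentricities tend to 1
        have hecc : Tendsto (fun k => ecc (P (g k)) (d (g k))) atTop (𝓝 1) := by
          have h1 := SEC.tendsto_ecc hP'ne hPg hdg
          have h2 : ecc P' 0 = 1 := by
            simp [ecc]
          rwa [h2] at h1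
        -- denominators tend to 0
        have hden0 : Tendsto (fun k =>
            1 - ecc (P (g k)) (d (g k)) * rinner (x (g k)) (axisDir (P (g k))))
            atTop (𝓝 0) := by
          have hub : Tendsto (fun k => d (g k) / (δ * M / 2)) atTop (𝓝 0) := by
            have := hdg.div_const (δ * M / 2)
            rwa [zero_div] at this
          refine tendsto_of_tendsto_of_tendsto_of_le_of_le tendsto_const_nhds hub
            (fun k => (SEC.den_pos (hPn (g k)).2.1 (hPn (g k)).2.2.1 (hxnn (g k))).le)
            (fun k => ?_)
          have hdenpos := SEC.den_pos (hPn (g k)).2.1 (hPn (g k)).2.2.1 (hxnn (g k))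
          have hρk := hρlow (x (g k)) (hx (g k))
          rw [(hPn (g k)).2.2.2.2, polarRadius, le_div_iff₀ hdenpos] at hρk
          rw [le_div_iff₀ (by linarith : (0:ℝ) < δ * M / 2)]
          linarith
        -- x·m tends to 1
        have hεu : Tendsto (fun k =>
            ecc (P (g k)) (d (g k)) * rinner (x (g k)) (axisDir (P (g k)))) atTop (𝓝 1) := by
          have h1 := tendsto_const_nhds.sub hden0 (f := fun _ : ℕ => (1:ℝ))
          rw [sub_zero] at h1
          refine h1.congr (fun k => by ring)
        have huten : Tendsto (fun k => rinner (x (g k)) (axisDir (P (g k)))) atTop (𝓝 1) := by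
          have h1 := hεu.div hecc one_ne_zero
          rw [div_one] at h1
          refine h1.congr (fun k => ?_)
          exact mul_div_cancel_left₀ _
            (ne_of_gt (SEC.ecc_pos (hPn (g k)).2.1 (hPn (g k)).2.2.1))
        have huten2 : Tendsto (fun k => rinner (x (g k)) (axisDir (P (g k)))) atTop
            (𝓝 (rinner x₀ (axisDir P'))) :=
          SEC.tendsto_rinner hxg (SEC.tendsto_axisDir hP'ne hPg)
        have hu1 : rinner x₀ (axisDir P') = 1 := tendsto_nhds_unique huten2 huten
        have hm1 : ‖axisDir P'‖ = 1 := SEC.norm_axisDir hP'ne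
        have hx₀eq : x₀ = axisDir P' := by
          have hns2 : ‖x₀ - axisDir P'‖^2 =
              ‖x₀‖^2 - 2 * rinner x₀ (axisDir P') + ‖axisDir P'‖^2 :=
            norm_sub_sq_real x₀ (axisDir P')
          rw [hx₀n, hm1, hu1] at hns2
          norm_num at hns2
          exact sub_eq_zero.1 hns2
        -- choose a point z ≠ x₀ in closure Ω
        obtain ⟨k₀, hk₀⟩ := (hdg.eventually_lt_const hd₀pos).exists
        set z := x (g k₀) with hzdef
        have hz : z ∈ closure Ω := hx _
        have hzn : ‖z‖ = 1 := hxnn _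
        have hzne : z ≠ x₀ := by
          intro he
          have hs := (hPn (g k₀)).2
          rw [← hzdef, he] at hs
          have := (SEC.uniq hx₀n hx₀ hx₀S hP₀D hP₀s (hPn (g k₀)).1 hs).2
          rw [← this] at hk₀
          exact lt_irrefl _ hk₀
        have hzu : rinner z x₀ < 1 := by
          have hns2 : ‖z - x₀‖^2 = ‖z‖^2 - 2 * rinner z x₀ + ‖x₀‖^2 :=
            norm_sub_sq_real z x₀
          rw [hzn, hx₀n] at hns2
          have hpos : 0 < ‖z - x₀‖^2 :=
            pow_pos (norm_pos_iff.2 (sub_ne_zero.2 hzne)) 2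
          nlinarith
        -- the polar radius at z tends to 0, contradicting ρ z ≥ δM/2
        have hzden : Tendsto (fun k =>
            1 - ecc (P (g k)) (d (g k)) * rinner z (axisDir (P (g k)))) atTop
            (𝓝 (1 - rinner z x₀)) := by
          have h1 := tendsto_const_nhds.sub (f := fun _ : ℕ => (1:ℝ))
            (hecc.mul (SEC.tendsto_rinner (tendsto_const_nhds (x := z))
              (SEC.tendsto_axisDir hP'ne hPg)))
          rw [one_mul, ← hx₀eq] at h1
          exact h1
        have hpz : Tendsto (fun k => polarRadius (P (g k)) (d (g k)) z) atTop (𝓝 0) := by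
          simp only [polarRadius]
          have h1 := hdg.div hzden (by linarith : (1:ℝ) - rinner z x₀ ≠ 0)
          rwa [zero_div] at h1
        have hfin : ρ z ≤ 0 :=
          ge_of_tendsto hpz (Filter.Eventually.of_forall fun k =>
            (hPn (g k)).2.2.2.1 z hz)
        linarith [hρlow z hz]
    -- the limit pair is a supporting ellipsoid at x₀
    have hsupp' : IsSupportingAt Ω ρ P' d' x₀ := by
      refine ⟨hP'ne, hd'pos, ?_, ?_⟩
      · intro y hy
        have hden : 1 - ecc P' d' * rinner y (axisDir P') ≠ 0 :=
          ne_of_gt (SEC.den_pos hP'ne hd'pos (hnorm y hy))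
        have ht : Tendsto (fun k => polarRadius (P (g k)) (d (g k)) y) atTop
            (𝓝 (polarRadius P' d' y)) :=
          SEC.tendsto_polar hP'ne hden hPg hdg tendsto_const_nhds
        exact ge_of_tendsto ht (Filter.Eventually.of_forall fun k =>
          (hPn (g k)).2.2.2.1 y hy)
      · have hden₀ : 1 - ecc P' d' * rinner x₀ (axisDir P') ≠ 0 :=
          ne_of_gt (SEC.den_pos hP'ne hd'pos hx₀n)
        apply le_antisymm
        · have ht : Tendsto (fun k => polarRadius (P (g k)) (d (g k)) x₀) atTop
              (𝓝 (polarRadius P' d' x₀)) :=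
            SEC.tendsto_polar hP'ne hden₀ hPg hdg tendsto_const_nhds
          exact ge_of_tendsto ht (Filter.Eventually.of_forall fun k =>
            (hPn (g k)).2.2.2.1 x₀ hx₀)
        · have ht : Tendsto (fun k => polarRadius (P (g k)) (d (g k)) (x (g k))) atTop
              (𝓝 (polarRadius P' d' x₀)) :=
            SEC.tendsto_polar hP'ne hden₀ hPg hdg hxg
          have hub : Tendsto (fun k => polarRadius P₀ d₀ (x (g k))) atTop
              (𝓝 (polarRadius P₀ d₀ x₀)) :=
            SEC.tendsto_polar hP₀ne (ne_of_gt (SEC.den_pos hP₀ne hd₀pos hx₀n))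
              tendsto_const_nhds tendsto_const_nhds hxg
          have hle := le_of_tendsto_of_tendsto' ht hub (fun k => by
            rw [← (hPn (g k)).2.2.2.2]
            exact hP₀le _ (hx _))
          rwa [← hP₀eq] at hle
    -- uniqueness forces (P', d') = (P₀, d₀)
    obtain ⟨hPP, hdd⟩ := SEC.uniq hx₀n hx₀ hx₀S hP'D hsupp' hP₀D hP₀s
    refine ⟨φ, ?_⟩
    rw [← hPP, ← hdd]
    exact hconv'
  -- extract the three conclusions
  have hdP : Tendsto P atTop (𝓝 P₀) := (continuous_fst.tendsto _).comp hkey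
  have hdd : Tendsto d atTop (𝓝 d₀) := (continuous_snd.tendsto _).comp hkey
  refine ⟨hdd, hdP, ?_⟩
  have hv : x₀ - ecc P₀ d₀ • axisDir P₀ ≠ 0 := by
    intro h
    have he := sub_eq_zero.1 h
    have h1 : ‖ecc P₀ d₀ • axisDir P₀‖ = ecc P₀ d₀ := by
      rw [norm_smul, SEC.norm_axisDir hP₀ne, mul_one,
        Real.norm_eq_abs, abs_of_pos (SEC.ecc_pos hP₀ne hd₀pos)]
    rw [he, h1] at hx₀n
    exact absurd hx₀n (ne_of_lt (SEC.ecc_lt_one hP₀ne hd₀pos))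
  exact SEC.tendsto_normalVec hP₀ne hv hdP hdd hconv
end
end
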